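/- arXiv:2006.14581 — 8 statements merged into one kernel-verified Lean document; each statement's English description precedes it below -/
import Mathlib

section
/- Korneichuk–Stechkin lemma, upper estimate for Banach-space valued functions: Let a < a' ≤ b' < b be real numbers, let ψ₁: [a,a'] → ℝ and ψ₂: [b',b] → ℝ be bounded measurable functions that are positive almost everywhere and satisfy ∫_a^{a'} ψ₁(t) dt = ∫_{b'}^{b} ψ₂(t) dt, and let ρ: [a,a'] → [b',b] be a function satisfying ∫_a^{s} ψ₁(t) dt = ∫_{ρ(s)}^{b} ψ₂(t) dt for every s ∈ [a,a'] (such ρ exists and is unique since ψ₂ > 0 a.e.). Then for every modulus of continuity ω, every real Banach space E, and every f ∈ H^ω([a,b],E), one has ‖∫_a^{a'} ψ₁(t) f(t) dt − ∫_{b'}^{b} ψ₂(t) f(t) dt‖ ≤ ∫_a^{a'} ψ₁(s) ω(ρ(s) − s) ds. -/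
open MeasureTheory Set
open scoped ENNReal NNReal

lemma KS_setIntegral_pos {g : ℝ → ℝ} {α β x y : ℝ} (hxy : x < y)
    (hsub : Set.Ioc x y ⊆ Set.Icc α β)
    (hint : MeasureTheory.IntegrableOn g (Set.Icc α β))
    (hpos : ∀ᵐ t ∂(volume.restrict (Set.Icc α β)), 0 < g t) :
    0 < ∫ t in Set.Ioc x y, g t := by
  have hint' : IntegrableOn g (Ioc x y) := hint.mono_set hsub
  have hpos' : ∀ᵐ t ∂(volume.restrict (Ioc x y)), 0 < g t :=
    ae_restrict_of_ae_restrict_of_subset hsub hpos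
  rw [setIntegral_pos_iff_support_of_nonneg_ae (hpos'.mono fun t ht => ht.le) hint']
  have hae : ∀ᵐ t ∂(volume : Measure ℝ), t ∈ Ioc x y → 0 < g t :=
    (ae_restrict_iff' measurableSet_Ioc).1 hpos'
  have hnull : volume (Ioc x y \ Function.support g) = 0 := by
    refine measure_mono_null (fun t ht => ?_) hae
    simp only [mem_diff, Function.mem_support, not_not] at ht
    intro h
    exact absurd (h ht.1) (by simp [ht.2])
  have h1 : volume (Ioc x y) ≤ volume (Function.support g ∩ Ioc x y) := by
    calc volume (Ioc x y)
        ≤ volume ((Function.support g ∩ Ioc x y) ∪ (Ioc x y \ Function.support g)) := by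
          refine measure_mono fun t ht => ?_
          by_cases h : t ∈ Function.support g
          · exact Or.inl ⟨h, ht⟩
          · exact Or.inr ⟨ht, h⟩
      _ ≤ volume (Function.support g ∩ Ioc x y) + volume (Ioc x y \ Function.support g) :=
          measure_union_le _ _
      _ = volume (Function.support g ∩ Ioc x y) := by rw [hnull, add_zero]
  have h2 : (0:ℝ≥0∞) < volume (Ioc x y) := by
    rw [Real.volume_Ioc]
    simp [hxy, sub_pos.2 hxy]
  exact lt_of_lt_of_le h2 h1

lemma KS_withDensity_apply {g : ℝ → ℝ} {α β : ℝ}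
    (hint : MeasureTheory.IntegrableOn g (Set.Icc α β))
    (hnn : 0 ≤ᵐ[volume.restrict (Set.Icc α β)] g)
    {A : Set ℝ} (hA : MeasurableSet A) (hsub : A ⊆ Set.Icc α β) :
    ((volume.restrict (Set.Icc α β)).withDensity (fun t => ENNReal.ofReal (g t))) A
      = ENNReal.ofReal (∫ t in A, g t) := by
  rw [withDensity_apply _ hA, Measure.restrict_restrict hA,
    Set.inter_eq_self_of_subset_left hsub,
    ← ofReal_integral_eq_lintegral_ofReal (hint.mono_set hsub)
      (ae_restrict_of_ae_restrict_of_subset hsub hnn)]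

lemma KS_measure_eq_of_inter {ν : Measure ℝ} {K A B : Set ℝ} (hK : ν Kᶜ = 0)
    (hAB : A ∩ K = B ∩ K) : ν A = ν B := by
  rw [← measure_inter_conull hK, hAB, measure_inter_conull hK]

lemma KS_isFinite {g : ℝ → ℝ} {α β C : ℝ} (hC : ∀ t ∈ Set.Icc α β, |g t| ≤ C) :
    IsFiniteMeasure ((volume.restrict (Set.Icc α β)).withDensity
      (fun t => ENNReal.ofReal (g t))) := by
  constructor
  rw [withDensity_apply _ MeasurableSet.univ, Measure.restrict_univ]
  calc ∫⁻ t, ENNReal.ofReal (g t) ∂(volume.restrict (Set.Icc α β))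
      ≤ ∫⁻ _, ENNReal.ofReal C ∂(volume.restrict (Set.Icc α β)) :=
        lintegral_mono_ae ((ae_restrict_mem measurableSet_Icc).mono fun t ht =>
          ENNReal.ofReal_le_ofReal ((le_abs_self _).trans (hC t ht)))
    _ = ENNReal.ofReal C * volume (Set.Icc α β) := by
        rw [lintegral_const, Measure.restrict_apply_univ]
    _ < ⊤ := ENNReal.mul_lt_top ENNReal.ofReal_lt_top measure_Icc_lt_top

/-- A modulus of continuity: `ω 0 = 0`, continuous, non-decreasing and subadditive on `[0, ∞)`. -/
def IsModulus (ω : ℝ → ℝ) : Prop :=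
  ω 0 = 0 ∧ ContinuousOn ω (Set.Ici 0) ∧ MonotoneOn ω (Set.Ici 0) ∧
    ∀ s t : ℝ, 0 ≤ s → 0 ≤ t → ω (s + t) ≤ ω s + ω t

/-- The class `H^ω([a,b], E)`. -/
def HHolder {E : Type*} [NormedAddCommGroup E] (ω : ℝ → ℝ) (a b : ℝ) (f : ℝ → E) : Prop :=
  ∀ s ∈ Set.Icc a b, ∀ t ∈ Set.Icc a b, ‖f t - f s‖ ≤ ω |t - s|

/-- Korneichuk–Stechkin lemma, upper estimate for Banach-space valued functions. -/
theorem korneichuk_stechkin_upper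
    {E : Type*} [NormedAddCommGroup E] [NormedSpace ℝ E] [CompleteSpace E]
    (a a' b' b : ℝ) (haa' : a < a') (ha'b' : a' ≤ b') (hb'b : b' < b)
    (ψ₁ ψ₂ : ℝ → ℝ) (hm₁ : Measurable ψ₁) (hm₂ : Measurable ψ₂)
    (hbd₁ : ∃ C, ∀ t ∈ Set.Icc a a', |ψ₁ t| ≤ C)
    (hbd₂ : ∃ C, ∀ t ∈ Set.Icc b' b, |ψ₂ t| ≤ C)
    (hpos₁ : ∀ᵐ t ∂(volume.restrict (Set.Icc a a')), 0 < ψ₁ t)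
    (hpos₂ : ∀ᵐ t ∂(volume.restrict (Set.Icc b' b)), 0 < ψ₂ t)
    (hint : ∫ t in a..a', ψ₁ t = ∫ t in b'..b, ψ₂ t)
    (ρ : ℝ → ℝ) (hρmap : Set.MapsTo ρ (Set.Icc a a') (Set.Icc b' b))
    (hρ : ∀ s ∈ Set.Icc a a', ∫ t in a..s, ψ₁ t = ∫ t in ρ s..b, ψ₂ t)
    (ω : ℝ → ℝ) (hω : IsModulus ω)
    (f : ℝ → E) (hf : HHolder ω a b f) :
    ‖(∫ t in a..a', ψ₁ t • f t) - ∫ t in b'..b, ψ₂ t • f t‖ ≤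
      ∫ s in a..a', ψ₁ s * ω (ρ s - s) := by
  obtain ⟨hω0, hωc, hωm, -⟩ := hω
  obtain ⟨C₁, hC₁⟩ := hbd₁
  obtain ⟨C₂, hC₂⟩ := hbd₂
  have hab' : a ≤ b' := haa'.le.trans ha'b'
  have ha'b : a' ≤ b := ha'b'.trans hb'b.le
  have hab : a < b := haa'.trans_le ha'b
  have hIcc1 : Icc a a' ⊆ Icc a b := Icc_subset_Icc le_rfl ha'b
  have hIcc2 : Icc b' b ⊆ Icc a b := Icc_subset_Icc hab' le_rfl
  -- integrability of the weights
  have hi₁ : IntegrableOn ψ₁ (Icc a a') := by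
    refine Measure.integrableOn_of_bounded (M := C₁) (by simp) hm₁.aestronglyMeasurable ?_
    exact (ae_restrict_mem measurableSet_Icc).mono fun t ht => by
      simpa [Real.norm_eq_abs] using hC₁ t ht
  have hi₂ : IntegrableOn ψ₂ (Icc b' b) := by
    refine Measure.integrableOn_of_bounded (M := C₂) (by simp) hm₂.aestronglyMeasurable ?_
    exact (ae_restrict_mem measurableSet_Icc).mono fun t ht => by
      simpa [Real.norm_eq_abs] using hC₂ t ht
  have hnn₁ : 0 ≤ᵐ[volume.restrict (Icc a a')] ψ₁ := hpos₁.mono fun t ht => ht.le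
  have hnn₂ : 0 ≤ᵐ[volume.restrict (Icc b' b)] ψ₂ := hpos₂.mono fun t ht => ht.le
  -- f is continuous on [a, b]
  have hfc : ContinuousOn f (Icc a b) := by
    intro s hs
    rw [ContinuousWithinAt, tendsto_iff_dist_tendsto_zero]
    have htd : Filter.Tendsto (fun t => |t - s|) (nhdsWithin s (Icc a b))
        (nhdsWithin 0 (Ici 0)) := by
      apply tendsto_nhdsWithin_of_tendsto_nhds_of_eventually_within
      · have h0 : Filter.Tendsto (fun t : ℝ => |t - s|) (nhds s) (nhds 0) := by
          have h1 : Filter.Tendsto (fun t : ℝ => |t - s|) (nhds s) (nhds |s - s|) :=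
            ((continuous_id.sub (continuous_const : Continuous fun _ : ℝ => s)).abs).tendsto s
          simpa using h1
        exact h0.mono_left nhdsWithin_le_nhds
      · exact Filter.Eventually.of_forall fun t => mem_Ici.2 (abs_nonneg _)
    have hωt : Filter.Tendsto (fun t => ω |t - s|) (nhdsWithin s (Icc a b)) (nhds 0) := by
      have := (hωc 0 (self_mem_Ici)).tendsto.comp htd
      simpa [hω0, Function.comp_def] using this
    refine squeeze_zero' (Filter.Eventually.of_forall fun t => dist_nonneg) ?_ hωt
    filter_upwards [self_mem_nhdsWithin] with t ht
    rw [dist_eq_norm]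
    exact hf s hs t ht
  obtain ⟨D, hD⟩ := isCompact_Icc.exists_bound_of_continuousOn hfc
  -- indicator versions of the weights and their primitives
  set ψt₁ : ℝ → ℝ := (Icc a a').indicator ψ₁ with hψt₁def
  set ψt₂ : ℝ → ℝ := (Icc b' b).indicator ψ₂ with hψt₂def
  have hit₁ : Integrable ψt₁ := (integrable_indicator_iff measurableSet_Icc).2 hi₁
  have hit₂ : Integrable ψt₂ := (integrable_indicator_iff measurableSet_Icc).2 hi₂
  have hnnt₁ : ∀ᵐ t ∂(volume : Measure ℝ), 0 ≤ ψt₁ t := by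
    filter_upwards [(ae_restrict_iff' measurableSet_Icc).1 hpos₁] with t ht
    by_cases h : t ∈ Icc a a'
    · simpa [hψt₁def, indicator_of_mem h] using (ht h).le
    · simp [hψt₁def, indicator_of_notMem h]
  have hnnt₂ : ∀ᵐ t ∂(volume : Measure ℝ), 0 ≤ ψt₂ t := by
    filter_upwards [(ae_restrict_iff' measurableSet_Icc).1 hpos₂] with t ht
    by_cases h : t ∈ Icc b' b
    · simpa [hψt₂def, indicator_of_mem h] using (ht h).le
    · simp [hψt₂def, indicator_of_notMem h]
  set Φ₁ : ℝ → ℝ := fun s => ∫ t in a..s, ψt₁ t with hΦ₁def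
  set Φ₂ : ℝ → ℝ := fun u => ∫ t in u..b, ψt₂ t with hΦ₂def
  have hΦ₁cont : Continuous Φ₁ := hit₁.continuous_primitive a
  have hΦ₁mono : Monotone Φ₁ := by
    intro s t hst
    have hadd := intervalIntegral.integral_add_adjacent_intervals
      (hit₁.intervalIntegrable (a := a) (b := s)) (hit₁.intervalIntegrable (a := s) (b := t))
    have hnn : 0 ≤ ∫ x in s..t, ψt₁ x :=
      intervalIntegral.integral_nonneg_of_ae hst hnnt₁
    show Φ₁ s ≤ Φ₁ t
    rw [hΦ₁def]
    simp only []
    linarith [hadd]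
  have hΦ₂anti : Antitone Φ₂ := by
    intro u v huv
    have hadd := intervalIntegral.integral_add_adjacent_intervals
      (hit₂.intervalIntegrable (a := u) (b := v)) (hit₂.intervalIntegrable (a := v) (b := b))
    have hnn : 0 ≤ ∫ x in u..v, ψt₂ x :=
      intervalIntegral.integral_nonneg_of_ae huv hnnt₂
    show Φ₂ v ≤ Φ₂ u
    rw [hΦ₂def]
    simp only []
    linarith [hadd]
  have hΦ₁eq : ∀ s ∈ Icc a a', Φ₁ s = ∫ t in a..s, ψ₁ t := by
    intro s hs
    rw [hΦ₁def]
    simp only []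
    rw [intervalIntegral.integral_of_le hs.1, intervalIntegral.integral_of_le hs.1]
    refine setIntegral_congr_fun measurableSet_Ioc fun t ht => ?_
    exact indicator_of_mem (show t ∈ Icc a a' from ⟨ht.1.le, ht.2.trans hs.2⟩) ψ₁
  have hΦ₂eq : ∀ u ∈ Icc b' b, Φ₂ u = ∫ t in u..b, ψ₂ t := by
    intro u hu
    rw [hΦ₂def]
    simp only []
    rw [intervalIntegral.integral_of_le hu.2, intervalIntegral.integral_of_le hu.2]
    refine setIntegral_congr_fun measurableSet_Ioc fun t ht => ?_
    exact indicator_of_mem (show t ∈ Icc b' b from ⟨hu.1.trans ht.1.le, ht.2⟩) ψ₂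
  have hΦρ : ∀ s ∈ Icc a a', Φ₂ (ρ s) = Φ₁ s := fun s hs => by
    rw [hΦ₂eq _ (hρmap hs), hΦ₁eq _ hs, hρ s hs]
  have hΦ₂strict : StrictAntiOn Φ₂ (Icc b' b) := by
    intro u hu v hv huv
    have hadd := intervalIntegral.integral_add_adjacent_intervals
      (hit₂.intervalIntegrable (a := u) (b := v)) (hit₂.intervalIntegrable (a := v) (b := b))
    have hval : ∫ x in u..v, ψt₂ x = ∫ t in Ioc u v, ψ₂ t := by
      rw [intervalIntegral.integral_of_le huv.le]
      refine setIntegral_congr_fun measurableSet_Ioc fun t ht => ?_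
      exact indicator_of_mem (show t ∈ Icc b' b from ⟨hu.1.trans ht.1.le, ht.2.trans hv.2⟩) ψ₂
    have hpos : 0 < ∫ t in Ioc u v, ψ₂ t :=
      KS_setIntegral_pos huv (fun t ht => ⟨hu.1.trans ht.1.le, ht.2.trans hv.2⟩) hi₂ hpos₂
    show Φ₂ v < Φ₂ u
    rw [hΦ₂def]
    simp only []
    linarith [hadd, hval]
  have hΦ₂inj : InjOn Φ₂ (Icc b' b) := hΦ₂strict.injOn
  have hΦ₂b : Φ₂ b = 0 := by rw [hΦ₂def]; simp
  have hΦ₂nonneg : ∀ u, u ≤ b → 0 ≤ Φ₂ u := fun u hu => hΦ₂b ▸ hΦ₂anti hu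
  have hmema' : a' ∈ Icc a a' := ⟨haa'.le, le_rfl⟩
  have hmemb' : b' ∈ Icc b' b := ⟨le_rfl, hb'b.le⟩
  have hρa' : ρ a' = b' := by
    refine hΦ₂inj (hρmap hmema') hmemb' ?_
    rw [hΦρ a' hmema', hΦ₁eq a' hmema', hint, hΦ₂eq b' hmemb']
  have hρanti : AntitoneOn ρ (Icc a a') := by
    intro s hs t ht hst
    by_contra h
    push_neg at h
    have hlt := hΦ₂strict (hρmap hs) (hρmap ht) h
    rw [hΦρ s hs, hΦρ t ht] at hlt
    exact absurd (hΦ₁mono hst) (not_le.2 hlt)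
  set ρ' : ℝ → ℝ := fun s => ρ (max a (min s a')) with hρ'def
  have hclamp : ∀ s, max a (min s a') ∈ Icc a a' := fun s =>
    ⟨le_max_left _ _, max_le haa'.le (min_le_right _ _)⟩
  have hρ'eq : ∀ s ∈ Icc a a', ρ' s = ρ s := fun s hs => by
    rw [hρ'def]
    simp only []
    rw [min_eq_left hs.2, max_eq_right hs.1]
  have hρ'mem : ∀ s, ρ' s ∈ Icc b' b := fun s => hρmap (hclamp s)
  have hρ'anti : Antitone ρ' := by
    intro s t hst
    exact hρanti (hclamp s) (hclamp t) (max_le_max le_rfl (min_le_min hst le_rfl))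
  have hρ'meas : Measurable ρ' := hρ'anti.measurable
  -- interval integrability on subintervals
  have hii₁ : ∀ x y, x ∈ Icc a a' → y ∈ Icc a a' → IntervalIntegrable ψ₁ volume x y :=
    fun x y hx hy => (hi₁.mono_set (uIcc_subset_Icc hx hy)).intervalIntegrable
  have hii₂ : ∀ x y, x ∈ Icc b' b → y ∈ Icc b' b → IntervalIntegrable ψ₂ volume x y :=
    fun x y hx hy => (hi₂.mono_set (uIcc_subset_Icc hx hy)).intervalIntegrable
  have hΦ₁a' : Φ₁ a' = Φ₂ b' := by
    rw [hΦ₁eq a' hmema', hint, hΦ₂eq b' hmemb']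
  -- the two weighted measures
  set μ : Measure ℝ := (volume.restrict (Icc a a')).withDensity
    (fun t => ENNReal.ofReal (ψ₁ t)) with hμdef
  set ν : Measure ℝ := (volume.restrict (Icc b' b)).withDensity
    (fun t => ENNReal.ofReal (ψ₂ t)) with hνdef
  haveI hμfin : IsFiniteMeasure μ := KS_isFinite hC₁
  haveI hνfin : IsFiniteMeasure ν := KS_isFinite hC₂
  have hμK : μ (Icc a a')ᶜ = 0 := by
    refine withDensity_absolutelyContinuous _ _ ?_
    rw [Measure.restrict_apply measurableSet_Icc.compl]
    simp
  have hνK : ν (Icc b' b)ᶜ = 0 := by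
    refine withDensity_absolutelyContinuous _ _ ?_
    rw [Measure.restrict_apply measurableSet_Icc.compl]
    simp
  have hIcc_int₁ : ∫ t in Icc a a', ψ₁ t = ∫ t in a..a', ψ₁ t := by
    rw [intervalIntegral.integral_of_le haa'.le, integral_Icc_eq_integral_Ioc]
  have hIcc_int₂ : ∫ t in Icc b' b, ψ₂ t = ∫ t in b'..b, ψ₂ t := by
    rw [intervalIntegral.integral_of_le hb'b.le, integral_Icc_eq_integral_Ioc]
  -- the pushforward identity
  have hmap : μ.map ρ' = ν := by
    refine Measure.ext_of_Iic _ _ (fun u => ?_)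
    rw [Measure.map_apply hρ'meas measurableSet_Iic]
    rcases le_or_gt b' u with hu1 | hu1
    · rcases lt_or_ge u b with hu2 | hu2
      · -- main case : b' ≤ u < b
        set S : Set ℝ := {s ∈ Icc a a' | ρ s ≤ u} with hSdef
        have hSa' : a' ∈ S := ⟨hmema', by rw [hρa']; exact hu1⟩
        have hSbdd : BddBelow S := ⟨a, fun x hx => hx.1.1⟩
        have hSne : S.Nonempty := ⟨a', hSa'⟩
        set c := sInf S with hcdef
        have hca : a ≤ c := le_csInf hSne (fun x hx => hx.1.1)
        have hca' : c ≤ a' := csInf_le hSbdd hSa'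
        have hcmem : c ∈ Icc a a' := ⟨hca, hca'⟩
        have humem : u ∈ Icc b' b := ⟨hu1, hu2.le⟩
        -- the key analytic identity
        have hkey : Φ₁ c = Φ₂ u := by
          refine le_antisymm ?_ ?_
          · -- Φ₁ c ≤ Φ₂ u
            refine le_of_forall_pos_le_add fun ε hε => ?_
            rcases eq_or_lt_of_le hca with hac | hac
            · have h0 : Φ₁ a = 0 := by rw [hΦ₁def]; simp
              rw [← hac, h0]
              have := hΦ₂nonneg u hu2.le
              linarith
            · obtain ⟨δ, hδpos, hδ⟩ := Metric.continuous_iff.1 hΦ₁cont c ε hε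
              set s := max a (c - δ/2) with hs
              have hsc : s < c := by
                rcases le_or_gt (c - δ/2) a with h | h
                · rw [hs, max_eq_left h]; exact hac
                · rw [hs, max_eq_right h.le]; linarith
              have hsmem : s ∈ Icc a a' := ⟨le_max_left _ _,
                (max_le hca (by linarith)).trans hca'⟩
              have hdist : dist s c < δ := by
                rw [Real.dist_eq, abs_of_nonpos (by linarith)]
                have : c - δ/2 ≤ s := le_max_right _ _
                linarith
              have hsnot : s ∉ S := fun h => absurd (csInf_le hSbdd h) (not_le.2 hsc)
              have hsu : u < ρ s := by
                by_contra h
                push_neg at h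
                exact hsnot ⟨hsmem, h⟩
              have h1 : Φ₁ s = Φ₂ (ρ s) := (hΦρ s hsmem).symm
              have h2 : Φ₂ (ρ s) ≤ Φ₂ u := hΦ₂anti hsu.le
              have h3 := hδ s hdist
              rw [Real.dist_eq, abs_lt] at h3
              linarith
          · -- Φ₂ u ≤ Φ₁ c
            refine le_of_forall_pos_le_add fun ε hε => ?_
            obtain ⟨δ, hδpos, hδ⟩ := Metric.continuous_iff.1 hΦ₁cont c ε hε
            obtain ⟨s, hsS, hslt⟩ := exists_lt_of_csInf_lt hSne (lt_add_of_pos_right c hδpos)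
            have hcs : c ≤ s := csInf_le hSbdd hsS
            have hdist : dist s c < δ := by
              rw [Real.dist_eq, abs_of_nonneg (by linarith)]
              linarith
            have h1 : Φ₂ u ≤ Φ₂ (ρ s) := hΦ₂anti hsS.2
            have h2 : Φ₂ (ρ s) = Φ₁ s := hΦρ s hsS.1
            have h3 := hδ s hdist
            rw [Real.dist_eq, abs_lt] at h3
            linarith
        -- measure of the preimage
        have hsing : μ {c} = 0 := by
          refine withDensity_absolutelyContinuous _ _ ?_
          rw [Measure.restrict_apply (measurableSet_singleton c)]
          exact measure_mono_null inter_subset_left (measure_singleton c)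
        have hIccIoc : μ (Icc c a') = μ (Ioc c a') := by
          refine le_antisymm ?_ (measure_mono Ioc_subset_Icc_self)
          calc μ (Icc c a') ≤ μ (Ioc c a' ∪ {c}) := measure_mono (fun t ht => by
                rcases eq_or_lt_of_le ht.1 with h | h
                · exact Or.inr (by simp [← h])
                · exact Or.inl ⟨h, ht.2⟩)
            _ ≤ μ (Ioc c a') + μ {c} := measure_union_le _ _
            _ = μ (Ioc c a') := by rw [hsing, add_zero]
        have hIocsub : Ioc c a' ⊆ Icc a a' := fun t ht => ⟨hca.trans ht.1.le, ht.2⟩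
        have hIoc : μ (Ioc c a') = ENNReal.ofReal (∫ t in Ioc c a', ψ₁ t) :=
          KS_withDensity_apply hi₁ hnn₁ measurableSet_Ioc hIocsub
        have hpre : μ (ρ' ⁻¹' (Iic u)) = μ (Ioc c a') := by
          refine le_antisymm ?_ (measure_mono (fun t ht => ?_))
          · calc μ (ρ' ⁻¹' (Iic u)) = μ (ρ' ⁻¹' (Iic u) ∩ Icc a a') :=
                  (measure_inter_conull hμK).symm
              _ ≤ μ (Icc c a') := measure_mono (fun t ht => by
                  have htS : t ∈ S := ⟨ht.2, by rw [← hρ'eq t ht.2]; exact ht.1⟩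
                  exact ⟨csInf_le hSbdd htS, ht.2.2⟩)
              _ = μ (Ioc c a') := hIccIoc
          · -- Ioc c a' ⊆ ρ'⁻¹ (Iic u)
            obtain ⟨x, hxS, hxlt⟩ := exists_lt_of_csInf_lt hSne ht.1
            have htmem : t ∈ Icc a a' := hIocsub ht
            have : ρ t ≤ ρ x := hρanti hxS.1 htmem hxlt.le
            have : ρ t ≤ u := this.trans hxS.2
            rw [mem_preimage, mem_Iic, hρ'eq t htmem]
            exact this
        -- value of ν
        have hIccIcc : ν (Iic u) = ν (Icc b' u) := by
          refine KS_measure_eq_of_inter hνK ?_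
          ext t
          simp only [mem_inter_iff, mem_Iic, mem_Icc]
          constructor
          · rintro ⟨h1, h2, h3⟩; exact ⟨⟨h2, h1⟩, h2, h3⟩
          · rintro ⟨⟨h2, h1⟩, _, h3⟩; exact ⟨h1, h2, h3⟩
        have hIccb'u : ν (Icc b' u) = ENNReal.ofReal (∫ t in Icc b' u, ψ₂ t) :=
          KS_withDensity_apply hi₂ hnn₂ measurableSet_Icc
            (Icc_subset_Icc le_rfl hu2.le)
        -- the two integrals agree
        have e₁ : ∫ t in Ioc c a', ψ₁ t = Φ₂ b' - Φ₂ u := by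
          have hadd := intervalIntegral.integral_add_adjacent_intervals
            (hii₁ a c ⟨le_rfl, haa'.le⟩ hcmem) (hii₁ c a' hcmem hmema')
          rw [← intervalIntegral.integral_of_le hca']
          have h1 : ∫ t in a..c, ψ₁ t = Φ₁ c := (hΦ₁eq c hcmem).symm
          have h2 : ∫ t in a..a', ψ₁ t = Φ₁ a' := (hΦ₁eq a' hmema').symm
          linarith [hadd, hkey, hΦ₁a']
        have e₂ : ∫ t in Icc b' u, ψ₂ t = Φ₂ b' - Φ₂ u := by
          have hadd := intervalIntegral.integral_add_adjacent_intervals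
            (hii₂ b' u hmemb' humem) (hii₂ u b humem ⟨hb'b.le, le_rfl⟩)
          rw [integral_Icc_eq_integral_Ioc, ← intervalIntegral.integral_of_le hu1]
          have h1 : ∫ t in u..b, ψ₂ t = Φ₂ u := (hΦ₂eq u humem).symm
          have h2 : ∫ t in b'..b, ψ₂ t = Φ₂ b' := (hΦ₂eq b' hmemb').symm
          linarith [hadd]
        rw [hpre, hIoc, hIccIcc, hIccb'u, e₁, e₂]
      · -- u ≥ b : both are the full mass
        have h1 : μ (ρ' ⁻¹' (Iic u)) = μ (Icc a a') := by
          refine KS_measure_eq_of_inter hμK ?_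
          ext t
          simp only [mem_inter_iff, mem_preimage, mem_Iic, and_self]
          exact and_iff_right_of_imp (fun _ => (hρ'mem t).2.trans hu2)
        have h2 : ν (Iic u) = ν (Icc b' b) := by
          refine KS_measure_eq_of_inter hνK ?_
          ext t
          simp only [mem_inter_iff, mem_Iic, and_self]
          exact and_iff_right_of_imp (fun ht => ht.2.trans hu2)
        rw [h1, h2, KS_withDensity_apply hi₁ hnn₁ measurableSet_Icc subset_rfl,
          KS_withDensity_apply hi₂ hnn₂ measurableSet_Icc subset_rfl,
          hIcc_int₁, hIcc_int₂, hint]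
    · -- u < b' : both are zero
      have h1 : μ (ρ' ⁻¹' (Iic u)) = μ (∅ : Set ℝ) := by
        refine KS_measure_eq_of_inter hμK ?_
        ext s
        simp only [mem_inter_iff, mem_preimage, mem_Iic, empty_inter,
          mem_empty_iff_false, iff_false, not_and]
        intro h
        exact absurd ((hρ'mem s).1.trans h) (not_le.2 hu1)
      have h2 : ν (Iic u) = ν (∅ : Set ℝ) := by
        refine KS_measure_eq_of_inter hνK ?_
        ext t
        simp only [mem_inter_iff, mem_Iic, empty_inter,
          mem_empty_iff_false, iff_false, not_and]
        intro h hmem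
        exact absurd (hmem.1.trans h) (not_le.2 hu1)
      rw [h1, h2, measure_empty, measure_empty]
  -- continuous extension of f from [b', b]
  set g : ℝ → E := fun u => f (max b' (min u b)) with hgdef
  have hclamp₂ : ∀ u : ℝ, max b' (min u b) ∈ Icc b' b := fun u =>
    ⟨le_max_left _ _, max_le hb'b.le (min_le_right _ _)⟩
  have hgc : Continuous g :=
    (hfc.mono hIcc2).comp_continuous
      (continuous_const.max (continuous_id.min continuous_const)) hclamp₂
  have hgρ' : ∀ s, g (ρ' s) = f (ρ' s) := fun s => by
    rw [hgdef]
    simp only []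
    rw [min_eq_left (hρ'mem s).2, max_eq_right (hρ'mem s).1]
  -- transfer of the second integral through the pushforward
  have hfaes_ν : AEStronglyMeasurable f ν :=
    AEStronglyMeasurable.mono_ac (withDensity_absolutelyContinuous _ _)
      ((hfc.mono hIcc2).aestronglyMeasurable measurableSet_Icc)
  have hT₂ : ∫ x, f x ∂ν = ∫ t in Icc b' b, ψ₂ t • f t := by
    rw [show ν = (volume.restrict (Icc b' b)).withDensity
        (fun t => ((ψ₂ t).toNNReal : ℝ≥0∞)) from rfl,
      integral_withDensity_eq_integral_smul (hm₂.real_toNNReal) f]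
    exact integral_congr_ae (hpos₂.mono fun t ht => by
      show ((ψ₂ t).toNNReal : ℝ≥0) • f t = ψ₂ t • f t
      rw [NNReal.smul_def, Real.coe_toNNReal _ ht.le])
  have hT₁ : ∫ x, f x ∂ν = ∫ s, f (ρ' s) ∂μ := by
    rw [← hmap, integral_map hρ'meas.aemeasurable (by rw [hmap]; exact hfaes_ν)]
  have hT₃ : ∫ s, f (ρ' s) ∂μ = ∫ s in Icc a a', ψ₁ s • f (ρ' s) := by
    rw [show μ = (volume.restrict (Icc a a')).withDensity
        (fun t => ((ψ₁ t).toNNReal : ℝ≥0∞)) from rfl,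
      integral_withDensity_eq_integral_smul (hm₁.real_toNNReal)
        (fun s => f (ρ' s))]
    exact integral_congr_ae (hpos₁.mono fun s hs => by
      show ((ψ₁ s).toNNReal : ℝ≥0) • f (ρ' s) = ψ₁ s • f (ρ' s)
      rw [NNReal.smul_def, Real.coe_toNNReal _ hs.le])
  have hsecond : ∫ t in b'..b, ψ₂ t • f t = ∫ s in Icc a a', ψ₁ s • f (ρ' s) := by
    rw [intervalIntegral.integral_of_le hb'b.le, ← integral_Icc_eq_integral_Ioc,
      ← hT₂, hT₁, hT₃]
  have hfirst : ∫ t in a..a', ψ₁ t • f t = ∫ t in Icc a a', ψ₁ t • f t := by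
    rw [intervalIntegral.integral_of_le haa'.le, integral_Icc_eq_integral_Ioc]
  -- integrability
  have hInt1 : IntegrableOn (fun t => ψ₁ t • f t) (Icc a a') := by
    refine ⟨(hm₁.aestronglyMeasurable.restrict).smul
      ((hfc.mono hIcc1).aestronglyMeasurable measurableSet_Icc), ?_⟩
    refine HasFiniteIntegral.restrict_of_bounded (C := C₁ * D) measure_Icc_lt_top ?_
    filter_upwards [ae_restrict_mem measurableSet_Icc] with t ht
    rw [norm_smul, Real.norm_eq_abs]
    exact mul_le_mul (hC₁ t ht) (hD t (hIcc1 ht)) (norm_nonneg _)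
      ((abs_nonneg _).trans (hC₁ t ht))
  have hsm2 : StronglyMeasurable (fun s => f (ρ' s)) := by
    have heq : (fun s => f (ρ' s)) = fun s => g (ρ' s) := funext fun s => (hgρ' s).symm
    rw [heq]
    exact hgc.comp_stronglyMeasurable hρ'meas.stronglyMeasurable
  have hInt2 : IntegrableOn (fun t => ψ₁ t • f (ρ' t)) (Icc a a') := by
    refine ⟨(hm₁.aestronglyMeasurable.restrict).smul hsm2.aestronglyMeasurable.restrict, ?_⟩
    refine HasFiniteIntegral.restrict_of_bounded (C := C₁ * D) measure_Icc_lt_top ?_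
    filter_upwards [ae_restrict_mem measurableSet_Icc] with t ht
    rw [norm_smul, Real.norm_eq_abs]
    exact mul_le_mul (hC₁ t ht) (hD _ (hIcc2 (hρ'mem t))) (norm_nonneg _)
      ((abs_nonneg _).trans (hC₁ t ht))
  have hdiff : (∫ t in a..a', ψ₁ t • f t) - ∫ t in b'..b, ψ₂ t • f t
      = ∫ s in Icc a a', ψ₁ s • (f s - f (ρ' s)) := by
    rw [hfirst, hsecond, ← integral_sub hInt1 hInt2]
    exact integral_congr_ae (Filter.Eventually.of_forall fun s => (smul_sub _ _ _).symm)
  -- the dominating function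
  set q : ℝ → ℝ := fun s => ω (max (b' - a') (ρ' s - s)) with hqdef
  have hqanti : Antitone q := by
    intro s t hst
    have h1 : ρ' t - t ≤ ρ' s - s := sub_le_sub (hρ'anti hst) hst
    exact hωm (mem_Ici.2 (le_trans (sub_nonneg.2 ha'b') (le_max_left _ _)))
      (mem_Ici.2 (le_trans (sub_nonneg.2 ha'b') (le_max_left _ _)))
      (max_le_max le_rfl h1)
  have hqmeas : Measurable q := hqanti.measurable
  have hqIcc : ∀ s ∈ Icc a a', q s = ω (ρ s - s) := by
    intro s hs
    rw [hqdef]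
    simp only []
    rw [hρ'eq s hs, max_eq_right (sub_le_sub (hρmap hs).1 hs.2)]
  have hqb : ∀ s ∈ Icc a a', 0 ≤ q s ∧ q s ≤ ω (b - a) := by
    intro s hs
    have hx0 : (0:ℝ) ≤ max (b' - a') (ρ' s - s) :=
      le_trans (sub_nonneg.2 ha'b') (le_max_left _ _)
    have hxba : max (b' - a') (ρ' s - s) ≤ b - a := by
      refine max_le (by linarith) ?_
      have h1 := (hρ'mem s).2
      have h2 : a ≤ max a (min s a') := le_max_left _ _
      have h3 : ρ' s - max a (min s a') ≤ b - a := by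
        have := (hρ'mem s).2
        linarith
      have h4 : s - a' ≤ 0 ∨ True := Or.inr trivial
      -- ρ' s ≤ b and s ≥ ? careful: s can be arbitrary? no, s ∈ Icc a a'
      have : ρ' s - s ≤ b - a := by
        have := hs.1
        linarith [(hρ'mem s).2]
      exact this
    constructor
    · rw [hqdef]
      simp only []
      rw [← hω0]
      exact hωm (mem_Ici.2 le_rfl) (mem_Ici.2 hx0) hx0
    · rw [hqdef]
      simp only []
      exact hωm (mem_Ici.2 hx0) (mem_Ici.2 (by linarith : (0:ℝ) ≤ b - a)) hxba
  have hGint : IntegrableOn (fun s => ψ₁ s * q s) (Icc a a') := by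
    refine ⟨((hm₁.mul hqmeas).aestronglyMeasurable).restrict, ?_⟩
    refine HasFiniteIntegral.restrict_of_bounded (C := C₁ * ω (b - a))
      measure_Icc_lt_top ?_
    filter_upwards [ae_restrict_mem measurableSet_Icc] with t ht
    rw [Real.norm_eq_abs, abs_mul]
    exact mul_le_mul (hC₁ t ht) (by rw [abs_of_nonneg (hqb t ht).1]; exact (hqb t ht).2)
      (abs_nonneg _) ((abs_nonneg _).trans (hC₁ t ht))
  have hbound : ‖∫ s in Icc a a', ψ₁ s • (f s - f (ρ' s))‖
      ≤ ∫ s in Icc a a', ψ₁ s * q s := by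
    refine norm_integral_le_of_norm_le hGint ?_
    filter_upwards [ae_restrict_mem measurableSet_Icc, hpos₁] with s hs hψ
    rw [norm_smul, Real.norm_eq_abs, abs_of_pos hψ]
    have hρs := hρmap hs
    have hest : ‖f s - f (ρ' s)‖ ≤ q s := by
      rw [hρ'eq s hs, hqIcc s hs, norm_sub_rev]
      have hft := hf s (hIcc1 hs) (ρ s) (hIcc2 hρs)
      rwa [abs_of_nonneg (by linarith [hρs.1, hs.2] : (0:ℝ) ≤ ρ s - s)] at hft
    exact mul_le_mul_of_nonneg_left hest hψ.le
  have hRHS : ∫ s in a..a', ψ₁ s * ω (ρ s - s) = ∫ s in Icc a a', ψ₁ s * q s := by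
    rw [intervalIntegral.integral_of_le haa'.le, ← integral_Icc_eq_integral_Ioc]
    exact (setIntegral_congr_fun measurableSet_Icc fun s hs => by rw [hqIcc s hs]).symm
  rw [hdiff, hRHS]
  exact hbound
end

section
/- Korneichuk–Stechkin lemma, sharpness for concave moduli (real-valued case): Let a < a' ≤ b' < b, let ψ₁: [a,a'] → ℝ and ψ₂: [b',b] → ℝ be bounded measurable functions that are positive almost everywhere with ∫_a^{a'} ψ₁(t) dt = ∫_{b'}^{b} ψ₂(t) dt, and let ρ: [a,a'] → [b',b] satisfy ∫_a^{s} ψ₁(t) dt = ∫_{ρ(s)}^{b} ψ₂(t) dt for all s ∈ [a,a']. If ω is a concave modulus of continuity, then the supremum over all f ∈ H^ω([a,b],ℝ) of |∫_a^{a'} ψ₁(t) f(t) dt − ∫_{b'}^{b} ψ₂(t) f(t) dt| is equal to ∫_a^{a'} ψ₁(s) ω(ρ(s) − s) ds. -/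
open MeasureTheory Set intervalIntegral
open scoped ENNReal NNReal

namespace KSAux

/-- interval integrability from boundedness and a.e.-measurability -/
lemma ii_of_bdd {f : ℝ → ℝ} {l r C : ℝ} (hlr : l ≤ r)
    (hm : AEMeasurable f (volume.restrict (Set.Ioc l r)))
    (hb : ∀ x ∈ Set.Ioc l r, |f x| ≤ C) :
    IntervalIntegrable f volume l r := by
  rw [intervalIntegrable_iff_integrableOn_Ioc_of_le hlr]
  refine ⟨hm.aestronglyMeasurable, ?_⟩
  apply MeasureTheory.HasFiniteIntegral.restrict_of_bounded (C := C) measure_Ioc_lt_top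
  filter_upwards [MeasureTheory.ae_restrict_mem measurableSet_Ioc] with x hx
  simpa [Real.norm_eq_abs] using hb x hx

lemma primitive_pos {ψ : ℝ → ℝ} {c d x y : ℝ}
    (hpos : ∀ᵐ t ∂(volume.restrict (Set.Icc c d)), 0 < ψ t)
    (hii : IntervalIntegrable ψ volume x y)
    (hxy : x < y) (hx : c ≤ x) (hy : y ≤ d) :
    0 < ∫ t in x..y, ψ t := by
  have hsub : Set.Ioc x y ⊆ Set.Icc c d := fun t ht => ⟨hx.trans ht.1.le, ht.2.trans hy⟩
  have hpos' : ∀ᵐ t ∂(volume.restrict (Set.Ioc x y)), 0 < ψ t :=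
    ae_restrict_of_ae_restrict_of_subset hsub hpos
  have hpos'' : 0 ≤ᵐ[volume.restrict (Set.uIoc x y)] ψ := by
    rw [Set.uIoc_of_le hxy.le]
    exact hpos'.mono fun t ht => ht.le
  rw [intervalIntegral.integral_pos_iff_support_of_nonneg_ae' hpos'' hii]
  refine ⟨hxy, ?_⟩
  have hmem : ∀ᵐ t ∂(volume.restrict (Set.Ioc x y)), t ∈ Function.support ψ :=
    hpos'.mono fun t ht => ne_of_gt ht
  have h0 : (volume.restrict (Set.Ioc x y)) (Function.support ψ)ᶜ = 0 := by
    rw [MeasureTheory.ae_iff] at hmem; exact hmem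
  have h1 : (volume.restrict (Set.Ioc x y)) Set.univ
      ≤ (volume.restrict (Set.Ioc x y)) (Function.support ψ) := by
    calc (volume.restrict (Set.Ioc x y)) Set.univ
        ≤ (volume.restrict (Set.Ioc x y)) (Function.support ψ)
          + (volume.restrict (Set.Ioc x y)) (Function.support ψ)ᶜ := by
            rw [← Set.union_compl_self (Function.support ψ)]
            exact measure_union_le _ _
      _ = (volume.restrict (Set.Ioc x y)) (Function.support ψ) := by rw [h0, add_zero]
  have h2 : (0:ENNReal) < (volume.restrict (Set.Ioc x y)) Set.univ := by
    rw [Measure.restrict_apply_univ]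
    simpa [Real.volume_Ioc] using ENNReal.ofReal_pos.2 (by linarith : (0:ℝ) < y - x)
  have h3 := h2.trans_le h1
  rwa [Measure.restrict_apply' measurableSet_Ioc] at h3

/-- concave increments are antitone -/
lemma concave_incr {ω : ℝ → ℝ} (hconc : ConcaveOn ℝ (Set.Ici 0) ω)
    {t t' ε : ℝ} (ht : 0 ≤ t) (htt' : t ≤ t') (hε : 0 ≤ ε) :
    ω (t' + ε) - ω t' ≤ ω (t + ε) - ω t := by
  rcases eq_or_lt_of_le htt' with rfl | h1
  · simp
  rcases eq_or_lt_of_le hε with rfl | h2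
  · simp
  have ht' : (0:ℝ) ≤ t' := ht.trans htt'
  have hDpos : (0:ℝ) < t' + ε - t := by linarith
  have hDne : t' + ε - t ≠ 0 := ne_of_gt hDpos
  have hmem1 : t ∈ Set.Ici (0:ℝ) := ht
  have hmem2 : t' + ε ∈ Set.Ici (0:ℝ) := by simp only [Set.mem_Ici]; linarith
  have hc1 : (0:ℝ) ≤ (t' - t)/(t' + ε - t) := div_nonneg (by linarith) hDpos.le
  have hc2 : (0:ℝ) ≤ ε/(t' + ε - t) := div_nonneg (by linarith) hDpos.le
  have hsum : (t' - t)/(t' + ε - t) + ε/(t' + ε - t) = 1 := by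
    rw [← add_div, div_eq_one_iff_eq hDne]; ring
  have hsum' : ε/(t' + ε - t) + (t' - t)/(t' + ε - t) = 1 := by linarith
  have h3 := hconc.2 hmem1 hmem2 hc1 hc2 hsum
  have h4 := hconc.2 hmem1 hmem2 hc2 hc1 hsum'
  simp only [smul_eq_mul] at h3 h4
  have e1 : (t' - t)/(t' + ε - t) * t + (ε/(t' + ε - t)) * (t' + ε) = t + ε := by
    field_simp; ring
  have e2 : (ε/(t' + ε - t)) * t + ((t' - t)/(t' + ε - t)) * (t' + ε) = t' := by
    field_simp; ring
  rw [e1] at h3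
  rw [e2] at h4
  have hB : ε/(t' + ε - t) = 1 - (t' - t)/(t' + ε - t) := by linarith
  rw [hB] at h3 h4
  linarith


lemma lint_eq {ψ : ℝ → ℝ} {u v : ℝ} (huv : u ≤ v) (hm : Measurable ψ)
    (hnn : ∀ᵐ x ∂(volume.restrict (Set.Icc u v)), 0 ≤ ψ x)
    {C : ℝ} (hb : ∀ x ∈ Set.Icc u v, |ψ x| ≤ C) :
    ∫⁻ x in Set.Icc u v, ((ψ x).toNNReal : ℝ≥0∞) = ENNReal.ofReal (∫ x in u..v, ψ x) := by
  have hint : Integrable ψ (volume.restrict (Set.Icc u v)) := by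
    refine ⟨hm.aestronglyMeasurable, ?_⟩
    apply MeasureTheory.HasFiniteIntegral.restrict_of_bounded (C := C) measure_Icc_lt_top
    filter_upwards [MeasureTheory.ae_restrict_mem measurableSet_Icc] with x hx
    simpa [Real.norm_eq_abs] using hb x hx
  rw [intervalIntegral.integral_of_le huv, ← MeasureTheory.integral_Icc_eq_integral_Ioc,
    MeasureTheory.ofReal_integral_eq_lintegral_ofReal hint hnn]
  rfl

lemma pushforward
    {a a' b' b : ℝ} (haa' : a ≤ a') (ha'b' : a' ≤ b') (hb'b : b' ≤ b)
    {ψ₁ ψ₂ : ℝ → ℝ} (hm₁ : Measurable ψ₁) (hm₂ : Measurable ψ₂)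
    {C₁ C₂ : ℝ} (hbd₁ : ∀ t ∈ Set.Icc a a', |ψ₁ t| ≤ C₁)
    (hbd₂ : ∀ t ∈ Set.Icc b' b, |ψ₂ t| ≤ C₂)
    (hnn₁ : ∀ᵐ t ∂(volume.restrict (Set.Icc a a')), 0 ≤ ψ₁ t)
    (hnn₂ : ∀ᵐ t ∂(volume.restrict (Set.Icc b' b)), 0 ≤ ψ₂ t)
    {r : ℝ → ℝ} (hranti : Antitone r) (hrmap : Set.MapsTo r (Set.Icc a a') (Set.Icc b' b))
    (hrsa : StrictAntiOn r (Set.Icc a a'))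
    (hrsur : ∀ t ∈ Set.Icc b' b, ∃ s ∈ Set.Icc a a', r s = t)
    (hralt : ∀ s ∈ Set.Icc a a', (∫ t in a..s, ψ₁ t) = ∫ t in r s..b, ψ₂ t)
    (h : ℝ → ℝ) (hhm : AEMeasurable h (volume.restrict (Set.Icc b' b))) :
    ∫ t in b'..b, ψ₂ t * h t = ∫ s in a..a', ψ₁ s * h (r s) := by
  have hab' : a ≤ b' := haa'.trans ha'b'
  have hrm : Measurable r := hranti.measurable
  -- interval integrability of ψ₁, ψ₂ on subintervals
  have hii₁ : ∀ x y, a ≤ x → x ≤ y → y ≤ a' → IntervalIntegrable ψ₁ volume x y := by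
    intro x y hx hxy hy
    exact ii_of_bdd hxy (hm₁.aemeasurable.restrict)
      (fun t ht => hbd₁ t ⟨hx.trans ht.1.le, ht.2.trans hy⟩)
  have hii₂ : ∀ x y, b' ≤ x → x ≤ y → y ≤ b → IntervalIntegrable ψ₂ volume x y := by
    intro x y hx hxy hy
    exact ii_of_bdd hxy (hm₂.aemeasurable.restrict)
      (fun t ht => hbd₂ t ⟨hx.trans ht.1.le, ht.2.trans hy⟩)
  have hra' : r a' = b' := by
    obtain ⟨s₀, hs₀, hrs₀⟩ := hrsur b' ⟨le_refl _, hb'b⟩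
    rcases eq_or_lt_of_le hs₀.2 with heq | hlt
    · rw [← heq]; exact hrs₀
    · exfalso
      have h1 : r a' < r s₀ := hrsa hs₀ (Set.right_mem_Icc.2 haa') hlt
      have h2 : b' ≤ r a' := (hrmap (Set.right_mem_Icc.2 haa')).1
      rw [hrs₀] at h1; linarith
  -- the weighted measures
  set μ : Measure ℝ :=
    (volume.restrict (Set.Icc a a')).withDensity (fun s => ((ψ₁ s).toNNReal : ℝ≥0∞)) with hμ
  set ν : Measure ℝ :=
    (volume.restrict (Set.Icc b' b)).withDensity (fun t => ((ψ₂ t).toNNReal : ℝ≥0∞)) with hν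
  have hdm₁ : Measurable (fun s => ((ψ₁ s).toNNReal : ℝ≥0∞)) :=
    (hm₁.real_toNNReal).coe_nnreal_ennreal
  have hdm₂ : Measurable (fun t => ((ψ₂ t).toNNReal : ℝ≥0∞)) :=
    (hm₂.real_toNNReal).coe_nnreal_ennreal
  haveI hμfin : IsFiniteMeasure μ := by
    constructor
    rw [hμ, withDensity_apply _ MeasurableSet.univ, Measure.restrict_restrict MeasurableSet.univ,
      Set.univ_inter]
    calc ∫⁻ s in Set.Icc a a', ((ψ₁ s).toNNReal : ℝ≥0∞)
        ≤ ∫⁻ _ in Set.Icc a a', ENNReal.ofReal C₁ := by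
          apply lintegral_mono_ae
          filter_upwards [MeasureTheory.ae_restrict_mem measurableSet_Icc] with x hx
          exact ENNReal.ofReal_le_ofReal ((le_abs_self _).trans (hbd₁ x hx))
      _ = ENNReal.ofReal C₁ * volume (Set.Icc a a') := setLIntegral_const _ _
      _ < ⊤ := ENNReal.mul_lt_top ENNReal.ofReal_lt_top measure_Icc_lt_top
  haveI hνfin : IsFiniteMeasure ν := by
    constructor
    rw [hν, withDensity_apply _ MeasurableSet.univ, Measure.restrict_restrict MeasurableSet.univ,
      Set.univ_inter]
    calc ∫⁻ t in Set.Icc b' b, ((ψ₂ t).toNNReal : ℝ≥0∞)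
        ≤ ∫⁻ _ in Set.Icc b' b, ENNReal.ofReal C₂ := by
          apply lintegral_mono_ae
          filter_upwards [MeasureTheory.ae_restrict_mem measurableSet_Icc] with x hx
          exact ENNReal.ofReal_le_ofReal ((le_abs_self _).trans (hbd₂ x hx))
      _ = ENNReal.ofReal C₂ * volume (Set.Icc b' b) := setLIntegral_const _ _
      _ < ⊤ := ENNReal.mul_lt_top ENNReal.ofReal_lt_top measure_Icc_lt_top
  -- the key: map r μ = ν
  have hmap : Measure.map r μ = ν := by
    apply MeasureTheory.Measure.ext_of_Iic
    intro t
    rw [Measure.map_apply hrm measurableSet_Iic]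
    rw [hμ, hν, withDensity_apply _ (hrm measurableSet_Iic),
      withDensity_apply _ measurableSet_Iic,
      Measure.restrict_restrict (hrm measurableSet_Iic),
      Measure.restrict_restrict measurableSet_Iic]
    rcases lt_or_ge t b' with ht | ht
    · have hs1 : r ⁻¹' (Set.Iic t) ∩ Set.Icc a a' = ∅ := by
        apply Set.eq_empty_of_forall_notMem
        intro s ⟨h1, h2⟩
        have := (hrmap h2).1
        simp only [Set.mem_preimage, Set.mem_Iic] at h1
        linarith
      have hs2 : Set.Iic t ∩ Set.Icc b' b = ∅ := by
        apply Set.eq_empty_of_forall_notMem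
        intro s ⟨h1, h2⟩
        simp only [Set.mem_Iic] at h1
        have := h2.1; linarith
      rw [hs1, hs2]; simp
    rcases lt_or_ge t b with htb | htb
    · obtain ⟨σ, hσ, hrσ⟩ := hrsur t ⟨ht, htb.le⟩
      have hs1 : r ⁻¹' (Set.Iic t) ∩ Set.Icc a a' = Set.Icc σ a' := by
        ext s
        simp only [Set.mem_inter_iff, Set.mem_preimage, Set.mem_Iic, Set.mem_Icc]
        constructor
        · rintro ⟨h1, h2, h3⟩
          refine ⟨?_, h3⟩
          by_contra hcon
          push_neg at hcon
          have := hrsa ⟨h2, h3⟩ hσ hcon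
          rw [hrσ] at this; linarith
        · rintro ⟨h1, h2⟩
          refine ⟨?_, hσ.1.trans h1, h2⟩
          have : r s ≤ r σ := hranti h1
          rw [hrσ] at this; exact this
      have hs2 : Set.Iic t ∩ Set.Icc b' b = Set.Icc b' t := by
        ext s
        simp only [Set.mem_inter_iff, Set.mem_Iic, Set.mem_Icc]
        constructor
        · rintro ⟨h1, h2, h3⟩; exact ⟨h2, h1⟩
        · rintro ⟨h1, h2⟩; exact ⟨h2, h1, h2.trans htb.le⟩
      rw [hs1, hs2]
      rw [lint_eq hσ.2 hm₁ (ae_restrict_of_ae_restrict_of_subset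
          (Set.Icc_subset_Icc hσ.1 le_rfl) hnn₁)
          (fun x hx => hbd₁ x ⟨hσ.1.trans hx.1, hx.2⟩),
        lint_eq ht hm₂ (ae_restrict_of_ae_restrict_of_subset
          (Set.Icc_subset_Icc le_rfl htb.le) hnn₂)
          (fun x hx => hbd₂ x ⟨hx.1, hx.2.trans htb.le⟩)]
      congr 1
      have e1 : (∫ x in a..σ, ψ₁ x) + ∫ x in σ..a', ψ₁ x = ∫ x in a..a', ψ₁ x :=
        integral_add_adjacent_intervals (hii₁ a σ le_rfl hσ.1 hσ.2) (hii₁ σ a' hσ.1 hσ.2 le_rfl)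
      have e2 : (∫ x in b'..t, ψ₂ x) + ∫ x in t..b, ψ₂ x = ∫ x in b'..b, ψ₂ x :=
        integral_add_adjacent_intervals (hii₂ b' t le_rfl ht htb.le) (hii₂ t b ht htb.le le_rfl)
      have e3 : (∫ x in a..σ, ψ₁ x) = ∫ x in t..b, ψ₂ x := by
        have := hralt σ hσ; rw [hrσ] at this; exact this
      have e4 : (∫ x in a..a', ψ₁ x) = ∫ x in b'..b, ψ₂ x := by
        have := hralt a' (Set.right_mem_Icc.2 haa'); rw [hra'] at this; exact this
      linarith
    · have hs1 : r ⁻¹' (Set.Iic t) ∩ Set.Icc a a' = Set.Icc a a' := by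
        apply Set.inter_eq_self_of_subset_right
        intro s hs
        simp only [Set.mem_preimage, Set.mem_Iic]
        exact (hrmap hs).2.trans htb
      have hs2 : Set.Iic t ∩ Set.Icc b' b = Set.Icc b' b := by
        apply Set.inter_eq_self_of_subset_right
        intro s hs
        exact hs.2.trans htb
      rw [hs1, hs2]
      rw [lint_eq haa' hm₁ hnn₁ hbd₁, lint_eq hb'b hm₂ hnn₂ hbd₂]
      congr 1
      have := hralt a' (Set.right_mem_Icc.2 haa'); rw [hra'] at this; exact this
  -- conclude
  have hh' : AEStronglyMeasurable h (Measure.map r μ) := by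
    rw [hmap, hν]
    exact (hhm.mono_ac (withDensity_absolutelyContinuous _ _)).aestronglyMeasurable
  calc ∫ t in b'..b, ψ₂ t * h t
      = ∫ t in Set.Icc b' b, ψ₂ t * h t := by
        rw [intervalIntegral.integral_of_le hb'b, ← MeasureTheory.integral_Icc_eq_integral_Ioc]
    _ = ∫ t, ((ψ₂ t).toNNReal : ℝ≥0) • h t ∂(volume.restrict (Set.Icc b' b)) := by
        apply MeasureTheory.integral_congr_ae
        filter_upwards [hnn₂] with t htnn
        rw [NNReal.smul_def, Real.coe_toNNReal _ htnn, smul_eq_mul]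
    _ = ∫ t, h t ∂ν := by
        rw [hν, integral_withDensity_eq_integral_smul hm₂.real_toNNReal]
    _ = ∫ t, h t ∂(Measure.map r μ) := by rw [hmap]
    _ = ∫ s, h (r s) ∂μ := integral_map hrm.aemeasurable hh'
    _ = ∫ s, ((ψ₁ s).toNNReal : ℝ≥0) • h (r s) ∂(volume.restrict (Set.Icc a a')) := by
        rw [hμ, integral_withDensity_eq_integral_smul hm₁.real_toNNReal]
    _ = ∫ s in Set.Icc a a', ψ₁ s * h (r s) := by
        apply MeasureTheory.integral_congr_ae
        filter_upwards [hnn₁] with s hsnn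
        rw [NNReal.smul_def, Real.coe_toNNReal _ hsnn, smul_eq_mul]
    _ = ∫ s in a..a', ψ₁ s * h (r s) := by
        rw [intervalIntegral.integral_of_le haa', ← MeasureTheory.integral_Icc_eq_integral_Ioc]


lemma construction
    {a a' b' b : ℝ} (haa' : a ≤ a') (ha'b' : a' ≤ b') (hb'b : b' ≤ b)
    {r τ : ℝ → ℝ} (hranti : Antitone r)
    (hrmap : ∀ s ∈ Set.Icc a a', r s ∈ Set.Icc b' b)
    (hrsa : StrictAntiOn r (Set.Icc a a'))
    (hra' : r a' = b')
    (hτmem : ∀ t ∈ Set.Icc b' b, τ t ∈ Set.Icc a a')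
    (hrτ : ∀ t ∈ Set.Icc b' b, r (τ t) = t)
    {w : ℝ → ℝ} (hwc : Continuous w) (hwa : Antitone w) (hwnn : ∀ x, 0 ≤ w x) :
    ∃ G : ℝ → ℝ, Monotone G ∧
      (∀ x ∈ Set.Icc a b, ∀ y ∈ Set.Icc a b, x ≤ y →
        G y - G x ≤ ∫ v in (0:ℝ)..(y - x), w v) ∧
      (∀ s ∈ Set.Icc a a', G (r s) - G s = ∫ v in (0:ℝ)..(r s - s), w v) := by
  have hab : a ≤ b := haa'.trans (ha'b'.trans hb'b)
  set W : ℝ → ℝ := fun T => ∫ v in (0:ℝ)..T, w v with hWdef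
  set d : ℝ → ℝ := fun u => r u - u with hddef
  set g : ℝ → ℝ := fun x => ∫ u in a..x, w (d u) with hgdef
  set Gp : ℝ → ℝ := fun z =>
    if z ≤ a' then g z
    else if z ≤ b' then g a' + (W (b' - a') - W (b' - z))
    else g (τ z) + W (z - τ z) with hGpdef
  set G : ℝ → ℝ := fun z => Gp (max a (min z b)) with hGdef
  -- basic facts
  have hwii : ∀ p q : ℝ, IntervalIntegrable w volume p q := fun p q =>
    hwc.intervalIntegrable p q
  have hdP2 : ∀ u ∈ Set.Icc a a', b' - u ≤ d u := by
    intro u hu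
    have := (hrmap u hu).1
    simp only [hddef]; linarith
  have hdnn : ∀ u ∈ Set.Icc a a', 0 ≤ d u := by
    intro u hu
    have h1 := hdP2 u hu
    have := hu.2
    have := ha'b'
    linarith
  have hwdii : ∀ x y, a ≤ x → x ≤ y → y ≤ a' →
      IntervalIntegrable (fun u => w (d u)) volume x y := by
    intro x y hx hxy hy
    refine ii_of_bdd (C := w 0) hxy ?_ ?_
    · exact ((hwc.measurable.comp ((hranti.measurable).sub measurable_id)).aemeasurable).restrict
    · intro u hu
      have hu' : u ∈ Set.Icc a a' := ⟨hx.trans hu.1.le, hu.2.trans hy⟩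
      rw [abs_of_nonneg (hwnn _)]
      exact hwa (hdnn u hu')
  have hW0 : W 0 = 0 := integral_same
  have hWd : ∀ p q : ℝ, W q - W p = ∫ v in p..q, w v := by
    intro p q
    have := integral_add_adjacent_intervals (hwii 0 p) (hwii p q)
    simp only [hWdef]; linarith
  have hWmono : ∀ p q : ℝ, p ≤ q → W p ≤ W q := by
    intro p q hpq
    have h1 := hWd p q
    have h2 : 0 ≤ ∫ v in p..q, w v := intervalIntegral.integral_nonneg hpq (fun u _ => hwnn u)
    linarith
  have hWnn : ∀ p : ℝ, 0 ≤ p → 0 ≤ W p := fun p hp => hW0 ▸ hWmono 0 p hp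
  have hshiftW : ∀ u v δ : ℝ, u ≤ v → 0 ≤ δ → W (v + δ) - W (u + δ) ≤ W v - W u := by
    intro u v δ huv hδ
    rw [hWd u v, hWd (u + δ) (v + δ), ← intervalIntegral.integral_comp_add_right (fun t => w t) δ]
    apply intervalIntegral.integral_mono_on huv
      ((hwc.comp (continuous_id.add continuous_const)).intervalIntegrable _ _) (hwii u v)
    intro t _
    exact hwa (le_add_of_nonneg_right hδ)
  have hgd : ∀ x y, a ≤ x → x ≤ y → y ≤ a' → g y - g x = ∫ u in x..y, w (d u) := by
    intro x y hx hxy hy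
    have := integral_add_adjacent_intervals (hwdii a x le_rfl hx (hxy.trans hy)) (hwdii x y hx hxy hy)
    simp only [hgdef]; linarith
  -- compare-up and compare-low
  have CU : ∀ x y c : ℝ, a ≤ x → x ≤ y → y ≤ a' → (∀ u ∈ Set.Icc x y, c - u ≤ d u) →
      (∫ u in x..y, w (d u)) ≤ W (c - x) - W (c - y) := by
    intro x y c hx hxy hy hcomp
    have h1 : (∫ u in x..y, w (d u)) ≤ ∫ u in x..y, w (c - u) := by
      apply intervalIntegral.integral_mono_on hxy (hwdii x y hx hxy hy)
        ((hwc.comp (continuous_const.sub continuous_id)).intervalIntegrable _ _)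
      intro u hu
      exact hwa (hcomp u hu)
    have h2 : (∫ u in x..y, w (c - u)) = ∫ v in (c - y)..(c - x), w v :=
      intervalIntegral.integral_comp_sub_left (fun v => w v) c
    rw [hWd (c - y) (c - x)] at *
    linarith
  have CL : ∀ x y c : ℝ, a ≤ x → x ≤ y → y ≤ a' → (∀ u ∈ Set.Icc x y, d u ≤ c - u) →
      W (c - x) - W (c - y) ≤ ∫ u in x..y, w (d u) := by
    intro x y c hx hxy hy hcomp
    have h1 : (∫ u in x..y, w (c - u)) ≤ ∫ u in x..y, w (d u) := by
      apply intervalIntegral.integral_mono_on hxy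
        ((hwc.comp (continuous_const.sub continuous_id)).intervalIntegrable _ _)
        (hwdii x y hx hxy hy)
      intro u hu
      exact hwa (hcomp u hu)
    have h2 : (∫ u in x..y, w (c - u)) = ∫ v in (c - y)..(c - x), w v :=
      intervalIntegral.integral_comp_sub_left (fun v => w v) c
    rw [hWd (c - y) (c - x)] at *
    linarith
  -- τ inverse fact
  have hτr : ∀ s ∈ Set.Icc a a', τ (r s) = s := by
    intro s hs
    have h1 := hτmem _ (hrmap s hs)
    have h2 := hrτ _ (hrmap s hs)
    exact hrsa.injOn h1 hs h2
  -- clamp facts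
  have hclamp : ∀ z ∈ Set.Icc a b, max a (min z b) = z := by
    intro z hz
    rw [min_eq_left hz.2, max_eq_right hz.1]
  -- evaluation lemmas
  have hGl : ∀ z ∈ Set.Icc a a', G z = g z := by
    intro z hz
    have h1 : z ∈ Set.Icc a b := ⟨hz.1, hz.2.trans (ha'b'.trans hb'b)⟩
    simp only [hGdef]
    rw [hclamp z h1]
    simp only [hGpdef]
    rw [if_pos hz.2]
  have hGm : ∀ z ∈ Set.Icc a' b', G z = g a' + (W (b' - a') - W (b' - z)) := by
    intro z hz
    have h1 : z ∈ Set.Icc a b := ⟨haa'.trans hz.1, hz.2.trans hb'b⟩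
    simp only [hGdef]
    rw [hclamp z h1]
    simp only [hGpdef]
    by_cases h2 : z ≤ a'
    · have hza : z = a' := le_antisymm h2 hz.1
      rw [if_pos h2, hza, sub_self, add_zero]
    · rw [if_neg h2, if_pos hz.2]
  have hGr : ∀ z ∈ Set.Icc b' b, G z = g (τ z) + W (z - τ z) := by
    intro z hz
    have h1 : z ∈ Set.Icc a b := ⟨(haa'.trans ha'b').trans hz.1, hz.2⟩
    simp only [hGdef]
    rw [hclamp z h1]
    simp only [hGpdef]
    by_cases h2 : z ≤ a'
    · have hza : z = a' := le_antisymm h2 (ha'b'.trans hz.1)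
      have hzb : z = b' := le_antisymm (h2.trans ha'b') hz.1
      have hτz : τ z = a' := by
        rw [hzb, ← hra']
        exact hτr a' (Set.right_mem_Icc.2 haa')
      rw [if_pos h2, hτz, hza, sub_self, hW0, add_zero]
    · by_cases h3 : z ≤ b'
      · have hzb : z = b' := le_antisymm h3 hz.1
        have hτz : τ z = a' := by
          rw [hzb, ← hra']
          exact hτr a' (Set.right_mem_Icc.2 haa')
        rw [if_neg h2, if_pos h3, hτz, hzb, sub_self, hW0, sub_zero]
      · rw [if_neg h2, if_neg h3]
  -- the key bounds
  have key : ∀ x ∈ Set.Icc a b, ∀ y ∈ Set.Icc a b, x ≤ y →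
      0 ≤ G y - G x ∧ G y - G x ≤ W (y - x) := by
    intro x hx y hy hxy
    by_cases hy1 : y ≤ a'
    · -- case 1 : both in [a, a']
      have hx' : x ∈ Set.Icc a a' := ⟨hx.1, hxy.trans hy1⟩
      have hy' : y ∈ Set.Icc a a' := ⟨hx.1.trans hxy, hy1⟩
      rw [hGl x hx', hGl y hy', hgd x y hx.1 hxy hy1]
      constructor
      · exact intervalIntegral.integral_nonneg hxy (fun u _ => hwnn _)
      · have h1 : (∫ u in x..y, w (d u)) ≤ W (y - x) - W (y - y) := by
          apply CU x y y hx.1 hxy hy1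
          intro u hu
          have hu' : u ∈ Set.Icc a a' := ⟨hx.1.trans hu.1, hu.2.trans hy1⟩
          have := hdP2 u hu'
          have : y - u ≤ b' - u := by linarith [hy1.trans ha'b']
          linarith [hdP2 u hu']
        rw [sub_self, hW0] at h1
        linarith
    · by_cases hy2 : y ≤ b'
      · have hy' : y ∈ Set.Icc a' b' := ⟨le_of_not_ge hy1, hy2⟩
        by_cases hx1 : x ≤ a'
        · -- case 4 : x ∈ [a,a'], y ∈ [a',b']
          have hx' : x ∈ Set.Icc a a' := ⟨hx.1, hx1⟩
          rw [hGl x hx', hGm y hy']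
          have d1 : g a' - g x = ∫ u in x..a', w (d u) := hgd x a' hx.1 hx1 le_rfl
          have d2 : (∫ u in x..a', w (d u)) ≤ W (b' - x) - W (b' - a') := by
            apply CU x a' b' hx.1 hx1 le_rfl
            intro u hu
            exact hdP2 u ⟨hx.1.trans hu.1, hu.2⟩
          have d3 : 0 ≤ ∫ u in x..a', w (d u) :=
            intervalIntegral.integral_nonneg hx1 (fun u _ => hwnn _)
          have d4 : W (b' - y) ≤ W (b' - a') := hWmono _ _ (by linarith [hy'.1])
          have d5 : W (b' - x) - W (b' - y) ≤ W (y - x) - W 0 := by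
            have := hshiftW 0 (y - x) (b' - y) (by linarith) (by linarith [hy2])
            have e1 : y - x + (b' - y) = b' - x := by ring
            have e2 : (0:ℝ) + (b' - y) = b' - y := by ring
            rw [e1, e2] at this
            exact this
          rw [hW0] at d5
          constructor
          · linarith
          · linarith
        · -- case 2 : both in [a', b']
          have hx' : x ∈ Set.Icc a' b' := ⟨le_of_not_ge hx1, hxy.trans hy2⟩
          rw [hGm x hx', hGm y hy']
          have d4 : W (b' - y) ≤ W (b' - x) := hWmono _ _ (by linarith)
          have d5 : W (b' - x) - W (b' - y) ≤ W (y - x) - W 0 := by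
            have := hshiftW 0 (y - x) (b' - y) (by linarith) (by linarith [hy2])
            have e1 : y - x + (b' - y) = b' - x := by ring
            have e2 : (0:ℝ) + (b' - y) = b' - y := by ring
            rw [e1, e2] at this
            exact this
          rw [hW0] at d5
          constructor
          · linarith
          · linarith
      · -- y ∈ (b', b]
        have hy' : y ∈ Set.Icc b' b := ⟨le_of_not_ge hy2, hy.2⟩
        set s := τ y with hsdef
        have hs : s ∈ Set.Icc a a' := hτmem y hy'
        have hrs : r s = y := hrτ y hy'
        have hds : d s = y - s := by simp only [hddef]; rw [hrs]
        have hdsnn : 0 ≤ d s := hdnn s hs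
        rw [hGr y hy']
        by_cases hx1 : x ≤ a'
        · -- case 5 : x ∈ [a,a']
          have hx' : x ∈ Set.Icc a a' := ⟨hx.1, hx1⟩
          rw [hGl x hx']
          rcases le_total x s with hxs | hsx
          · -- 5a
            have d1 : g (τ y) - g x = ∫ u in x..s, w (d u) := by
              rw [← hsdef]; exact hgd x s hx.1 hxs hs.2
            have d2 : (∫ u in x..s, w (d u)) ≤ W (r s - x) - W (r s - s) := by
              apply CU x s (r s) hx.1 hxs hs.2
              intro u hu
              have : r s ≤ r u := hranti hu.2
              simp only [hddef]; linarith
            have d3 : 0 ≤ ∫ u in x..s, w (d u) :=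
              intervalIntegral.integral_nonneg hxs (fun u _ => hwnn _)
            have e1 : r s - s = d s := by simp only [hddef]
            have e2 : r s - x = y - x := by rw [hrs]
            rw [e1, e2] at d2
            have hWds : 0 ≤ W (d s) := hWnn _ hdsnn
            constructor
            · have : g (τ y) + W (y - τ y) - g x = (∫ u in x..s, w (d u)) + W (d s) := by
                rw [← hsdef, ← d1, hds]; ring
              rw [this]; linarith
            · have : g (τ y) + W (y - τ y) - g x = (∫ u in x..s, w (d u)) + W (d s) := by
                rw [← hsdef, ← d1, hds]; ring
              rw [this]; linarith
          · -- 5b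
            have d1 : g x - g (τ y) = ∫ u in s..x, w (d u) := by
              rw [← hsdef]; exact hgd s x hs.1 hsx hx1
            have d2 : (∫ u in s..x, w (d u)) ≤ W (x - s) - W (x - x) := by
              apply CU s x x hs.1 hsx hx1
              intro u hu
              have hu' : u ∈ Set.Icc a a' := ⟨hs.1.trans hu.1, hu.2.trans hx1⟩
              have := hdP2 u hu'
              have hxb' : x ≤ b' := hx1.trans ha'b'
              linarith
            rw [sub_self, hW0, sub_zero] at d2
            have d2' : W (x - s) ≤ W (d s) := by
              apply hWmono
              have : b' ≤ r s := (hrmap s hs).1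
              have hxb' : x ≤ b' := hx1.trans ha'b'
              simp only [hddef]; linarith
            have d3 : W (r s - s) - W (r s - x) ≤ ∫ u in s..x, w (d u) := by
              apply CL s x (r s) hs.1 hsx hx1
              intro u hu
              have : r u ≤ r s := by
                rcases eq_or_lt_of_le hu.1 with he | hl
                · rw [← he]
                · exact le_of_lt (hrsa hs ⟨hs.1.trans hu.1, hu.2.trans hx1⟩ hl)
              simp only [hddef]; linarith
            have e1 : r s - s = d s := by simp only [hddef]
            have e2 : r s - x = y - x := by rw [hrs]
            rw [e1, e2] at d3
            have heq : g (τ y) + W (y - τ y) - g x = W (d s) - ∫ u in s..x, w (d u) := by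
              rw [← hsdef, ← d1, hds]; ring
            rw [heq]
            constructor
            · linarith
            · linarith
        · by_cases hx2 : x ≤ b'
          · -- case 6 : x ∈ (a', b']
            have hx' : x ∈ Set.Icc a' b' := ⟨le_of_not_ge hx1, hx2⟩
            rw [hGm x hx']
            have hsa' : s ≤ a' := hs.2
            have d1 : g a' - g (τ y) = ∫ u in s..a', w (d u) := by
              rw [← hsdef]; exact hgd s a' hs.1 hsa' le_rfl
            have d2 : (∫ u in s..a', w (d u)) ≤ W (b' - s) - W (b' - a') := by
              apply CU s a' b' hs.1 hsa' le_rfl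
              intro u hu
              exact hdP2 u ⟨hs.1.trans hu.1, hu.2⟩
            have d3 : W (r s - s) - W (r s - a') ≤ ∫ u in s..a', w (d u) := by
              apply CL s a' (r s) hs.1 hsa' le_rfl
              intro u hu
              have : r u ≤ r s := by
                rcases eq_or_lt_of_le hu.1 with he | hl
                · rw [← he]
                · exact le_of_lt (hrsa hs ⟨hs.1.trans hu.1, hu.2⟩ hl)
              simp only [hddef]; linarith
            have hb'rs : b' ≤ r s := (hrmap s hs).1
            have d4 : W (r s - a') - W (r s - x) ≤ W (b' - a') - W (b' - x) := by
              have := hshiftW (b' - x) (b' - a') (r s - b') (by linarith [hx'.1]) (by linarith)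
              have e1 : b' - a' + (r s - b') = r s - a' := by ring
              have e2 : b' - x + (r s - b') = r s - x := by ring
              rw [e1, e2] at this
              exact this
            have d5 : W (b' - s) ≤ W (d s) := by
              apply hWmono; simp only [hddef]; linarith
            have d6 : 0 ≤ W (b' - x) := hWnn _ (by linarith [hx2])
            have e1 : r s - s = d s := by simp only [hddef]
            have e2 : r s - x = y - x := by rw [hrs]
            rw [e1] at d3
            rw [e2] at d4
            have heq : g (τ y) + W (y - τ y) - (g a' + (W (b' - a') - W (b' - x)))
                = W (d s) + W (b' - x) - W (b' - a') - ∫ u in s..a', w (d u) := by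
              rw [← hsdef, ← d1, hds]; ring
            rw [heq]
            constructor
            · linarith
            · linarith
          · -- case 3 : both in (b', b]
            have hx' : x ∈ Set.Icc b' b := ⟨le_of_not_ge hx2, hx.2⟩
            set s' := τ x with hs'def
            have hs' : s' ∈ Set.Icc a a' := hτmem x hx'
            have hrs' : r s' = x := hrτ x hx'
            have hds' : d s' = x - s' := by simp only [hddef]; rw [hrs']
            rw [hGr x hx']
            have hss' : s ≤ s' := by
              by_contra hcon
              push_neg at hcon
              have := hrsa hs' hs hcon
              rw [hrs, hrs'] at this
              linarith
            have d1 : g (τ x) - g (τ y) = ∫ u in s..s', w (d u) := by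
              rw [← hsdef, ← hs'def]; exact hgd s s' hs.1 hss' hs'.2
            have d2 : (∫ u in s..s', w (d u)) ≤ W (r s' - s) - W (r s' - s') := by
              apply CU s s' (r s') hs.1 hss' hs'.2
              intro u hu
              have : r s' ≤ r u := hranti hu.2
              simp only [hddef]; linarith
            have d3 : W (r s - s) - W (r s - s') ≤ ∫ u in s..s', w (d u) := by
              apply CL s s' (r s) hs.1 hss' hs'.2
              intro u hu
              have : r u ≤ r s := hranti hu.1
              simp only [hddef]; linarith
            have hds'nn : 0 ≤ d s' := hdnn s' hs'
            have d4 : W (r s - s') - W (d s') ≤ W (y - x) - W 0 := by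
              have := hshiftW 0 (y - x) (d s') (by linarith) hds'nn
              have e1 : y - x + d s' = r s - s' := by
                rw [hds', ← hrs]; ring
              have e2 : (0:ℝ) + d s' = d s' := by ring
              rw [e1, e2] at this
              exact this
            have d5 : W (r s' - s) ≤ W (d s) := by
              apply hWmono
              have : r s' ≤ r s := by
                rcases eq_or_lt_of_le hss' with he | hl
                · rw [he]
                · exact le_of_lt (hrsa hs hs' hl)
              simp only [hddef]; linarith
            have e1 : r s - s = d s := by simp only [hddef]
            have e2 : r s' - s' = d s' := by simp only [hddef]
            rw [e1] at d3
            rw [e2] at d2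
            rw [hW0] at d4
            have heq : g (τ y) + W (y - τ y) - (g (τ x) + W (x - τ x))
                = W (d s) - W (d s') - ∫ u in s..s', w (d u) := by
              rw [← hsdef, ← hs'def, ← d1, hds, hds']; ring
            rw [heq]
            constructor
            · linarith
            · linarith
  -- assemble
  refine ⟨G, ?_, ?_, ?_⟩
  · -- monotone
    intro z z' hzz'
    have hm1 : max a (min z b) ∈ Set.Icc a b := by
      constructor
      · exact le_max_left _ _
      · exact max_le (hab) (min_le_right _ _)
    have hm2 : max a (min z' b) ∈ Set.Icc a b := by
      constructor
      · exact le_max_left _ _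
      · exact max_le (hab) (min_le_right _ _)
    have hle : max a (min z b) ≤ max a (min z' b) :=
      max_le_max le_rfl (min_le_min hzz' le_rfl)
    have hGG : ∀ u, G u = G (max a (min u b)) := by
      intro u
      simp only [hGdef]
      rw [hclamp (max a (min u b)) (by
        constructor
        · exact le_max_left _ _
        · exact max_le hab (min_le_right _ _))]
    have := (key _ hm1 _ hm2 hle).1
    rw [hGG z, hGG z']
    linarith
  · -- upper bound
    intro x hx y hy hxy
    exact (key x hx y hy hxy).2
  · -- equality
    intro s hs
    have hrs : r s ∈ Set.Icc b' b := hrmap s hs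
    rw [hGr (r s) hrs, hGl s hs, hτr s hs]
    simp only [hWdef]
    ring

lemma holder_contOn {ω f : ℝ → ℝ} {a b : ℝ} (hω0 : ω 0 = 0)
    (hωc : ContinuousOn ω (Set.Ici 0))
    (hf : ∀ s ∈ Set.Icc a b, ∀ t ∈ Set.Icc a b, ‖f t - f s‖ ≤ ω |t - s|) :
    ContinuousOn f (Set.Icc a b) := by
  intro x hx
  have h1 : ContinuousWithinAt ω (Set.Ici 0) 0 := hωc 0 (by simp)
  rw [Metric.continuousWithinAt_iff] at h1 ⊢
  intro ε hε
  obtain ⟨δ, hδ, hδ'⟩ := h1 ε hε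
  refine ⟨δ, hδ, fun y hy hyx => ?_⟩
  have h2 := hf x hx y hy
  have h3 : |y - x| ∈ Set.Ici (0:ℝ) := Set.mem_Ici.2 (abs_nonneg _)
  have h4 : dist |y - x| 0 < δ := by
    rw [Real.dist_eq, sub_zero, abs_abs]
    rwa [Real.dist_eq] at hyx
  have h5 := hδ' h3 h4
  rw [Real.dist_eq, hω0, sub_zero] at h5
  rw [Real.dist_eq]
  have h6 : |f y - f x| ≤ ω |y - x| := by simpa [Real.norm_eq_abs] using h2
  have h7 : ω |y - x| ≤ |ω (|y - x|)| := le_abs_self _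
  linarith

lemma Wbounds {ω : ℝ → ℝ} (hω0 : ω 0 = 0) (hωc : ContinuousOn ω (Set.Ici 0))
    (hωm : MonotoneOn ω (Set.Ici 0))
    (hωsub : ∀ s t : ℝ, 0 ≤ s → 0 ≤ t → ω (s + t) ≤ ω s + ω t)
    {ε : ℝ} (hε : 0 < ε) {T : ℝ} (hT : 0 ≤ T) :
    ω T - ω ε ≤ (∫ v in (0:ℝ)..T, (ω (max v 0 + ε) - ω (max v 0)) / ε)
    ∧ (∫ v in (0:ℝ)..T, (ω (max v 0 + ε) - ω (max v 0)) / ε) ≤ ω T := by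
  set ωb : ℝ → ℝ := fun x => ω (max x 0) with hωb
  have hωbc : Continuous ωb :=
    hωc.comp_continuous (continuous_id.max continuous_const) (fun x => Set.mem_Ici.2 (le_max_right _ _))
  have hωbeq : ∀ x, 0 ≤ x → ωb x = ω x := by
    intro x hx; simp only [hωb]; rw [max_eq_left hx]
  have hωbm : Monotone ωb := by
    intro x y hxy
    exact hωm (Set.mem_Ici.2 (le_max_right _ _)) (Set.mem_Ici.2 (le_max_right _ _)) (max_le_max hxy le_rfl)
  -- rewrite integrand
  have e0 : (∫ v in (0:ℝ)..T, (ω (max v 0 + ε) - ω (max v 0)) / ε)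
      = (∫ v in (0:ℝ)..T, (ωb (v + ε) - ωb v)) / ε := by
    rw [← intervalIntegral.integral_div]
    apply intervalIntegral.integral_congr
    intro v hv
    rw [Set.uIcc_of_le hT] at hv
    have hv0 : 0 ≤ v := hv.1
    simp only [hωb]
    rw [max_eq_left hv0, max_eq_left (by linarith : (0:ℝ) ≤ v + ε)]
  have hii : ∀ c p q : ℝ, IntervalIntegrable (fun v => ωb (v + c)) volume p q :=
    fun c p q => (hωbc.comp (continuous_id.add continuous_const)).intervalIntegrable p q
  have hii0 : ∀ p q : ℝ, IntervalIntegrable ωb volume p q := fun p q => hωbc.intervalIntegrable p q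
  have e1 : (∫ v in (0:ℝ)..T, (ωb (v + ε) - ωb v))
      = (∫ v in (0:ℝ)..T, ωb (v + ε)) - ∫ v in (0:ℝ)..T, ωb v :=
    intervalIntegral.integral_sub (hii ε 0 T) (hii0 0 T)
  have e2 : (∫ v in (0:ℝ)..T, ωb (v + ε)) = ∫ v in ε..(T + ε), ωb v := by
    have := intervalIntegral.integral_comp_add_right (a := (0:ℝ)) (b := T) (fun v => ωb v) ε
    rw [this, zero_add]
  -- ∫_ε^{T+ε} - ∫_0^T = ∫_T^{T+ε} - ∫_0^ε
  have e3 : (∫ v in ε..(T + ε), ωb v) - (∫ v in (0:ℝ)..T, ωb v)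
      = (∫ v in T..(T + ε), ωb v) - ∫ v in (0:ℝ)..ε, ωb v := by
    have a1 : (∫ v in (0:ℝ)..ε, ωb v) + (∫ v in ε..(T + ε), ωb v) = ∫ v in (0:ℝ)..(T + ε), ωb v :=
      intervalIntegral.integral_add_adjacent_intervals (hii0 0 ε) (hii0 ε (T + ε))
    have a2 : (∫ v in (0:ℝ)..T, ωb v) + (∫ v in T..(T + ε), ωb v) = ∫ v in (0:ℝ)..(T + ε), ωb v :=
      intervalIntegral.integral_add_adjacent_intervals (hii0 0 T) (hii0 T (T + ε))
    linarith
  have e4 : (∫ v in T..(T + ε), ωb v) = ∫ δ in (0:ℝ)..ε, ωb (T + δ) := by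
    have := intervalIntegral.integral_comp_add_left (a := (0:ℝ)) (b := ε) (fun v => ωb v) T
    rw [this, add_zero]
  have hiiT : IntervalIntegrable (fun δ => ωb (T + δ)) volume 0 ε :=
    (hωbc.comp (continuous_const.add continuous_id)).intervalIntegrable _ _
  have e5 : (∫ δ in (0:ℝ)..ε, (ωb (T + δ) - ωb δ))
      = (∫ v in T..(T + ε), ωb v) - ∫ v in (0:ℝ)..ε, ωb v := by
    rw [intervalIntegral.integral_sub hiiT (hii0 0 ε), e4]
  have hb1 : (∫ δ in (0:ℝ)..ε, (ωb (T + δ) - ωb δ)) ≤ ∫ δ in (0:ℝ)..ε, ω T := by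
    apply intervalIntegral.integral_mono_on hε.le (hiiT.sub (hii0 0 ε))
      (intervalIntegrable_const)
    intro δ hδ
    have hδ0 : (0:ℝ) ≤ δ := hδ.1
    rw [hωbeq _ (by linarith), hωbeq _ hδ0]
    have := hωsub T δ hT hδ0
    linarith
  have hb2 : (∫ _ in (0:ℝ)..ε, (ω T - ω ε)) ≤ ∫ δ in (0:ℝ)..ε, (ωb (T + δ) - ωb δ) := by
    apply intervalIntegral.integral_mono_on hε.le intervalIntegrable_const
      (hiiT.sub (hii0 0 ε))
    intro δ hδ
    have hδ0 : (0:ℝ) ≤ δ := hδ.1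
    rw [hωbeq _ (by linarith), hωbeq _ hδ0]
    have h1 : ω T ≤ ω (T + δ) := hωm hT (by simp only [Set.mem_Ici]; linarith) (by linarith)
    have h2 : ω δ ≤ ω ε := hωm hδ0 hε.le hδ.2
    linarith
  rw [intervalIntegral.integral_const, smul_eq_mul, sub_zero] at hb1 hb2
  have etot : (∫ v in (0:ℝ)..T, (ω (max v 0 + ε) - ω (max v 0)) / ε)
      = (∫ δ in (0:ℝ)..ε, (ωb (T + δ) - ωb δ)) / ε := by
    rw [e0, e1, e2, e3, ← e5]
  rw [etot]
  constructor
  · rw [le_div_iff₀ hε]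
    nlinarith [hb2]
  · rw [div_le_iff₀ hε]
    nlinarith [hb1]


end KSAux

/-- Korneichuk–Stechkin lemma, sharpness for concave moduli of continuity (real-valued case):
the supremum over `f ∈ H^ω([a,b],ℝ)` of
`|∫_a^{a'} ψ₁ f − ∫_{b'}^{b} ψ₂ f|` equals `∫_a^{a'} ψ₁(s) ω(ρ(s) − s) ds`. -/
theorem korneichuk_stechkin_sharp
    (a a' b' b : ℝ) (haa' : a < a') (ha'b' : a' ≤ b') (hb'b : b' < b)
    (ψ₁ ψ₂ : ℝ → ℝ) (hm₁ : Measurable ψ₁) (hm₂ : Measurable ψ₂)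
    (hbd₁ : ∃ C, ∀ t ∈ Set.Icc a a', |ψ₁ t| ≤ C)
    (hbd₂ : ∃ C, ∀ t ∈ Set.Icc b' b, |ψ₂ t| ≤ C)
    (hpos₁ : ∀ᵐ t ∂(volume.restrict (Set.Icc a a')), 0 < ψ₁ t)
    (hpos₂ : ∀ᵐ t ∂(volume.restrict (Set.Icc b' b)), 0 < ψ₂ t)
    (hint : ∫ t in a..a', ψ₁ t = ∫ t in b'..b, ψ₂ t)
    (ρ : ℝ → ℝ) (hρmap : Set.MapsTo ρ (Set.Icc a a') (Set.Icc b' b))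
    (hρ : ∀ s ∈ Set.Icc a a', ∫ t in a..s, ψ₁ t = ∫ t in ρ s..b, ψ₂ t)
    (ω : ℝ → ℝ) (hω : IsModulus ω) (hconc : ConcaveOn ℝ (Set.Ici 0) ω) :
    sSup {v : ℝ | ∃ f : ℝ → ℝ, HHolder ω a b f ∧
        v = |(∫ t in a..a', ψ₁ t * f t) - ∫ t in b'..b, ψ₂ t * f t|} =
      ∫ s in a..a', ψ₁ s * ω (ρ s - s) := by
  classical
  obtain ⟨hω0, hωc, hωm, hωsub⟩ := hω
  obtain ⟨C₁, hbd₁⟩ := hbd₁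
  obtain ⟨C₂, hbd₂⟩ := hbd₂
  have hab : a ≤ b := haa'.le.trans (ha'b'.trans hb'b.le)
  have hab' : a ≤ b' := haa'.le.trans ha'b'
  have ha'b : a' ≤ b := ha'b'.trans hb'b.le
  have hnn₁ : ∀ᵐ t ∂(volume.restrict (Set.Icc a a')), 0 ≤ ψ₁ t := hpos₁.mono fun t ht => ht.le
  have hnn₂ : ∀ᵐ t ∂(volume.restrict (Set.Icc b' b)), 0 ≤ ψ₂ t := hpos₂.mono fun t ht => ht.le
  have hωnn : ∀ t : ℝ, 0 ≤ t → 0 ≤ ω t := by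
    intro t ht
    have := hωm (Set.mem_Ici.2 le_rfl) (Set.mem_Ici.2 ht) ht
    rwa [hω0] at this
  -- clamp to [a,a'] and the modified ρ
  set cl : ℝ → ℝ := fun s => max a (min s a') with hcldef
  have hclmem : ∀ s, cl s ∈ Set.Icc a a' :=
    fun s => ⟨le_max_left _ _, max_le haa'.le (min_le_right _ _)⟩
  have hcleq : ∀ s ∈ Set.Icc a a', cl s = s := by
    intro s hs; simp only [hcldef]; rw [min_eq_left hs.2, max_eq_right hs.1]
  have hclmono : Monotone cl := fun u v huv => max_le_max le_rfl (min_le_min huv le_rfl)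
  set r : ℝ → ℝ := fun s => ρ (cl s) with hrdef
  have hreq : ∀ s ∈ Set.Icc a a', r s = ρ s := by
    intro s hs; simp only [hrdef]; rw [hcleq s hs]
  have hrmap : ∀ s ∈ Set.Icc a a', r s ∈ Set.Icc b' b := by
    intro s hs; rw [hreq s hs]; exact hρmap hs
  have hrmap' : Set.MapsTo r (Set.Icc a a') (Set.Icc b' b) := fun s hs => hrmap s hs
  -- integrability of ψ's
  have hii₁ : ∀ x y, a ≤ x → x ≤ y → y ≤ a' → IntervalIntegrable ψ₁ volume x y := by
    intro x y hx hxy hy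
    exact KSAux.ii_of_bdd hxy (hm₁.aemeasurable.restrict)
      (fun t ht => hbd₁ t ⟨hx.trans ht.1.le, ht.2.trans hy⟩)
  have hii₂ : ∀ x y, b' ≤ x → x ≤ y → y ≤ b → IntervalIntegrable ψ₂ volume x y := by
    intro x y hx hxy hy
    exact KSAux.ii_of_bdd hxy (hm₂.aemeasurable.restrict)
      (fun t ht => hbd₂ t ⟨hx.trans ht.1.le, ht.2.trans hy⟩)
  -- strict monotonicity of the primitives
  have hΦlt : ∀ x y, x ∈ Set.Icc a a' → y ∈ Set.Icc a a' → x < y →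
      (∫ t in a..x, ψ₁ t) < ∫ t in a..y, ψ₁ t := by
    intro x y hx hy hxy
    have hp := KSAux.primitive_pos hpos₁ (hii₁ x y hx.1 hxy.le hy.2) hxy hx.1 hy.2
    have hadd := intervalIntegral.integral_add_adjacent_intervals
      (hii₁ a x le_rfl hx.1 hx.2) (hii₁ x y hx.1 hxy.le hy.2)
    linarith
  have hΨlt : ∀ x y, x ∈ Set.Icc b' b → y ∈ Set.Icc b' b → x < y →
      (∫ t in y..b, ψ₂ t) < ∫ t in x..b, ψ₂ t := by
    intro x y hx hy hxy
    have hp := KSAux.primitive_pos hpos₂ (hii₂ x y hx.1 hxy.le hy.2) hxy hx.1 hy.2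
    have hadd := intervalIntegral.integral_add_adjacent_intervals
      (hii₂ x y hx.1 hxy.le hy.2) (hii₂ y b hy.1 hy.2 le_rfl)
    linarith
  have hralt : ∀ s ∈ Set.Icc a a', (∫ t in a..s, ψ₁ t) = ∫ t in r s..b, ψ₂ t := by
    intro s hs; rw [hreq s hs]; exact hρ s hs
  have hrsa : StrictAntiOn r (Set.Icc a a') := by
    intro x hx y hy hxy
    have e1 := hralt x hx
    have e2 := hralt y hy
    have h3 := hΦlt x y hx hy hxy
    rcases lt_or_ge (r y) (r x) with h | h
    · exact h
    rcases eq_or_lt_of_le h with he | hl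
    · exfalso; rw [← he, ← e1] at e2; rw [e2] at h3; exact lt_irrefl _ h3
    · exfalso
      have := hΨlt (r x) (r y) (hrmap x hx) (hrmap y hy) hl
      rw [← e1, ← e2] at this
      linarith
  have hranti : Antitone r := by
    intro u v huv
    have h3 : cl u ≤ cl v := hclmono huv
    have h5 : ∀ z, r z = r (cl z) := by
      intro z; simp only [hrdef]; rw [hcleq (cl z) (hclmem z)]
    rw [h5 u, h5 v]
    rcases eq_or_lt_of_le h3 with he | hl
    · rw [he]
    · exact (hrsa (hclmem u) (hclmem v) hl).le
  -- continuity of the primitive and surjectivity of r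
  have hΦc : ContinuousOn (fun x => ∫ t in a..x, ψ₁ t) (Set.Icc a a') := by
    have h1 : IntegrableOn ψ₁ (Set.uIcc a a') volume := by
      rw [Set.uIcc_of_le haa'.le, integrableOn_Icc_iff_integrableOn_Ioc]
      have h2 := (hii₁ a a' le_rfl haa'.le le_rfl)
      rwa [intervalIntegrable_iff_integrableOn_Ioc_of_le haa'.le] at h2
    have := intervalIntegral.continuousOn_primitive_interval h1
    rwa [Set.uIcc_of_le haa'.le] at this
  have hrsur : ∀ t ∈ Set.Icc b' b, ∃ s ∈ Set.Icc a a', r s = t := by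
    intro t ht
    have hadd := intervalIntegral.integral_add_adjacent_intervals
      (hii₂ b' t le_rfl ht.1 ht.2) (hii₂ t b ht.1 ht.2 le_rfl)
    have h0 : 0 ≤ ∫ u in b'..t, ψ₂ u := by
      apply intervalIntegral.integral_nonneg_of_ae_restrict ht.1
      exact ae_restrict_of_ae_restrict_of_subset (Set.Icc_subset_Icc le_rfl ht.2) hnn₂
    have h1 : 0 ≤ ∫ u in t..b, ψ₂ u := by
      apply intervalIntegral.integral_nonneg_of_ae_restrict ht.2
      exact ae_restrict_of_ae_restrict_of_subset (Set.Icc_subset_Icc ht.1 le_rfl) hnn₂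
    have h2 : (∫ u in t..b, ψ₂ u) ≤ ∫ u in b'..b, ψ₂ u := by linarith
    have hIVT := intermediate_value_Icc haa'.le hΦc
    have hmem : (∫ u in t..b, ψ₂ u) ∈
        Set.Icc (∫ u in a..a, ψ₁ u) (∫ u in a..a', ψ₁ u) := by
      rw [intervalIntegral.integral_same, hint]
      exact ⟨h1, h2⟩
    obtain ⟨s, hsmem, hΦs⟩ := hIVT hmem
    refine ⟨s, hsmem, ?_⟩
    have e1 := hralt s hsmem
    have hΦs' : (∫ u in a..s, ψ₁ u) = ∫ u in t..b, ψ₂ u := hΦs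
    rw [hΦs'] at e1
    rcases lt_trichotomy (r s) t with h | h | h
    · exfalso; have := hΨlt (r s) t (hrmap s hsmem) ht h; linarith
    · exact h
    · exfalso; have := hΨlt t (r s) ht (hrmap s hsmem) h; linarith
  have hra' : r a' = b' := by
    obtain ⟨s₀, hs₀, hrs₀⟩ := hrsur b' ⟨le_refl _, hb'b.le⟩
    rcases eq_or_lt_of_le hs₀.2 with heq | hlt
    · rw [← heq]; exact hrs₀
    · exfalso
      have h1 : r a' < r s₀ := hrsa hs₀ (Set.right_mem_Icc.2 haa'.le) hlt
      have h2 : b' ≤ r a' := (hrmap a' (Set.right_mem_Icc.2 haa'.le)).1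
      rw [hrs₀] at h1; linarith
  -- the inverse map τ
  set τ : ℝ → ℝ := fun t => if h : ∃ s ∈ Set.Icc a a', r s = t then h.choose else a' with hτdef
  have hτspec : ∀ t ∈ Set.Icc b' b, τ t ∈ Set.Icc a a' ∧ r (τ t) = t := by
    intro t ht
    have hex := hrsur t ht
    simp only [hτdef]
    rw [dif_pos hex]
    exact hex.choose_spec
  have hτmem : ∀ t ∈ Set.Icc b' b, τ t ∈ Set.Icc a a' := fun t ht => (hτspec t ht).1
  have hrτ : ∀ t ∈ Set.Icc b' b, r (τ t) = t := fun t ht => (hτspec t ht).2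
  -- the truncated modulus
  set ωb : ℝ → ℝ := fun x => ω (max x 0) with hωbdef
  have hωbc : Continuous ωb :=
    hωc.comp_continuous (continuous_id.max continuous_const) (fun x => Set.mem_Ici.2 (le_max_right _ _))
  have hωbeq : ∀ x : ℝ, 0 ≤ x → ωb x = ω x := by
    intro x hx; simp only [hωbdef]; rw [max_eq_left hx]
  have hωbm : Monotone ωb := fun x y hxy =>
    hωm (Set.mem_Ici.2 (le_max_right _ _)) (Set.mem_Ici.2 (le_max_right _ _))
      (max_le_max hxy le_rfl)
  have hωbnn : ∀ x, 0 ≤ ωb x := fun x => hωnn _ (le_max_right _ _)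
  have hdmem : ∀ s ∈ Set.Icc a a', 0 ≤ r s - s ∧ r s - s ≤ b - a := by
    intro s hs
    have h1 := (hrmap s hs).1
    have h2 := (hrmap s hs).2
    constructor
    · linarith [hs.2, ha'b']
    · linarith [hs.1]
  have hrm : Measurable r := hranti.measurable
  -- master integrability on [a,a']
  have hmul_ii : ∀ (X : ℝ → ℝ), AEMeasurable X (volume.restrict (Set.Ioc a a')) →
      (∃ CX, ∀ t ∈ Set.Icc a a', |X t| ≤ CX) →
      IntervalIntegrable (fun t => ψ₁ t * X t) volume a a' := by
    rintro X hXm ⟨CX, hXb⟩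
    refine KSAux.ii_of_bdd (C := C₁ * CX) haa'.le ((hm₁.aemeasurable.restrict).mul hXm) ?_
    intro t ht
    have ht' : t ∈ Set.Icc a a' := Set.Ioc_subset_Icc_self ht
    rw [abs_mul]
    exact mul_le_mul (hbd₁ t ht') (hXb t ht') (abs_nonneg _)
      ((abs_nonneg _).trans (hbd₁ t ht'))
  have hi3 : IntervalIntegrable (fun t => ψ₁ t * ωb (r t - t)) volume a a' := by
    apply hmul_ii
    · exact ((hωbc.measurable).comp (hrm.sub measurable_id)).aemeasurable.restrict
    · refine ⟨ωb (b - a), fun t ht => ?_⟩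
      rw [abs_of_nonneg (hωbnn _)]
      exact hωbm (hdmem t ht).2
  -- ========== upper bound ==========
  have hupper : ∀ f : ℝ → ℝ, HHolder ω a b f →
      |(∫ t in a..a', ψ₁ t * f t) - ∫ t in b'..b, ψ₂ t * f t|
        ≤ ∫ s in a..a', ψ₁ s * ωb (r s - s) := by
    intro f hf
    set ft : ℝ → ℝ := fun z => f (max a (min z b)) with hftdef
    have hclab : ∀ z : ℝ, max a (min z b) ∈ Set.Icc a b :=
      fun z => ⟨le_max_left _ _, max_le hab (min_le_right _ _)⟩
    have hfteq : ∀ z ∈ Set.Icc a b, ft z = f z := by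
      intro z hz; simp only [hftdef]; rw [min_eq_left hz.2, max_eq_right hz.1]
    have hfc : Continuous ft := by
      apply (KSAux.holder_contOn hω0 hωc hf).comp_continuous
        (continuous_const.max (continuous_id.min continuous_const))
      exact hclab
    have hfb : ∀ z : ℝ, |ft z| ≤ |f a| + ω (b - a) := by
      intro z
      have h1 := hf a ⟨le_rfl, hab⟩ _ (hclab z)
      have h2 : |max a (min z b) - a| ≤ b - a := by
        rw [abs_of_nonneg (by linarith [(hclab z).1] : (0:ℝ) ≤ max a (min z b) - a)]
        linarith [(hclab z).2]
      have h3 : ω |max a (min z b) - a| ≤ ω (b - a) :=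
        hωm (Set.mem_Ici.2 (abs_nonneg _)) (Set.mem_Ici.2 (by linarith)) h2
      have h4 : |ft z - f a| ≤ ω (b - a) := by
        have h5 : |f (max a (min z b)) - f a| ≤ ω |max a (min z b) - a| := by
          simpa [Real.norm_eq_abs] using h1
        simp only [hftdef]
        linarith
      have h6 : |ft z| ≤ |ft z - f a| + |f a| := by
        have := abs_add_le (ft z - f a) (f a)
        simpa using this
      linarith
    have e1 : (∫ t in a..a', ψ₁ t * f t) = ∫ t in a..a', ψ₁ t * ft t := by
      apply intervalIntegral.integral_congr
      intro t ht
      rw [Set.uIcc_of_le haa'.le] at ht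
      show ψ₁ t * f t = ψ₁ t * ft t
      rw [hfteq t ⟨ht.1, ht.2.trans ha'b⟩]
    have e2 : (∫ t in b'..b, ψ₂ t * f t) = ∫ t in b'..b, ψ₂ t * ft t := by
      apply intervalIntegral.integral_congr
      intro t ht
      rw [Set.uIcc_of_le hb'b.le] at ht
      show ψ₂ t * f t = ψ₂ t * ft t
      rw [hfteq t ⟨hab'.trans ht.1, ht.2⟩]
    have e3 : (∫ t in b'..b, ψ₂ t * ft t) = ∫ s in a..a', ψ₁ s * ft (r s) :=
      KSAux.pushforward haa'.le ha'b' hb'b.le hm₁ hm₂ hbd₁ hbd₂ hnn₁ hnn₂ hranti hrmap'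
        hrsa hrsur hralt ft (hfc.measurable.aemeasurable.restrict)
    rw [e1, e2, e3]
    have hi1 : IntervalIntegrable (fun t => ψ₁ t * ft t) volume a a' :=
      hmul_ii ft (hfc.measurable.aemeasurable.restrict) ⟨_, fun t _ => hfb t⟩
    have hi2 : IntervalIntegrable (fun t => ψ₁ t * ft (r t)) volume a a' :=
      hmul_ii _ ((hfc.measurable.comp hrm).aemeasurable.restrict) ⟨_, fun t _ => hfb _⟩
    rw [← intervalIntegral.integral_sub hi1 hi2]
    rw [abs_le]
    have hae : ∀ᵐ t ∂(volume.restrict (Set.Icc a a')),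
        (ψ₁ t * ft t - ψ₁ t * ft (r t)) ≤ ψ₁ t * ωb (r t - t) ∧
        -(ψ₁ t * ωb (r t - t)) ≤ ψ₁ t * ft t - ψ₁ t * ft (r t) := by
      filter_upwards [hnn₁, MeasureTheory.ae_restrict_mem measurableSet_Icc] with t htnn htmem
      have htab : t ∈ Set.Icc a b := ⟨htmem.1, htmem.2.trans ha'b⟩
      have hrtab : r t ∈ Set.Icc a b := ⟨hab'.trans (hrmap t htmem).1, (hrmap t htmem).2⟩
      have h1 := hf t htab (r t) hrtab
      have h2 : |ft t - ft (r t)| ≤ ωb (r t - t) := by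
        rw [hfteq t htab, hfteq (r t) hrtab, hωbeq _ (hdmem t htmem).1, abs_sub_comm]
        have h3 : |r t - t| = r t - t := abs_of_nonneg (hdmem t htmem).1
        rw [← h3]
        simpa [Real.norm_eq_abs] using h1
      constructor
      · have h4 := (abs_le.1 h2).2
        calc ψ₁ t * ft t - ψ₁ t * ft (r t) = ψ₁ t * (ft t - ft (r t)) := by ring
          _ ≤ ψ₁ t * ωb (r t - t) := mul_le_mul_of_nonneg_left h4 htnn
      · have h4 := (abs_le.1 h2).1
        calc -(ψ₁ t * ωb (r t - t)) = ψ₁ t * (-(ωb (r t - t))) := by ring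
          _ ≤ ψ₁ t * (ft t - ft (r t)) := mul_le_mul_of_nonneg_left (by linarith) htnn
          _ = ψ₁ t * ft t - ψ₁ t * ft (r t) := by ring
    constructor
    · have hneg : IntervalIntegrable (fun t => -(ψ₁ t * ωb (r t - t))) volume a a' := hi3.neg
      have hmono : (∫ t in a..a', -(ψ₁ t * ωb (r t - t)))
          ≤ ∫ t in a..a', (ψ₁ t * ft t - ψ₁ t * ft (r t)) :=
        intervalIntegral.integral_mono_ae_restrict haa'.le hneg (hi1.sub hi2)
          (by filter_upwards [hae] with t ht; exact ht.2)
      rwa [intervalIntegral.integral_neg] at hmono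
    · exact intervalIntegral.integral_mono_ae_restrict haa'.le (hi1.sub hi2) hi3
        (by filter_upwards [hae] with t ht; exact ht.1)
  -- ========== lower bound ==========
  have hlow : ∀ ε : ℝ, 0 < ε →
      ∃ v ∈ {v : ℝ | ∃ f : ℝ → ℝ, HHolder ω a b f ∧
          v = |(∫ t in a..a', ψ₁ t * f t) - ∫ t in b'..b, ψ₂ t * f t|},
        (∫ s in a..a', ψ₁ s * ωb (r s - s)) - ω ε * (∫ t in a..a', ψ₁ t) ≤ v := by
    intro ε hε
    set w : ℝ → ℝ := fun x => (ω (max x 0 + ε) - ω (max x 0)) / ε with hwdef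
    have hwc : Continuous w := by
      apply Continuous.div_const
      apply Continuous.sub
      · exact hωc.comp_continuous ((continuous_id.max continuous_const).add continuous_const)
          (fun x => Set.mem_Ici.2 (add_nonneg (le_max_right _ _) hε.le))
      · exact hωc.comp_continuous (continuous_id.max continuous_const)
          (fun x => Set.mem_Ici.2 (le_max_right _ _))
    have hwa : Antitone w := by
      intro x y hxy
      have h1 := KSAux.concave_incr hconc (le_max_right x 0) (max_le_max hxy le_rfl) hε.le
      simp only [hwdef]
      exact div_le_div_of_nonneg_right h1 hε.le
    have hwnn : ∀ x, 0 ≤ w x := by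
      intro x
      apply div_nonneg _ hε.le
      have := hωm (Set.mem_Ici.2 (le_max_right x 0))
        (Set.mem_Ici.2 (add_nonneg (le_max_right x 0) hε.le))
        (le_add_of_nonneg_right hε.le)
      linarith
    obtain ⟨G, hGmono, hGbd, hGeq⟩ := KSAux.construction haa'.le ha'b' hb'b.le hranti hrmap
      hrsa hra' hτmem hrτ hwc hwa hwnn
    have hWb : ∀ T : ℝ, 0 ≤ T →
        ω T - ω ε ≤ (∫ v in (0:ℝ)..T, w v) ∧ (∫ v in (0:ℝ)..T, w v) ≤ ω T := by
      intro T hT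
      have := KSAux.Wbounds hω0 hωc hωm hωsub hε hT
      simpa only [hwdef] using this
    -- G is Hölder
    have hGhold : HHolder ω a b G := by
      intro s hs t ht
      rcases le_total s t with hst | hts
      · have hb1 := hGbd s hs t ht hst
        have hb0 : (0:ℝ) ≤ G t - G s := sub_nonneg.2 (hGmono hst)
        rw [Real.norm_eq_abs, abs_of_nonneg hb0, abs_of_nonneg (by linarith : (0:ℝ) ≤ t - s)]
        calc G t - G s ≤ ∫ v in (0:ℝ)..(t - s), w v := hb1
          _ ≤ ω (t - s) := (hWb _ (by linarith)).2
      · have hb1 := hGbd t ht s hs hts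
        have hb0 : (0:ℝ) ≤ G s - G t := sub_nonneg.2 (hGmono hts)
        rw [Real.norm_eq_abs, abs_sub_comm, abs_of_nonneg hb0,
          abs_of_nonpos (by linarith : t - s ≤ (0:ℝ))]
        have : -(t - s) = s - t := by ring
        rw [this]
        calc G s - G t ≤ ∫ v in (0:ℝ)..(s - t), w v := hb1
          _ ≤ ω (s - t) := (hWb _ (by linarith)).2
    have hGm2 : Measurable G := hGmono.measurable
    have hGb : ∀ z ∈ Set.Icc a b, |G z| ≤ |G a| + |G b| := by
      intro z hz
      have h1 : G a ≤ G z := hGmono hz.1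
      have h2 : G z ≤ G b := hGmono hz.2
      rw [abs_le]
      constructor
      · have := neg_abs_le (G a); have := le_abs_self (G b); have := abs_nonneg (G b); linarith [abs_nonneg (G b), neg_abs_le (G a)]
      · linarith [le_abs_self (G b), abs_nonneg (G a)]
    have e3 : (∫ t in b'..b, ψ₂ t * G t) = ∫ s in a..a', ψ₁ s * G (r s) :=
      KSAux.pushforward haa'.le ha'b' hb'b.le hm₁ hm₂ hbd₁ hbd₂ hnn₁ hnn₂ hranti hrmap'
        hrsa hrsur hralt G (hGm2.aemeasurable.restrict)
    have hi1 : IntervalIntegrable (fun t => ψ₁ t * G t) volume a a' :=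
      hmul_ii G (hGm2.aemeasurable.restrict)
        ⟨_, fun t ht => hGb t ⟨ht.1, ht.2.trans ha'b⟩⟩
    have hi2 : IntervalIntegrable (fun t => ψ₁ t * G (r t)) volume a a' :=
      hmul_ii _ ((hGm2.comp hrm).aemeasurable.restrict)
        ⟨_, fun t ht => hGb _ ⟨hab'.trans (hrmap t ht).1, (hrmap t ht).2⟩⟩
    have hWcont : Continuous (fun T : ℝ => ∫ v in (0:ℝ)..T, w v) :=
      intervalIntegral.continuous_primitive (fun p q => hwc.intervalIntegrable p q) 0
    have hWii : IntervalIntegrable (fun t => ψ₁ t * (∫ v in (0:ℝ)..(r t - t), w v))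
        volume a a' := by
      apply hmul_ii
      · exact (hWcont.measurable.comp (hrm.sub measurable_id)).aemeasurable.restrict
      · refine ⟨ω (b - a), fun t ht => ?_⟩
        have h1 := (hWb _ (hdmem t ht).1).2
        have h2 : (0:ℝ) ≤ ∫ v in (0:ℝ)..(r t - t), w v :=
          intervalIntegral.integral_nonneg (hdmem t ht).1 (fun u _ => hwnn u)
        rw [abs_of_nonneg h2]
        calc (∫ v in (0:ℝ)..(r t - t), w v) ≤ ω (r t - t) := h1
          _ = ωb (r t - t) := (hωbeq _ (hdmem t ht).1).symm
          _ ≤ ωb (b - a) := hωbm (hdmem t ht).2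
          _ = ω (b - a) := hωbeq _ (by linarith)
    have e4 : (∫ t in a..a', ψ₁ t * G t) - (∫ t in a..a', ψ₁ t * G (r t))
        = - ∫ t in a..a', ψ₁ t * (∫ v in (0:ℝ)..(r t - t), w v) := by
      rw [← intervalIntegral.integral_sub hi1 hi2, ← intervalIntegral.integral_neg]
      apply intervalIntegral.integral_congr
      intro t ht
      rw [Set.uIcc_of_le haa'.le] at ht
      have hgeq := hGeq t ht
      show ψ₁ t * G t - ψ₁ t * G (r t) = -(ψ₁ t * (∫ v in (0:ℝ)..(r t - t), w v))
      rw [← hgeq]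
      ring
    refine ⟨_, ⟨G, hGhold, rfl⟩, ?_⟩
    have hval : |(∫ t in a..a', ψ₁ t * G t) - ∫ t in b'..b, ψ₂ t * G t|
        = ∫ t in a..a', ψ₁ t * (∫ v in (0:ℝ)..(r t - t), w v) := by
      rw [e3, e4, abs_neg, abs_of_nonneg]
      apply intervalIntegral.integral_nonneg_of_ae_restrict haa'.le
      filter_upwards [hnn₁, MeasureTheory.ae_restrict_mem measurableSet_Icc] with t htnn htmem
      exact mul_nonneg htnn
        (intervalIntegral.integral_nonneg (hdmem t htmem).1 (fun u _ => hwnn u))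
    rw [hval]
    have hiconst : IntervalIntegrable (fun t => ω ε * ψ₁ t) volume a a' :=
      (hii₁ a a' le_rfl haa'.le le_rfl).const_mul (ω ε)
    have hcomp : (∫ t in a..a', (ψ₁ t * ωb (r t - t) - ω ε * ψ₁ t))
        ≤ ∫ t in a..a', ψ₁ t * (∫ v in (0:ℝ)..(r t - t), w v) := by
      apply intervalIntegral.integral_mono_ae_restrict haa'.le (hi3.sub hiconst) hWii
      filter_upwards [hnn₁, MeasureTheory.ae_restrict_mem measurableSet_Icc] with t htnn htmem
      have hw1 := (hWb _ (hdmem t htmem).1).1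
      have h2 : ωb (r t - t) = ω (r t - t) := hωbeq _ (hdmem t htmem).1
      have h3 := mul_le_mul_of_nonneg_left hw1 htnn
      calc ψ₁ t * ωb (r t - t) - ω ε * ψ₁ t = ψ₁ t * (ω (r t - t) - ω ε) := by rw [h2]; ring
        _ ≤ ψ₁ t * (∫ v in (0:ℝ)..(r t - t), w v) := h3
    have hsplit : (∫ t in a..a', (ψ₁ t * ωb (r t - t) - ω ε * ψ₁ t))
        = (∫ s in a..a', ψ₁ s * ωb (r s - s)) - ω ε * (∫ t in a..a', ψ₁ t) := by
      rw [intervalIntegral.integral_sub hi3 hiconst, intervalIntegral.integral_const_mul]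
    linarith
  -- ========== conclusion ==========
  have hIωb : (∫ s in a..a', ψ₁ s * ω (ρ s - s)) = ∫ s in a..a', ψ₁ s * ωb (r s - s) := by
    apply intervalIntegral.integral_congr
    intro s hs
    rw [Set.uIcc_of_le haa'.le] at hs
    show ψ₁ s * ω (ρ s - s) = ψ₁ s * ωb (r s - s)
    have h1 : (0:ℝ) ≤ ρ s - s := by
      have := (hρmap hs).1; linarith [hs.2, ha'b']
    rw [hreq s hs, hωbeq _ h1]
  have hSbdd : BddAbove {v : ℝ | ∃ f : ℝ → ℝ, HHolder ω a b f ∧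
      v = |(∫ t in a..a', ψ₁ t * f t) - ∫ t in b'..b, ψ₂ t * f t|} := by
    refine ⟨∫ s in a..a', ψ₁ s * ωb (r s - s), ?_⟩
    rintro v ⟨f, hf, rfl⟩
    exact hupper f hf
  obtain ⟨v₀, hv₀S, _⟩ := hlow 1 one_pos
  have hSne : {v : ℝ | ∃ f : ℝ → ℝ, HHolder ω a b f ∧
      v = |(∫ t in a..a', ψ₁ t * f t) - ∫ t in b'..b, ψ₂ t * f t|}.Nonempty := ⟨v₀, hv₀S⟩
  rw [hIωb]
  apply le_antisymm
  · apply csSup_le hSne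
    rintro v ⟨f, hf, rfl⟩
    exact hupper f hf
  · by_contra hcon
    push_neg at hcon
    set SS := sSup {v : ℝ | ∃ f : ℝ → ℝ, HHolder ω a b f ∧
        v = |(∫ t in a..a', ψ₁ t * f t) - ∫ t in b'..b, ψ₂ t * f t|} with hSS
    have hM₁nn : 0 ≤ ∫ t in a..a', ψ₁ t :=
      intervalIntegral.integral_nonneg_of_ae_restrict haa'.le hnn₁
    set M₁ := ∫ t in a..a', ψ₁ t with hM₁
    have hgap : 0 < ((∫ s in a..a', ψ₁ s * ωb (r s - s)) - SS) / (M₁ + 1) := by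
      apply div_pos (by linarith) (by linarith)
    obtain ⟨ε, hε, hωε⟩ : ∃ ε > 0,
        ω ε < ((∫ s in a..a', ψ₁ s * ωb (r s - s)) - SS) / (M₁ + 1) := by
      have h1 : ContinuousWithinAt ω (Set.Ici 0) 0 := hωc 0 (by simp)
      rw [Metric.continuousWithinAt_iff] at h1
      obtain ⟨δ, hδ, hδ'⟩ := h1 _ hgap
      refine ⟨δ/2, by linarith, ?_⟩
      have h2 := hδ' (Set.mem_Ici.2 (by linarith : (0:ℝ) ≤ δ/2))
        (by rw [Real.dist_eq, sub_zero, abs_of_nonneg (by linarith : (0:ℝ) ≤ δ/2)]; linarith)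
      rw [Real.dist_eq, hω0, sub_zero] at h2
      exact lt_of_le_of_lt (le_abs_self _) h2
    obtain ⟨v, hvS, hvge⟩ := hlow ε hε
    have h1 : v ≤ SS := le_csSup hSbdd hvS
    have h2 : ω ε * M₁ < ((∫ s in a..a', ψ₁ s * ωb (r s - s)) - SS) := by
      have hωεnn : 0 ≤ ω ε := hωnn ε hε.le
      calc ω ε * M₁ ≤ ω ε * (M₁ + 1) := by nlinarith
        _ < (((∫ s in a..a', ψ₁ s * ωb (r s - s)) - SS) / (M₁ + 1)) * (M₁ + 1) := by
            apply mul_lt_mul_of_pos_right hωε (by linarith)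
        _ = ((∫ s in a..a', ψ₁ s * ωb (r s - s)) - SS) := by field_simp
    linarith
end

section
/- Ostrowski-type inequality, case of nested intervals: Let a ≤ c < d ≤ b with d − c < b − a, and set M = b − a, m = d − c. Then for every modulus of continuity ω, every real Banach space E, and every f ∈ H^ω([a,b],E), ‖(1/(b−a))∫_a^b f(t) dt − (1/(d−c))∫_c^d f(t) dt‖ ≤ ((M−m)/M²)·( ∫_0^{M(c−a)/(M−m)} ω(s) ds + ∫_0^{M(b−d)/(M−m)} ω(s) ds ). -/
open MeasureTheory Set

/-- Ostrowski-type inequality, case of nested intervals `[c,d] ⊂ [a,b]`. -/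
theorem ostrowski_nested
    {E : Type*} [NormedAddCommGroup E] [NormedSpace ℝ E] [CompleteSpace E]
    (a b c d : ℝ) (hac : a ≤ c) (hcd : c < d) (hdb : d ≤ b) (hlt : d - c < b - a)
    (M m : ℝ) (hM : M = b - a) (hm : m = d - c)
    (ω : ℝ → ℝ) (hω : IsModulus ω)
    (f : ℝ → E) (hf : HHolder ω a b f) :
    ‖((b - a)⁻¹ • ∫ t in a..b, f t) - (d - c)⁻¹ • ∫ t in c..d, f t‖ ≤
      ((M - m) / M ^ 2) *
        ((∫ s in (0:ℝ)..(M * (c - a) / (M - m)), ω s) +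
          ∫ s in (0:ℝ)..(M * (b - d) / (M - m)), ω s) := by
  obtain ⟨hω0, hωc, hωm, hωs⟩ := hω
  subst hM; subst hm
  have hm0 : 0 < d - c := sub_pos.2 hcd
  have hr0 : 0 < b - a - (d - c) := by linarith
  have hM0 : 0 < b - a := by linarith
  set r : ℝ := b - a - (d - c) with hr
  set k : ℝ := (b - a) / r with hk
  have hk0 : 0 < k := div_pos hM0 hr0
  set σ : ℝ := -(d - c) / r with hσ
  have hσ0 : σ < 0 := div_neg_of_neg_of_pos (by linarith) hr0
  have hσne : σ ≠ 0 := ne_of_lt hσ0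
  have hσk : σ = 1 - k := by
    rw [hσ, hk, eq_sub_iff_add_eq]
    field_simp
    ring
  set e : ℝ := ((b - a) * c - (d - c) * a) / r with he
  have hce : c ≤ e := by
    rw [he, le_div_iff₀ hr0, hr]; nlinarith
  have hed : e ≤ d := by
    rw [he, div_le_iff₀ hr0, hr]; nlinarith
  have hcb : c ≤ b := le_trans hcd.le hdb
  have had : a ≤ d := le_trans hac hcd.le
  -- continuity of f on [a, b]
  have hfc : ContinuousOn f (Icc a b) := by
    intro x hx
    rw [Metric.continuousWithinAt_iff]
    intro ε hε
    have hωat : ContinuousWithinAt ω (Ici 0) 0 := hωc 0 self_mem_Ici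
    rw [Metric.continuousWithinAt_iff] at hωat
    obtain ⟨δ, hδ0, hδ⟩ := hωat ε hε
    refine ⟨δ, hδ0, fun y hy hyx => ?_⟩
    have h1 := hf x hx y hy
    have h2 := hδ (mem_Ici.mpr (abs_nonneg (y - x)))
      (by rw [Real.dist_eq, sub_zero, abs_abs]; rwa [Real.dist_eq] at hyx)
    rw [hω0, Real.dist_eq, sub_zero] at h2
    calc dist (f y) (f x) = ‖f y - f x‖ := dist_eq_norm _ _
      _ ≤ ω (|y - x|) := h1
      _ ≤ |ω (|y - x|)| := le_abs_self _
      _ < ε := h2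
  have hint : ∀ p q : ℝ, a ≤ p → p ≤ q → q ≤ b → IntervalIntegrable f volume p q := by
    intro p q h1 h2 h3
    apply (hfc.mono ?_).intervalIntegrable
    rw [uIcc_of_le h2]; exact Icc_subset_Icc h1 h3
  -- the affine "antitone couplings"
  have heAa : σ * a + k * c = e := by rw [hσ, hk, he]; field_simp; ring
  have heAc : σ * c + k * c = c := by
    rw [hσ, hk]; field_simp; ring
  have heBb : σ * b + k * d = e := by rw [hσ, hk, he]; field_simp; ring
  have heBd : σ * d + k * d = d := by rw [hσ, hk]; field_simp; ring
  have hmemA : ∀ t ∈ Icc a c, σ * t + k * c ∈ Icc a b := by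
    intro t ht
    constructor
    · have h1 : σ * t + k * c = t + k * (c - t) := by rw [hσk]; ring
      rw [h1]
      nlinarith [mul_nonneg hk0.le (sub_nonneg.2 ht.2), ht.1]
    · have h2 : σ * t + k * c ≤ σ * a + k * c := by
        have := mul_le_mul_of_nonpos_left ht.1 hσ0.le
        linarith
      rw [heAa] at h2
      linarith
  have hmemB : ∀ t ∈ Icc d b, σ * t + k * d ∈ Icc a b := by
    intro t ht
    constructor
    · have h2 : σ * b + k * d ≤ σ * t + k * d := by
        have := mul_le_mul_of_nonpos_left ht.2 hσ0.le
        linarith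
      rw [heBb] at h2
      linarith
    · have h1 : σ * t + k * d = t - k * (t - d) := by rw [hσk]; ring
      rw [h1]
      nlinarith [mul_nonneg hk0.le (sub_nonneg.2 ht.1), ht.2]
  have hIccac : Icc a c ⊆ Icc a b := Icc_subset_Icc le_rfl hcb
  have hIccdb : Icc d b ⊆ Icc a b := Icc_subset_Icc had le_rfl
  have hAcont : Continuous fun t : ℝ => σ * t + k * c := (continuous_const.mul continuous_id).add continuous_const
  have hBcont : Continuous fun t : ℝ => σ * t + k * d := (continuous_const.mul continuous_id).add continuous_const
  have hfAcont : ContinuousOn (fun t => f (σ * t + k * c)) (Icc a c) :=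
    hfc.comp hAcont.continuousOn hmemA
  have hfBcont : ContinuousOn (fun t => f (σ * t + k * d)) (Icc d b) :=
    hfc.comp hBcont.continuousOn hmemB
  have hAint : IntervalIntegrable (fun t => f (σ * t + k * c)) volume a c := by
    apply ContinuousOn.intervalIntegrable
    rwa [uIcc_of_le hac]
  have hBint : IntervalIntegrable (fun t => f (σ * t + k * d)) volume d b := by
    apply ContinuousOn.intervalIntegrable
    rwa [uIcc_of_le hdb]
  have hi1 : IntervalIntegrable f volume a c := hint a c le_rfl hac hcb
  have hi2 : IntervalIntegrable f volume c e := hint c e hac hce (le_trans hed hdb)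
  have hi3 : IntervalIntegrable f volume e d := hint e d (le_trans hac hce) hed hdb
  have hi4 : IntervalIntegrable f volume d b := hint d b had hdb le_rfl
  -- change of variables for f
  have hcompA : (∫ t in a..c, f (σ * t + k * c)) = σ⁻¹ • ∫ x in e..c, f x := by
    rw [intervalIntegral.integral_comp_mul_add f hσne (k * c), heAa, heAc]
  have hcompB : (∫ t in d..b, f (σ * t + k * d)) = σ⁻¹ • ∫ x in d..e, f x := by
    rw [intervalIntegral.integral_comp_mul_add f hσne (k * d), heBd, heBb]
  have hS1 : (∫ t in a..c, (f t - f (σ * t + k * c))) =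
      (∫ t in a..c, f t) - σ⁻¹ • ∫ x in e..c, f x := by
    rw [intervalIntegral.integral_sub hi1 hAint, hcompA]
  have hS2 : (∫ t in d..b, (f t - f (σ * t + k * d))) =
      (∫ t in d..b, f t) - σ⁻¹ • ∫ x in d..e, f x := by
    rw [intervalIntegral.integral_sub hi4 hBint, hcompB]
  -- splitting the big integrals
  have hsplit : (∫ t in a..b, f t) =
      (∫ t in a..c, f t) + (∫ t in c..e, f t) + (∫ t in e..d, f t) + ∫ t in d..b, f t := by
    rw [intervalIntegral.integral_add_adjacent_intervals hi1 hi2,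
      intervalIntegral.integral_add_adjacent_intervals (hi1.trans hi2) hi3,
      intervalIntegral.integral_add_adjacent_intervals ((hi1.trans hi2).trans hi3) hi4]
  have hsplit2 : (∫ t in c..d, f t) = (∫ t in c..e, f t) + ∫ t in e..d, f t :=
    (intervalIntegral.integral_add_adjacent_intervals hi2 hi3).symm
  -- the key representation
  have key : ((b - a)⁻¹ • ∫ t in a..b, f t) - (d - c)⁻¹ • ∫ t in c..d, f t =
      (b - a)⁻¹ • ((∫ t in a..c, (f t - f (σ * t + k * c))) +
        ∫ t in d..b, (f t - f (σ * t + k * d))) := by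
    rw [hS1, hS2, hsplit, hsplit2, intervalIntegral.integral_symm c e,
      intervalIntegral.integral_symm e d]
    have hσinv : σ⁻¹ = -(r / (d - c)) := by
      rw [hσ, inv_div, div_neg]
    rw [hσinv, hr]
    match_scalars <;> field_simp <;> ring
  -- pointwise bounds
  have hpoint1 : ∀ t ∈ Icc a c, ‖f t - f (σ * t + k * c)‖ ≤ ω (k * (c - t)) := by
    intro t ht
    have h1 : t - (σ * t + k * c) = -(k * (c - t)) := by rw [hσk]; ring
    have h2 := hf (σ * t + k * c) (hmemA t ht) t (hIccac ht)
    rwa [h1, abs_neg, abs_of_nonneg (mul_nonneg hk0.le (sub_nonneg.2 ht.2))] at h2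
  have hpoint2 : ∀ t ∈ Icc d b, ‖f t - f (σ * t + k * d)‖ ≤ ω (k * (t - d)) := by
    intro t ht
    have h1 : t - (σ * t + k * d) = k * (t - d) := by rw [hσk]; ring
    have h2 := hf (σ * t + k * d) (hmemB t ht) t (hIccdb ht)
    rwa [h1, abs_of_nonneg (mul_nonneg hk0.le (sub_nonneg.2 ht.1))] at h2
  -- integrability of the ω-compositions
  have hωint1 : IntervalIntegrable (fun t => ω (k * (c - t))) volume a c := by
    apply ContinuousOn.intervalIntegrable
    rw [uIcc_of_le hac]
    refine hωc.comp (Continuous.continuousOn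
      (continuous_const.mul (continuous_const.sub continuous_id))) ?_
    intro t ht
    exact mul_nonneg hk0.le (sub_nonneg.2 ht.2)
  have hωint2 : IntervalIntegrable (fun t => ω (k * (t - d))) volume d b := by
    apply ContinuousOn.intervalIntegrable
    rw [uIcc_of_le hdb]
    refine hωc.comp (Continuous.continuousOn
      (continuous_const.mul (continuous_id.sub continuous_const))) ?_
    intro t ht
    exact mul_nonneg hk0.le (sub_nonneg.2 ht.1)
  have hnint1 : IntervalIntegrable (fun t => ‖f t - f (σ * t + k * c)‖) volume a c := by
    apply ContinuousOn.intervalIntegrable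
    rw [uIcc_of_le hac]
    exact ((hfc.mono hIccac).sub hfAcont).norm
  have hnint2 : IntervalIntegrable (fun t => ‖f t - f (σ * t + k * d)‖) volume d b := by
    apply ContinuousOn.intervalIntegrable
    rw [uIcc_of_le hdb]
    exact ((hfc.mono hIccdb).sub hfBcont).norm
  -- norm bounds on the two pieces
  have hb1 : ‖∫ t in a..c, (f t - f (σ * t + k * c))‖ ≤ ∫ t in a..c, ω (k * (c - t)) := by
    refine (intervalIntegral.norm_integral_le_integral_norm hac).trans ?_
    exact intervalIntegral.integral_mono_on hac hnint1 hωint1 hpoint1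
  have hb2 : ‖∫ t in d..b, (f t - f (σ * t + k * d))‖ ≤ ∫ t in d..b, ω (k * (t - d)) := by
    refine (intervalIntegral.norm_integral_le_integral_norm hdb).trans ?_
    exact intervalIntegral.integral_mono_on hdb hnint2 hωint2 hpoint2
  -- change of variables for ω
  have hωcomp1 : (∫ t in a..c, ω (k * (c - t))) =
      k⁻¹ * ∫ s in (0:ℝ)..((b - a) * (c - a) / r), ω s := by
    have h0 : ∀ t : ℝ, k * (c - t) = -k * t + k * c := fun t => by ring
    simp_rw [h0]
    rw [intervalIntegral.integral_comp_mul_add ω (neg_ne_zero.2 hk0.ne') (k * c),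
      show -k * a + k * c = k * (c - a) by ring, show -k * c + k * c = (0:ℝ) by ring,
      intervalIntegral.integral_symm, smul_eq_mul,
      show k * (c - a) = (b - a) * (c - a) / r by rw [hk]; ring, inv_neg]
    ring
  have hωcomp2 : (∫ t in d..b, ω (k * (t - d))) =
      k⁻¹ * ∫ s in (0:ℝ)..((b - a) * (b - d) / r), ω s := by
    have h0 : ∀ t : ℝ, k * (t - d) = k * t + -(k * d) := fun t => by ring
    simp_rw [h0]
    rw [intervalIntegral.integral_comp_mul_add ω hk0.ne' (-(k * d)),
      show k * d + -(k * d) = (0:ℝ) by ring,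
      show k * b + -(k * d) = (b - a) * (b - d) / r by rw [hk]; ring, smul_eq_mul]
  -- final assembly
  rw [key]
  calc ‖(b - a)⁻¹ • ((∫ t in a..c, (f t - f (σ * t + k * c))) +
        ∫ t in d..b, (f t - f (σ * t + k * d)))‖
      = (b - a)⁻¹ * ‖(∫ t in a..c, (f t - f (σ * t + k * c))) +
        ∫ t in d..b, (f t - f (σ * t + k * d))‖ := by
        rw [norm_smul, Real.norm_eq_abs, abs_of_pos (inv_pos.2 hM0)]
    _ ≤ (b - a)⁻¹ * ((∫ t in a..c, ω (k * (c - t))) + ∫ t in d..b, ω (k * (t - d))) := by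
        apply mul_le_mul_of_nonneg_left _ (inv_pos.2 hM0).le
        exact (norm_add_le _ _).trans (add_le_add hb1 hb2)
    _ = (r / (b - a) ^ 2) *
        ((∫ s in (0:ℝ)..((b - a) * (c - a) / r), ω s) +
          ∫ s in (0:ℝ)..((b - a) * (b - d) / r), ω s) := by
        rw [hωcomp1, hωcomp2, hk]
        field_simp
end

section
/- Ostrowski-type inequality, case of overlapping intervals: Let a < b, c < d with a ≤ c ≤ b ≤ d, and set M = max{b−a, d−c}, m = min{b−a, d−c}. Then for every modulus of continuity ω, every real Banach space E, and every f ∈ H^ω([a,d],E), ‖(1/(b−a))∫_a^b f(t) dt − (1/(d−c))∫_c^d f(t) dt‖ ≤ (1/(M+m))·∫_{M(b−c)/m}^{d−a} ω(s) ds + ((M−m)/M²)·∫_0^{M(b−c)/m} ω(s) ds. -/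
open MeasureTheory Set intervalIntegral Filter

lemma holder_continuousOn {E : Type*} [NormedAddCommGroup E]
    {ω : ℝ → ℝ} (hω : IsModulus ω) {a d : ℝ} {f : ℝ → E}
    (hf : HHolder ω a d f) : ContinuousOn f (Set.Icc a d) := by
  intro t ht
  rw [ContinuousWithinAt, tendsto_iff_norm_sub_tendsto_zero]
  have h1 : Tendsto (fun s : ℝ => |s - t|) (nhdsWithin t (Set.Icc a d))
      (nhdsWithin 0 (Set.Ici 0)) := by
    apply tendsto_nhdsWithin_of_tendsto_nhds_of_eventually_within
    · have hc : Continuous fun s : ℝ => |s - t| := (continuous_id.sub continuous_const).abs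
      have h0 := hc.tendsto t
      have he : |t - t| = (0:ℝ) := by simp
      rw [he] at h0
      exact h0.mono_left nhdsWithin_le_nhds
    · exact Filter.Eventually.of_forall fun s => Set.mem_Ici.mpr (abs_nonneg _)
  have h2 : Tendsto (fun s => ω |s - t|) (nhdsWithin t (Set.Icc a d)) (nhds 0) := by
    have h := (hω.2.1 0 Set.self_mem_Ici).tendsto
    rw [hω.1] at h
    exact h.comp h1
  apply squeeze_zero' _ _ h2
  · filter_upwards with s using norm_nonneg _
  · filter_upwards [self_mem_nhdsWithin] with s hs using hf t ht s hs

lemma modulus_nonneg {ω : ℝ → ℝ} (hω : IsModulus ω) {x : ℝ} (hx : 0 ≤ x) : 0 ≤ ω x := by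
  have := hω.2.2.1 Set.self_mem_Ici (Set.mem_Ici.mpr hx) hx
  rw [hω.1] at this; exact this

lemma modulus_intInt {ω : ℝ → ℝ} (hω : IsModulus ω) {x y : ℝ} (hx : 0 ≤ x) (hy : 0 ≤ y) :
    IntervalIntegrable ω volume x y :=
  (hω.2.1.mono (fun z hz => by
    rw [Set.mem_uIcc] at hz
    rcases hz with ⟨h1, _⟩ | ⟨h1, _⟩ <;> exact Set.mem_Ici.mpr (by linarith))).intervalIntegrable
lemma pairing {E : Type*} [NormedAddCommGroup E] [NormedSpace ℝ E]
    {ω : ℝ → ℝ} (hω : IsModulus ω) {a d : ℝ} {f : ℝ → E} (hf : HHolder ω a d f)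
    (p q r₁ r₂ Λ : ℝ) (hr₁ : 0 < r₁) (hr₂ : 0 < r₂) (hr : r₁ + r₂ = 1) (hΛ : 0 ≤ Λ)
    (hpa : a ≤ p - Λ * r₁) (hpq : p ≤ q) (hqd : q + Λ * r₂ ≤ d) :
    ‖(∫ u in (0:ℝ)..Λ, f (p - u * r₁)) - ∫ u in (0:ℝ)..Λ, f (q + u * r₂)‖ ≤
      ∫ u in (0:ℝ)..Λ, ω (q - p + u) := by
  have hcont := holder_continuousOn hω hf
  have huIcc : Set.uIcc (0:ℝ) Λ = Set.Icc 0 Λ := Set.uIcc_of_le hΛ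
  have hmem1 : ∀ u ∈ Set.Icc (0:ℝ) Λ, p - u * r₁ ∈ Set.Icc a d := by
    intro u hu
    have h1 : u * r₁ ≤ Λ * r₁ := mul_le_mul_of_nonneg_right hu.2 hr₁.le
    have h2 : 0 ≤ u * r₁ := mul_nonneg hu.1 hr₁.le
    have h3 : 0 ≤ Λ * r₂ := mul_nonneg hΛ hr₂.le
    constructor <;> [linarith; linarith]
  have hmem2 : ∀ u ∈ Set.Icc (0:ℝ) Λ, q + u * r₂ ∈ Set.Icc a d := by
    intro u hu
    have h1 : u * r₂ ≤ Λ * r₂ := mul_le_mul_of_nonneg_right hu.2 hr₂.le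
    have h2 : 0 ≤ u * r₂ := mul_nonneg hu.1 hr₂.le
    have h3 : 0 ≤ Λ * r₁ := mul_nonneg hΛ hr₁.le
    constructor <;> [linarith; linarith]
  have hc1 : ContinuousOn (fun u => f (p - u * r₁)) (Set.Icc 0 Λ) :=
    hcont.comp (Continuous.continuousOn (by continuity)) (fun u hu => hmem1 u hu)
  have hc2 : ContinuousOn (fun u => f (q + u * r₂)) (Set.Icc 0 Λ) :=
    hcont.comp (Continuous.continuousOn (by continuity)) (fun u hu => hmem2 u hu)
  have hi1 : IntervalIntegrable (fun u => f (p - u * r₁)) volume 0 Λ :=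
    (hc1.mono (huIcc ▸ subset_rfl)).intervalIntegrable
  have hi2 : IntervalIntegrable (fun u => f (q + u * r₂)) volume 0 Λ :=
    (hc2.mono (huIcc ▸ subset_rfl)).intervalIntegrable
  have hωc : ContinuousOn (fun u => ω (q - p + u)) (Set.Icc 0 Λ) :=
    hω.2.1.comp (Continuous.continuousOn (by continuity))
      (fun u hu => Set.mem_Ici.mpr (by have := hu.1; simp only [Set.mem_Icc] at hu; linarith [hu.1]))
  rw [← intervalIntegral.integral_sub hi1 hi2]
  refine (intervalIntegral.norm_integral_le_integral_norm hΛ).trans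
    (intervalIntegral.integral_mono_on hΛ ?_ ?_ ?_)
  · exact ((hc1.sub hc2).norm.mono (huIcc ▸ subset_rfl)).intervalIntegrable
  · exact (hωc.mono (huIcc ▸ subset_rfl)).intervalIntegrable
  · intro u hu
    have h := hf (p - u * r₁) (hmem1 u hu) (q + u * r₂) (hmem2 u hu)
    have habs : |q + u * r₂ - (p - u * r₁)| = q - p + u := by
      have he : q + u * r₂ - (p - u * r₁) = q - p + u := by linear_combination u * hr
      rw [he, abs_of_nonneg (by linarith [hu.1])]
    rw [norm_sub_rev]
    calc ‖f (q + u * r₂) - f (p - u * r₁)‖ ≤ ω |q + u * r₂ - (p - u * r₁)| := h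
    _ = ω (q - p + u) := by rw [habs]

lemma ostrowski_core {E : Type*} [NormedAddCommGroup E] [NormedSpace ℝ E] [CompleteSpace E]
    (a b c d : ℝ) (hab : a < b) (hcd : c < d) (hac : a ≤ c) (hcb : c ≤ b) (hbd : b ≤ d)
    (hdcba : d - c ≤ b - a)
    (M m : ℝ) (hM : M = b - a) (hm : m = d - c)
    (ω : ℝ → ℝ) (hω : IsModulus ω) (f : ℝ → E) (hf : HHolder ω a d f) :
    ‖((b - a)⁻¹ • ∫ t in a..b, f t) - (d - c)⁻¹ • ∫ t in c..d, f t‖ ≤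
      (1 / (M + m)) * (∫ s in (M * (b - c) / m)..(d - a), ω s) +
        ((M - m) / M ^ 2) * ∫ s in (0:ℝ)..(M * (b - c) / m), ω s := by
  have hm0 : 0 < m := by rw [hm]; linarith
  have hM0 : 0 < M := by rw [hM]; linarith
  have hmM : m ≤ M := by rw [hm, hM]; linarith
  have hMm0 : 0 < M + m := by linarith
  have hmne : m ≠ 0 := hm0.ne'
  have hMne : M ≠ 0 := hM0.ne'
  have hMmne : M + m ≠ 0 := hMm0.ne'
  have haM : a = b - M := by rw [hM]; ring
  have hdm : d = c + m := by rw [hm]; ring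
  have hda : d - a = M + m - (b - c) := by rw [hM, hm]; ring
  obtain ⟨L, hL⟩ : ∃ L : ℝ, L = M * (b - c) / m := ⟨_, rfl⟩
  obtain ⟨t₁, ht₁⟩ : ∃ t₁ : ℝ, t₁ = c - (b - c) * (M - m) / m := ⟨_, rfl⟩
  rw [← hL]
  have ho : 0 ≤ b - c := by linarith
  have hom : b - c ≤ m := by rw [hm]; linarith
  have hL0 : 0 ≤ L := hL ▸ div_nonneg (mul_nonneg hM0.le ho) hm0.le
  have hta : a ≤ t₁ := by
    rw [ht₁, le_sub_iff_add_le, ← sub_nonneg]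
    have h4 : (b - c) * (M - m) ≤ (c - a) * m := by
      rw [hM, hm]
      nlinarith [mul_nonneg (show (0:ℝ) ≤ b - a by linarith)
        (show (0:ℝ) ≤ d - b by linarith)]
    have h5 : (b - c) * (M - m) / m ≤ c - a := (div_le_iff₀ hm0).mpr h4
    linarith
  have htc : t₁ ≤ c := by
    rw [ht₁]
    have : 0 ≤ (b - c) * (M - m) / m :=
      div_nonneg (mul_nonneg ho (by linarith)) hm0.le
    linarith
  have hbt : b - t₁ = L := by rw [ht₁, hL]; field_simp; ring
  have hLda : L ≤ d - a := by
    rw [hL, div_le_iff₀ hm0, hM, hm]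
    nlinarith [mul_nonneg (show (0:ℝ) ≤ (d - c) - (b - c) by linarith)
      (show (0:ℝ) ≤ (b - a) + (d - c) by linarith)]
  have hfc := holder_continuousOn hω hf
  have hmemA : ∀ x : ℝ, a ≤ x → x ≤ d → x ∈ Set.Icc a d := fun x h1 h2 => Set.mem_Icc.mpr ⟨h1, h2⟩
  have hint : ∀ x y : ℝ, x ∈ Set.Icc a d → y ∈ Set.Icc a d → IntervalIntegrable f volume x y :=
    fun x y hx hy => (hfc.mono (Set.uIcc_subset_Icc hx hy)).intervalIntegrable
  have ma : a ∈ Set.Icc a d := hmemA a le_rfl (by linarith)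
  have mb : b ∈ Set.Icc a d := hmemA b (by linarith) (by linarith)
  have mc : c ∈ Set.Icc a d := hmemA c hac (by linarith)
  have md : d ∈ Set.Icc a d := hmemA d (by linarith) le_rfl
  have mt₁ : t₁ ∈ Set.Icc a d := hmemA t₁ hta (by linarith)
  -- decomposition
  have e1 : (∫ t in a..t₁, f t) + (∫ t in t₁..c, f t) + (∫ t in c..b, f t)
      = ∫ t in a..b, f t := by
    rw [integral_add_adjacent_intervals (hint a t₁ ma mt₁) (hint t₁ c mt₁ mc),
      integral_add_adjacent_intervals (hint a c ma mc) (hint c b mc mb)]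
  have e2 : (∫ t in c..b, f t) + (∫ t in b..d, f t) = ∫ t in c..d, f t :=
    integral_add_adjacent_intervals (hint c b mc mb) (hint b d mb md)
  have hks : m⁻¹ • (∫ t in c..b, f t) =
      M⁻¹ • (∫ t in c..b, f t) + ((M - m) / (M * m)) • (∫ t in c..b, f t) := by
    rw [← add_smul]
    congr 1
    field_simp
    ring
  have hsplit : ((b - a)⁻¹ • ∫ t in a..b, f t) - (d - c)⁻¹ • ∫ t in c..d, f t =
      (M⁻¹ • (∫ t in t₁..c, f t) - ((M - m) / (M * m)) • (∫ t in c..b, f t)) +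
      (M⁻¹ • (∫ t in a..t₁, f t) - m⁻¹ • (∫ t in b..d, f t)) := by
    have hX : (b - a)⁻¹ • (∫ t in a..b, f t) =
        M⁻¹ • (∫ t in a..t₁, f t) + M⁻¹ • (∫ t in t₁..c, f t)
          + M⁻¹ • (∫ t in c..b, f t) := by
      rw [← hM, ← e1, smul_add, smul_add]
    have hY : (d - c)⁻¹ • (∫ t in c..d, f t) =
        (M⁻¹ • (∫ t in c..b, f t) + ((M - m) / (M * m)) • (∫ t in c..b, f t))
          + m⁻¹ • (∫ t in b..d, f t) := by
      rw [← hm, ← e2, smul_add, hks]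
    rw [hX, hY]
    abel
  -- bound for the second pairing
  obtain ⟨L₂, hL₂⟩ : ∃ L₂ : ℝ, L₂ = (d - a) - L := ⟨_, rfl⟩
  have hL₂0 : 0 ≤ L₂ := by rw [hL₂]; linarith
  obtain ⟨ρ₁, hρ₁def⟩ : ∃ x : ℝ, x = M / (M + m) := ⟨_, rfl⟩
  obtain ⟨ρ₂, hρ₂def⟩ : ∃ x : ℝ, x = m / (M + m) := ⟨_, rfl⟩
  have hρ₁ : 0 < ρ₁ := hρ₁def ▸ div_pos hM0 hMm0
  have hρ₂ : 0 < ρ₂ := hρ₂def ▸ div_pos hm0 hMm0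
  have hρsum : ρ₁ + ρ₂ = 1 := by rw [hρ₁def, hρ₂def]; field_simp
  have hb1 : t₁ - L₂ * ρ₁ = a := by
    rw [ht₁, hL₂, hda, hL, hρ₁def, haM]; field_simp; ring
  have hb2 : b + L₂ * ρ₂ = d := by
    rw [hL₂, hda, hL, hρ₂def, hdm]; field_simp; ring
  have eA : ρ₁ • (∫ u in (0:ℝ)..L₂, f (t₁ - u * ρ₁)) = ∫ t in a..t₁, f t := by
    have h1 : (∫ u in (0:ℝ)..L₂, f (t₁ - u * ρ₁))
        = ρ₁⁻¹ • ∫ x in (0 * ρ₁)..(L₂ * ρ₁), f (t₁ - x) :=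
      integral_comp_mul_right (fun x => f (t₁ - x)) hρ₁.ne'
    rw [h1, smul_inv_smul₀ hρ₁.ne', integral_comp_sub_left f t₁]
    rw [hb1, show t₁ - 0 * ρ₁ = t₁ by ring]
  have eB : ρ₂ • (∫ u in (0:ℝ)..L₂, f (b + u * ρ₂)) = ∫ t in b..d, f t := by
    have h1 : (∫ u in (0:ℝ)..L₂, f (b + u * ρ₂))
        = ρ₂⁻¹ • ∫ x in (0 * ρ₂)..(L₂ * ρ₂), f (b + x) :=
      integral_comp_mul_right (fun x => f (b + x)) hρ₂.ne'
    rw [h1, smul_inv_smul₀ hρ₂.ne', integral_comp_add_left f b]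
    rw [show b + (0 * ρ₂) = b by ring, show b + L₂ * ρ₂ = d from hb2]
  have hP₂ : ‖M⁻¹ • (∫ t in a..t₁, f t) - m⁻¹ • (∫ t in b..d, f t)‖ ≤
      (1 / (M + m)) * (∫ s in L..(d - a), ω s) := by
    rw [← eA, ← eB, smul_smul, smul_smul,
      show M⁻¹ * ρ₁ = 1 / (M + m) by rw [hρ₁def]; field_simp,
      show m⁻¹ * ρ₂ = 1 / (M + m) by rw [hρ₂def]; field_simp,
      ← smul_sub, norm_smul, Real.norm_eq_abs,
      abs_of_pos (by positivity : (0:ℝ) < 1 / (M + m))]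
    apply mul_le_mul_of_nonneg_left _ (by positivity)
    have hp := pairing hω hf t₁ b ρ₁ ρ₂ L₂ hρ₁ hρ₂ hρsum hL₂0
      (le_of_eq hb1.symm) (by linarith) (le_of_eq hb2)
    refine hp.trans (le_of_eq ?_)
    have h2 : ∀ u : ℝ, ω (b - t₁ + u) = ω (L + u) := fun u => by rw [hbt]
    simp_rw [h2]
    rw [integral_comp_add_left ω L]
    congr 1
    · ring
    · rw [hL₂]; ring
  -- bound for the first pairing
  have hP₁ : ‖M⁻¹ • (∫ t in t₁..c, f t) - ((M - m) / (M * m)) • (∫ t in c..b, f t)‖ ≤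
      ((M - m) / M ^ 2) * (∫ s in (0:ℝ)..L, ω s) := by
    rcases eq_or_lt_of_le hmM with he | hlt
    · have ht₁c : t₁ = c := by rw [ht₁, ← he]; field_simp; ring
      have hMm : M - m = 0 := by rw [← he]; ring
      rw [ht₁c, integral_same, smul_zero, hMm]
      simp
    · obtain ⟨r₁, hr₁def⟩ : ∃ x : ℝ, x = (M - m) / M := ⟨_, rfl⟩
      obtain ⟨r₂, hr₂def⟩ : ∃ x : ℝ, x = m / M := ⟨_, rfl⟩
      have hr₁ : 0 < r₁ := hr₁def ▸ div_pos (by linarith) hM0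
      have hr₂ : 0 < r₂ := hr₂def ▸ div_pos hm0 hM0
      have hrsum : r₁ + r₂ = 1 := by rw [hr₁def, hr₂def]; field_simp; ring
      have hc1 : c - L * r₁ = t₁ := by rw [hL, hr₁def, ht₁]; field_simp
      have hc2 : c + L * r₂ = b := by rw [hL, hr₂def]; field_simp; ring
      have eC : r₁ • (∫ u in (0:ℝ)..L, f (c - u * r₁)) = ∫ t in t₁..c, f t := by
        have h1 : (∫ u in (0:ℝ)..L, f (c - u * r₁))
            = r₁⁻¹ • ∫ x in (0 * r₁)..(L * r₁), f (c - x) :=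
          integral_comp_mul_right (fun x => f (c - x)) hr₁.ne'
        rw [h1, smul_inv_smul₀ hr₁.ne', integral_comp_sub_left f c]
        rw [show c - L * r₁ = t₁ from hc1, show c - 0 * r₁ = c by ring]
      have eD : r₂ • (∫ u in (0:ℝ)..L, f (c + u * r₂)) = ∫ t in c..b, f t := by
        have h1 : (∫ u in (0:ℝ)..L, f (c + u * r₂))
            = r₂⁻¹ • ∫ x in (0 * r₂)..(L * r₂), f (c + x) :=
          integral_comp_mul_right (fun x => f (c + x)) hr₂.ne'
        rw [h1, smul_inv_smul₀ hr₂.ne', integral_comp_add_left f c]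
        rw [show c + (0 * r₂) = c by ring, show c + L * r₂ = b from hc2]
      rw [← eC, ← eD, smul_smul, smul_smul,
        show M⁻¹ * r₁ = (M - m) / M ^ 2 by rw [hr₁def, pow_two]; ring,
        show ((M - m) / (M * m)) * r₂ = (M - m) / M ^ 2 by rw [hr₂def]; field_simp,
        ← smul_sub, norm_smul, Real.norm_eq_abs,
        abs_of_nonneg (div_nonneg (by linarith) (by positivity) : (0:ℝ) ≤ (M - m) / M ^ 2)]
      apply mul_le_mul_of_nonneg_left _ (div_nonneg (by linarith) (by positivity))
      have hp := pairing hω hf c c r₁ r₂ L hr₁ hr₂ hrsum hL0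
        (by rw [hc1]; exact hta) le_rfl (by rw [hc2]; linarith)
      refine hp.trans (le_of_eq ?_)
      have h2 : ∀ u : ℝ, ω (c - c + u) = ω u := fun u => by rw [sub_self, zero_add]
      simp_rw [h2]
  rw [hsplit]
  calc ‖(M⁻¹ • (∫ t in t₁..c, f t) - ((M - m) / (M * m)) • (∫ t in c..b, f t)) +
        (M⁻¹ • (∫ t in a..t₁, f t) - m⁻¹ • (∫ t in b..d, f t))‖
      ≤ ‖M⁻¹ • (∫ t in t₁..c, f t) - ((M - m) / (M * m)) • (∫ t in c..b, f t)‖ +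
        ‖M⁻¹ • (∫ t in a..t₁, f t) - m⁻¹ • (∫ t in b..d, f t)‖ := norm_add_le _ _
    _ ≤ (1 / (M + m)) * (∫ s in L..(d - a), ω s) +
        ((M - m) / M ^ 2) * (∫ s in (0:ℝ)..L, ω s) := by linarith

/-- Ostrowski-type inequality, case of overlapping intervals (`a ≤ c ≤ b ≤ d`). -/
theorem ostrowski_overlapping
    {E : Type*} [NormedAddCommGroup E] [NormedSpace ℝ E] [CompleteSpace E]
    (a b c d : ℝ) (hab : a < b) (hcd : c < d) (hac : a ≤ c) (hcb : c ≤ b) (hbd : b ≤ d)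
    (M m : ℝ) (hM : M = max (b - a) (d - c)) (hm : m = min (b - a) (d - c))
    (ω : ℝ → ℝ) (hω : IsModulus ω)
    (f : ℝ → E) (hf : HHolder ω a d f) :
    ‖((b - a)⁻¹ • ∫ t in a..b, f t) - (d - c)⁻¹ • ∫ t in c..d, f t‖ ≤
      (1 / (M + m)) * (∫ s in (M * (b - c) / m)..(d - a), ω s) +
        ((M - m) / M ^ 2) * ∫ s in (0:ℝ)..(M * (b - c) / m), ω s := by
  rcases le_total (d - c) (b - a) with hcase | hcase
  · exact ostrowski_core a b c d hab hcd hac hcb hbd hcase M m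
      (hM.trans (max_eq_left hcase)) (hm.trans (min_eq_right hcase)) ω hω f hf
  · have hg : HHolder ω a d (fun t => f (a + d - t)) := by
      intro s hs t ht
      rw [Set.mem_Icc] at hs ht
      have h1 : a + d - s ∈ Set.Icc a d := Set.mem_Icc.mpr ⟨by linarith [hs.2], by linarith [hs.1]⟩
      have h2 : a + d - t ∈ Set.Icc a d := Set.mem_Icc.mpr ⟨by linarith [ht.2], by linarith [ht.1]⟩
      have h3 := hf (a + d - s) h1 (a + d - t) h2
      have he : |(a + d - t) - (a + d - s)| = |t - s| := by
        rw [abs_sub_comm, show (a + d - s) - (a + d - t) = t - s by ring]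
      rw [he] at h3
      exact h3
    have key := ostrowski_core a (a + d - c) (a + d - b) d (by linarith) (by linarith)
      (by linarith) (by linarith) (by linarith) (by linarith) M m
      (by rw [hM, max_eq_right hcase]; ring) (by rw [hm, min_eq_left hcase]; ring)
      ω hω _ hg
    have e₁ : (∫ t in a..(a + d - c), f (a + d - t)) = ∫ t in c..d, f t := by
      rw [integral_comp_sub_left f (a + d), show a + d - (a + d - c) = c by ring,
        show a + d - a = d by ring]
    have e₂ : (∫ t in (a + d - b)..d, f (a + d - t)) = ∫ t in a..b, f t := by
      rw [integral_comp_sub_left f (a + d), show a + d - d = a by ring,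
        show a + d - (a + d - b) = b by ring]
    beta_reduce at key
    rw [e₁, e₂, show a + d - c - a = d - c by ring, show d - (a + d - b) = b - a by ring,
      show a + d - c - (a + d - b) = b - c by ring, norm_sub_rev] at key
    exact key
end

section
/- Ostrowski-type inequality, case of disjoint intervals: Let a < b ≤ c < d, and set M = max{b−a, d−c}, m = min{b−a, d−c}. Then for every modulus of continuity ω, every real Banach space E, and every f ∈ H^ω([a,d],E), ‖(1/(b−a))∫_a^b f(t) dt − (1/(d−c))∫_c^d f(t) dt‖ ≤ (1/(M+m))·∫_{c−b}^{d−a} ω(s) ds. -/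
open MeasureTheory Set

/-- Ostrowski-type inequality, case of disjoint intervals (`a < b ≤ c < d`). -/
theorem ostrowski_disjoint
    {E : Type*} [NormedAddCommGroup E] [NormedSpace ℝ E] [CompleteSpace E]
    (a b c d : ℝ) (hab : a < b) (hbc : b ≤ c) (hcd : c < d)
    (M m : ℝ) (hM : M = max (b - a) (d - c)) (hm : m = min (b - a) (d - c))
    (ω : ℝ → ℝ) (hω : IsModulus ω)
    (f : ℝ → E) (hf : HHolder ω a d f) :
    ‖((b - a)⁻¹ • ∫ t in a..b, f t) - (d - c)⁻¹ • ∫ t in c..d, f t‖ ≤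
      (1 / (M + m)) * ∫ s in (c - b)..(d - a), ω s := by
  obtain ⟨hω0, hωc, hωm, hωsub⟩ := hω
  have had : a < d := lt_of_lt_of_le hab (le_of_lt (lt_of_le_of_lt hbc hcd))
  -- f is continuous on [a, d]
  have hfc : ContinuousOn f (Icc a d) := by
    intro x hx
    rw [ContinuousWithinAt, tendsto_iff_norm_sub_tendsto_zero]
    have h1 : Filter.Tendsto (fun t => |t - x|) (nhdsWithin x (Icc a d))
        (nhdsWithin 0 (Ici 0)) := by
      apply tendsto_nhdsWithin_of_tendsto_nhds_of_eventually_within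
      · have : Filter.Tendsto (fun t : ℝ => |t - x|) (nhds x) (nhds |x - x|) :=
          ((continuous_id.sub continuous_const).abs.tendsto x)
        simpa using this.mono_left nhdsWithin_le_nhds
      · exact Filter.Eventually.of_forall fun t => Set.mem_Ici.2 (abs_nonneg _)
    have h2 : Filter.Tendsto (fun t => ω |t - x|) (nhdsWithin x (Icc a d)) (nhds 0) := by
      have := (hωc 0 Set.self_mem_Ici).tendsto.comp h1
      rwa [hω0] at this
    apply squeeze_zero' ?_ ?_ h2
    · exact Filter.Eventually.of_forall fun t => norm_nonneg _
    · filter_upwards [eventually_mem_nhdsWithin] with t ht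
      exact hf x hx t ht
  have hu0 : (0:ℝ) < b - a := by linarith
  have hv0 : (0:ℝ) < d - c := by linarith
  -- reparametrizations
  have e1 : (b - a)⁻¹ • ∫ t in a..b, f t = ∫ r in (0:ℝ)..1, f (-(b - a) * r + b) := by
    rw [intervalIntegral.integral_comp_mul_add f (by linarith : -(b - a) ≠ 0) b,
      show -(b - a) * 0 + b = b by ring, show -(b - a) * 1 + b = a by ring,
      show ((-(b - a))⁻¹ : ℝ) = -(b - a)⁻¹ by rw [neg_inv],
      neg_smul, ← smul_neg, ← intervalIntegral.integral_symm]
  have e2 : (d - c)⁻¹ • ∫ t in c..d, f t = ∫ r in (0:ℝ)..1, f ((d - c) * r + c) := by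
    rw [intervalIntegral.integral_comp_mul_add f (by linarith : (d - c) ≠ 0) c,
      show (d - c) * 0 + c = c by ring, show (d - c) * 1 + c = d by ring]
  -- continuity of the reparametrized integrands
  have hmap1 : ∀ r ∈ Icc (0:ℝ) 1, -(b - a) * r + b ∈ Icc a d := by
    intro r hr
    obtain ⟨h0, h1⟩ := hr
    constructor <;> nlinarith
  have hmap2 : ∀ r ∈ Icc (0:ℝ) 1, (d - c) * r + c ∈ Icc a d := by
    intro r hr
    obtain ⟨h0, h1⟩ := hr
    constructor <;> nlinarith
  have hg1 : ContinuousOn (fun r => f (-(b - a) * r + b)) (Icc (0:ℝ) 1) :=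
    hfc.comp ((continuous_const.mul continuous_id).add continuous_const).continuousOn hmap1
  have hg2 : ContinuousOn (fun r => f ((d - c) * r + c)) (Icc (0:ℝ) 1) :=
    hfc.comp ((continuous_const.mul continuous_id).add continuous_const).continuousOn hmap2
  have hi1 : IntervalIntegrable (fun r => f (-(b - a) * r + b)) volume 0 1 :=
    (hg1.mono (by rw [uIcc_of_le zero_le_one])).intervalIntegrable
  have hi2 : IntervalIntegrable (fun r => f ((d - c) * r + c)) volume 0 1 :=
    (hg2.mono (by rw [uIcc_of_le zero_le_one])).intervalIntegrable
  -- the ω-composition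
  set K : ℝ := (b - a) + (d - c) with hK
  have hK0 : 0 < K := by simp [hK]; linarith
  have hmapω : ∀ r ∈ Icc (0:ℝ) 1, K * r + (c - b) ∈ Ici (0:ℝ) := by
    intro r hr
    obtain ⟨h0, h1⟩ := hr
    simp only [mem_Ici]
    nlinarith
  have hgω : ContinuousOn (fun r => ω (K * r + (c - b))) (Icc (0:ℝ) 1) :=
    hωc.comp ((continuous_const.mul continuous_id).add continuous_const).continuousOn hmapω
  have hiω : IntervalIntegrable (fun r => ω (K * r + (c - b))) volume 0 1 :=
    (hgω.mono (by rw [uIcc_of_le zero_le_one])).intervalIntegrable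
  -- main estimate
  have key : ‖∫ r in (0:ℝ)..1, (f (-(b - a) * r + b) - f ((d - c) * r + c))‖ ≤
      ∫ r in (0:ℝ)..1, ω (K * r + (c - b)) := by
    refine le_trans (intervalIntegral.norm_integral_le_integral_norm zero_le_one) ?_
    refine intervalIntegral.integral_mono_on zero_le_one ((hi1.sub hi2).norm) hiω ?_
    intro r hr
    have h1 := hmap1 r hr
    have h2 := hmap2 r hr
    have := hf _ h1 _ h2
    rw [show |(d - c) * r + c - (-(b - a) * r + b)| = K * r + (c - b) by
      rw [abs_of_nonneg (by obtain ⟨h0, h1⟩ := hr; nlinarith)]; ring] at this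
    calc ‖f (-(b - a) * r + b) - f ((d - c) * r + c)‖
        = ‖f ((d - c) * r + c) - f (-(b - a) * r + b)‖ := norm_sub_rev _ _
      _ ≤ ω (K * r + (c - b)) := this
  -- final computation
  have efin : ∫ r in (0:ℝ)..1, ω (K * r + (c - b)) =
      (1 / (M + m)) * ∫ s in (c - b)..(d - a), ω s := by
    rw [intervalIntegral.integral_comp_mul_add ω (ne_of_gt hK0) (c - b),
      show K * 0 + (c - b) = c - b by ring, show K * 1 + (c - b) = d - a by simp [hK]; ring,
      smul_eq_mul, hM, hm, show max (b - a) (d - c) + min (b - a) (d - c) = K by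
        rw [max_add_min], one_div]
  calc ‖((b - a)⁻¹ • ∫ t in a..b, f t) - (d - c)⁻¹ • ∫ t in c..d, f t‖
      = ‖∫ r in (0:ℝ)..1, (f (-(b - a) * r + b) - f ((d - c) * r + c))‖ := by
        rw [e1, e2, intervalIntegral.integral_sub hi1 hi2]
    _ ≤ ∫ r in (0:ℝ)..1, ω (K * r + (c - b)) := key
    _ = (1 / (M + m)) * ∫ s in (c - b)..(d - a), ω s := efin
end

section
/- Ostrowski-type inequality for a concentric subinterval: Let a ≤ c < d ≤ b with c + d = a + b (the midpoints of [a,b] and [c,d] coincide). Then for every modulus of continuity ω, every real Banach space E, and every f ∈ H^ω([a,b],E), ‖∫_a^b f(t) dt − ((b−a)/(d−c))∫_c^d f(t) dt‖ ≤ (4(c−a)/(b−a))·∫_0^{(b−a)/2} ω(t) dt. -/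
open MeasureTheory Set

set_option maxHeartbeats 2000000 in
/-- Ostrowski-type inequality for a concentric subinterval (`c + d = a + b`). -/
theorem ostrowski_concentric
    {E : Type*} [NormedAddCommGroup E] [NormedSpace ℝ E] [CompleteSpace E]
    (a b c d : ℝ) (hac : a ≤ c) (hcd : c < d) (hdb : d ≤ b) (hmid : c + d = a + b)
    (ω : ℝ → ℝ) (hω : IsModulus ω)
    (f : ℝ → E) (hf : HHolder ω a b f) :
    ‖(∫ t in a..b, f t) - ((b - a) / (d - c)) • ∫ t in c..d, f t‖ ≤
      (4 * (c - a) / (b - a)) * ∫ t in (0:ℝ)..((b - a) / 2), ω t := by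
  obtain ⟨hω0, hωc, hωm, -⟩ := hω
  have hab : a < b := lt_of_le_of_lt hac (lt_of_lt_of_le hcd hdb)
  rcases eq_or_lt_of_le hac with h | hac'
  · have hd : d = b := by linarith
    have h1 : (b - a) / (d - c) = 1 := by
      rw [← h, hd]; exact div_self (ne_of_gt (by linarith))
    have h2 : 4 * (c - a) / (b - a) = 0 := by rw [← h]; simp
    rw [h1, one_smul, h2, zero_mul, ← h, hd, sub_self, norm_zero]
  · have hca : 0 < c - a := sub_pos.2 hac'
    have hdc : 0 < d - c := sub_pos.2 hcd
    have hbd : b - d = c - a := by linarith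
    -- continuity of f on [a,b]
    have hfc : ContinuousOn f (Icc a b) := by
      intro s hs
      rw [ContinuousWithinAt, tendsto_iff_norm_sub_tendsto_zero]
      have habs : Filter.Tendsto (fun t : ℝ => |t - s|) (nhdsWithin s (Icc a b))
          (nhdsWithin 0 (Ici 0)) := by
        apply tendsto_nhdsWithin_of_tendsto_nhds_of_eventually_within
        · have h2 : Filter.Tendsto (fun t : ℝ => |t - s|) (nhds s) (nhds |s - s|) :=
            ((continuous_id.sub continuous_const).abs).tendsto s
          simpa using h2.mono_left nhdsWithin_le_nhds
        · exact Filter.Eventually.of_forall fun t => mem_Ici.mpr (abs_nonneg _)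
      have hωt : Filter.Tendsto (fun t : ℝ => ω |t - s|) (nhdsWithin s (Icc a b)) (nhds 0) := by
        have := (hωc 0 (self_mem_Ici)).tendsto
        rw [hω0] at this
        exact this.comp habs
      refine squeeze_zero' ?_ ?_ hωt
      · exact Filter.Eventually.of_forall fun t => norm_nonneg _
      · filter_upwards [self_mem_nhdsWithin] with t ht
        exact hf s hs t ht
    obtain ⟨l, hl⟩ : ∃ l : ℝ, l = (d - c) / (2 * (c - a)) := ⟨_, rfl⟩
    have hl0 : 0 < l := hl ▸ div_pos hdc (by linarith)
    have hlca : l * (c - a) = (d - c) / 2 := by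
      rw [hl]; field_simp
    have h1l : (1 + l) * (c - a) = (b - a) / 2 := by
      rw [add_mul, one_mul, hlca]; linarith
    have h1lpos : (0:ℝ) < 1 + l := by linarith
    -- interval integrability of f on subintervals of [a,b]
    have hif : ∀ p q : ℝ, a ≤ p → p ≤ q → q ≤ b → IntervalIntegrable f volume p q :=
      fun p q h1 h2 h3 => (hfc.mono (by rw [uIcc_of_le h2]; exact Icc_subset_Icc h1 h3)).intervalIntegrable
    have hm1 : c ≤ (a + b) / 2 := by linarith
    have hm2 : (a + b) / 2 ≤ d := by linarith
    -- the two reflection maps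
    have hmaps1 : ∀ t ∈ Icc a c, (-l) * t + (1 + l) * c ∈ Icc a b := by
      intro t ht
      obtain ⟨ht1, ht2⟩ := ht
      constructor
      · nlinarith [mul_nonneg hl0.le (sub_nonneg.2 ht2)]
      · nlinarith [mul_le_mul_of_nonneg_left (show c - t ≤ c - a by linarith) hl0.le]
    have hmaps2 : ∀ t ∈ Icc d b, (-l) * t + (1 + l) * d ∈ Icc a b := by
      intro t ht
      obtain ⟨ht1, ht2⟩ := ht
      constructor
      · nlinarith [mul_le_mul_of_nonneg_left (show t - d ≤ b - d by linarith) hl0.le]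
      · nlinarith [mul_nonneg hl0.le (sub_nonneg.2 ht1)]
    have hcomp1 : IntervalIntegrable (fun t => f ((-l) * t + (1 + l) * c)) volume a c := by
      apply ContinuousOn.intervalIntegrable
      apply hfc.comp (Continuous.continuousOn (by continuity))
      rw [uIcc_of_le hac]
      exact hmaps1
    have hcomp2 : IntervalIntegrable (fun t => f ((-l) * t + (1 + l) * d)) volume d b := by
      apply ContinuousOn.intervalIntegrable
      apply hfc.comp (Continuous.continuousOn (by continuity))
      rw [uIcc_of_le hdb]
      exact hmaps2
    -- substitutions for f
    have ep1 : (-l) * a + (1 + l) * c = (a + b) / 2 := by linear_combination hlca + hmid / 2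
    have ep2 : (-l) * c + (1 + l) * c = c := by ring
    have ep3 : (-l) * d + (1 + l) * d = d := by ring
    have ep4 : (-l) * b + (1 + l) * d = (a + b) / 2 := by
      linear_combination (-l) * hbd - hlca + hmid / 2
    have e1 : (∫ t in a..c, f ((-l) * t + (1 + l) * c)) = l⁻¹ • ∫ t in c..(a + b) / 2, f t := by
      rw [intervalIntegral.integral_comp_mul_add f (neg_ne_zero.mpr hl0.ne') ((1 + l) * c),
        ep1, ep2,
        intervalIntegral.integral_symm c ((a + b) / 2), inv_neg, neg_smul, smul_neg, neg_neg]
    have e2 : (∫ t in d..b, f ((-l) * t + (1 + l) * d)) = l⁻¹ • ∫ t in ((a + b) / 2)..d, f t := by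
      rw [intervalIntegral.integral_comp_mul_add f (neg_ne_zero.mpr hl0.ne') ((1 + l) * d),
        ep3, ep4,
        intervalIntegral.integral_symm ((a + b) / 2) d, inv_neg, neg_smul, smul_neg, neg_neg]
    -- coefficient identity
    have hcoef : (b - a) / (d - c) = 1 + l⁻¹ := by
      rw [hl, inv_div]
      field_simp
      linarith
    -- key decomposition
    have key : (∫ t in a..b, f t) - ((b - a) / (d - c)) • ∫ t in c..d, f t
        = (∫ t in a..c, (f t - f ((-l) * t + (1 + l) * c)))
          + ∫ t in d..b, (f t - f ((-l) * t + (1 + l) * d)) := by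
      rw [intervalIntegral.integral_sub (hif a c le_rfl hac (by linarith)) hcomp1,
        intervalIntegral.integral_sub (hif d b (by linarith) hdb le_rfl) hcomp2, e1, e2,
        hcoef, add_smul, one_smul,
        ← intervalIntegral.integral_add_adjacent_intervals
          (hif a d le_rfl (by linarith) hdb) (hif d b (by linarith) hdb le_rfl),
        ← intervalIntegral.integral_add_adjacent_intervals
          (hif a c le_rfl hac (by linarith)) (hif c d (by linarith) hcd.le hdb),
        show (∫ t in c..d, f t) = (∫ t in c..(a + b) / 2, f t) + ∫ t in ((a + b) / 2)..d, f t from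
          (intervalIntegral.integral_add_adjacent_intervals
            (hif c ((a + b) / 2) hac hm1 (by linarith))
            (hif ((a + b) / 2) d (by linarith) hm2 hdb)).symm,
        smul_add]
      abel
    -- ω integrability
    have hωint : IntervalIntegrable ω volume 0 ((b - a) / 2) := by
      apply ContinuousOn.intervalIntegrable
      apply hωc.mono
      rw [uIcc_of_le (by linarith : (0:ℝ) ≤ (b - a) / 2)]
      exact fun x hx => hx.1
    -- norm bounds for the two pieces
    have hωcomp1 : IntervalIntegrable (fun t => ω ((-(1 + l)) * t + (1 + l) * c)) volume a c := by
      apply ContinuousOn.intervalIntegrable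
      apply hωc.comp (Continuous.continuousOn (by continuity))
      rw [uIcc_of_le hac]
      intro t ht
      simp only [mem_Ici]
      nlinarith [ht.2]
    have hωcomp2 : IntervalIntegrable (fun t => ω ((1 + l) * t + (-((1 + l) * d)))) volume d b := by
      apply ContinuousOn.intervalIntegrable
      apply hωc.comp (Continuous.continuousOn (by continuity))
      rw [uIcc_of_le hdb]
      intro t ht
      simp only [mem_Ici]
      nlinarith [ht.1]
    have bound1 : ‖∫ t in a..c, (f t - f ((-l) * t + (1 + l) * c))‖
        ≤ ∫ t in a..c, ω ((-(1 + l)) * t + (1 + l) * c) := by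
      refine (intervalIntegral.norm_integral_le_integral_norm hac).trans ?_
      apply intervalIntegral.integral_mono_on hac
      · apply ContinuousOn.intervalIntegrable
        apply ContinuousOn.norm
        apply ContinuousOn.sub
        · apply hfc.mono
          rw [uIcc_of_le hac]; exact Icc_subset_Icc le_rfl (by linarith)
        · apply hfc.comp (Continuous.continuousOn (by continuity))
          rw [uIcc_of_le hac]; exact hmaps1
      · exact hωcomp1
      · intro t ht
        have h1 := hf ((-l) * t + (1 + l) * c) (hmaps1 t ht) t ⟨ht.1, le_trans ht.2 (by linarith)⟩
        have habs : |t - ((-l) * t + (1 + l) * c)| = (-(1 + l)) * t + (1 + l) * c := by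
          rw [abs_of_nonpos (by nlinarith [ht.2])]; ring
        rwa [habs] at h1
    have bound2 : ‖∫ t in d..b, (f t - f ((-l) * t + (1 + l) * d))‖
        ≤ ∫ t in d..b, ω ((1 + l) * t + (-((1 + l) * d))) := by
      refine (intervalIntegral.norm_integral_le_integral_norm hdb).trans ?_
      apply intervalIntegral.integral_mono_on hdb
      · apply ContinuousOn.intervalIntegrable
        apply ContinuousOn.norm
        apply ContinuousOn.sub
        · apply hfc.mono
          rw [uIcc_of_le hdb]; exact Icc_subset_Icc (by linarith) le_rfl
        · apply hfc.comp (Continuous.continuousOn (by continuity))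
          rw [uIcc_of_le hdb]; exact hmaps2
      · exact hωcomp2
      · intro t ht
        have h1 := hf ((-l) * t + (1 + l) * d) (hmaps2 t ht) t ⟨le_trans (by linarith) ht.1, ht.2⟩
        have habs : |t - ((-l) * t + (1 + l) * d)| = (1 + l) * t + (-((1 + l) * d)) := by
          rw [abs_of_nonneg (by nlinarith [ht.1])]; ring
        rwa [habs] at h1
    -- substitutions for ω
    have subst1 : (∫ t in a..c, ω ((-(1 + l)) * t + (1 + l) * c))
        = (1 + l)⁻¹ * ∫ u in (0:ℝ)..((b - a) / 2), ω u := by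
      rw [intervalIntegral.integral_comp_mul_add ω (neg_ne_zero.mpr h1lpos.ne') ((1 + l) * c),
        show (-(1 + l)) * a + (1 + l) * c = (b - a) / 2 by linear_combination h1l,
        show (-(1 + l)) * c + (1 + l) * c = 0 by ring,
        intervalIntegral.integral_symm 0 ((b - a) / 2), inv_neg, neg_smul, smul_neg, neg_neg,
        smul_eq_mul]
    have subst2 : (∫ t in d..b, ω ((1 + l) * t + (-((1 + l) * d))))
        = (1 + l)⁻¹ * ∫ u in (0:ℝ)..((b - a) / 2), ω u := by
      rw [intervalIntegral.integral_comp_mul_add ω h1lpos.ne' ((-((1 + l) * d))),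
        show (1 + l) * d + (-((1 + l) * d)) = 0 by ring,
        show (1 + l) * b + (-((1 + l) * d)) = (b - a) / 2 by linear_combination (1 + l) * hbd + h1l,
        smul_eq_mul]
    have hfac : (1 + l)⁻¹ = 2 * (c - a) / (b - a) := by
      have : 1 + l = (b - a) / (2 * (c - a)) := by
        rw [eq_div_iff (by linarith : 2 * (c - a) ≠ 0)]; linarith
      rw [this, inv_div]
    calc ‖(∫ t in a..b, f t) - ((b - a) / (d - c)) • ∫ t in c..d, f t‖
        ≤ ‖∫ t in a..c, (f t - f ((-l) * t + (1 + l) * c))‖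
          + ‖∫ t in d..b, (f t - f ((-l) * t + (1 + l) * d))‖ := by
          rw [key]; exact norm_add_le _ _
      _ ≤ (1 + l)⁻¹ * (∫ u in (0:ℝ)..((b - a) / 2), ω u)
          + (1 + l)⁻¹ * ∫ u in (0:ℝ)..((b - a) / 2), ω u := by
          exact add_le_add (bound1.trans_eq subst1) (bound2.trans_eq subst2)
      _ = (4 * (c - a) / (b - a)) * ∫ t in (0:ℝ)..((b - a) / 2), ω t := by
          rw [hfac]; ring
end

section
/- Sharp Ostrowski-type inequality for a symmetric pair of values: Let a < b and a ≤ t < (a+b)/2. Then for every modulus of continuity ω, every real Banach space E, and every f ∈ H^ω([a,b],E), ‖(1/2)(f(t) + f(a+b−t)) − (1/(b−a))∫_a^b f(u) du‖ ≤ (2/(b−a))·( ∫_0^{t−a} ω(u) du + ∫_0^{(a+b−2t)/2} ω(u) du ). Moreover, for any unit vector x ∈ E the function f(u) = min{ω(|u−t|), ω(|u+t−a−b|)}·x turns the inequality into equality. -/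
open MeasureTheory Set

open Filter Topology

lemma mod_nonneg {ω : ℝ → ℝ} (hω : IsModulus ω) {y : ℝ} (hy : 0 ≤ y) : 0 ≤ ω y := by
  have := hω.2.2.1 (mem_Ici.mpr (le_refl 0)) (mem_Ici.mpr hy) hy
  rw [hω.1] at this; exact this

lemma mod_cont {ω : ℝ → ℝ} (hω : IsModulus ω) (t : ℝ) :
    Continuous fun u => ω |u - t| :=
  hω.2.1.comp_continuous (by continuity) (fun x => mem_Ici.mpr (abs_nonneg _))

lemma mod_int0 {ω : ℝ → ℝ} (hω : IsModulus ω) {y : ℝ} (hy : 0 ≤ y) :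
    IntervalIntegrable ω volume 0 y := by
  apply ContinuousOn.intervalIntegrable
  apply hω.2.1.mono
  rw [uIcc_of_le hy]
  exact Icc_subset_Ici_self

lemma mod_shift {ω : ℝ → ℝ} (hω : IsModulus ω) {p q r : ℝ} (hpq : p ≤ q) (hqr : q ≤ r) :
    ∫ u in p..r, ω |u - q| = (∫ u in (0:ℝ)..(q - p), ω u) + ∫ u in (0:ℝ)..(r - q), ω u := by
  have h1 : IntervalIntegrable (fun u => ω |u - q|) volume p q :=
    (mod_cont hω q).intervalIntegrable _ _
  have h2 : IntervalIntegrable (fun u => ω |u - q|) volume q r :=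
    (mod_cont hω q).intervalIntegrable _ _
  rw [← intervalIntegral.integral_add_adjacent_intervals h1 h2]
  congr 1
  · have : ∫ u in p..q, ω |u - q| = ∫ u in p..q, ω (q - u) := by
      apply intervalIntegral.integral_congr
      intro u hu
      rw [uIcc_of_le hpq] at hu
      show ω |u - q| = ω (q - u)
      rw [abs_of_nonpos (by linarith [hu.2]), neg_sub]
    rw [this, intervalIntegral.integral_comp_sub_left ω q, sub_self]
  · have : ∫ u in q..r, ω |u - q| = ∫ u in q..r, ω (u - q) := by
      apply intervalIntegral.integral_congr
      intro u hu
      rw [uIcc_of_le hqr] at hu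
      show ω |u - q| = ω (u - q)
      rw [abs_of_nonneg (by linarith [hu.1])]
    rw [this, intervalIntegral.integral_comp_sub_right ω q, sub_self]

lemma holder_contOn {E : Type*} [NormedAddCommGroup E] {ω : ℝ → ℝ} (hω : IsModulus ω)
    {a b : ℝ} {f : ℝ → E} (hf : HHolder ω a b f) : ContinuousOn f (Icc a b) := by
  intro u hu
  have habs : Tendsto (fun v => |v - u|) (𝓝[Icc a b] u) (𝓝[Ici 0] 0) := by
    apply tendsto_nhdsWithin_of_tendsto_nhds_of_eventually_within
    · have : Tendsto (fun v : ℝ => |v - u|) (𝓝 u) (𝓝 |u - u|) := by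
        apply Continuous.tendsto; continuity
      simpa using this.mono_left nhdsWithin_le_nhds
    · exact Filter.Eventually.of_forall fun v => mem_Ici.mpr (abs_nonneg _)
  have hω0 : Tendsto (fun v => ω |v - u|) (𝓝[Icc a b] u) (𝓝 0) := by
    have := ((hω.2.1 0 (mem_Ici.mpr (le_refl 0))).tendsto.comp habs)
    rwa [hω.1] at this
  rw [ContinuousWithinAt, tendsto_iff_norm_sub_tendsto_zero]
  refine squeeze_zero' (Filter.Eventually.of_forall fun v => norm_nonneg _) ?_ hω0
  filter_upwards [self_mem_nhdsWithin] with v hv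
  exact hf u hu v hv

/-- Sharp Ostrowski-type inequality for a symmetric pair of values of `f ∈ H^ω([a,b],E)`,
together with sharpness. -/
theorem ostrowski_symmetric_pair_sharp
    {E : Type*} [NormedAddCommGroup E] [NormedSpace ℝ E] [CompleteSpace E]
    (a b t : ℝ) (hab : a < b) (hat : a ≤ t) (ht : t < (a + b) / 2)
    (ω : ℝ → ℝ) (hω : IsModulus ω) :
    (∀ f : ℝ → E, HHolder ω a b f →
        ‖(1 / 2 : ℝ) • (f t + f (a + b - t)) - (b - a)⁻¹ • ∫ u in a..b, f u‖ ≤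
          (2 / (b - a)) *
            ((∫ u in (0:ℝ)..(t - a), ω u) + ∫ u in (0:ℝ)..((a + b - 2 * t) / 2), ω u)) ∧
      ∀ x : E, ‖x‖ = 1 →
        ‖(1 / 2 : ℝ) •
              ((min (ω |t - t|) (ω |t + t - a - b|)) • x +
                (min (ω |a + b - t - t|) (ω |(a + b - t) + t - a - b|)) • x) -
            (b - a)⁻¹ • ∫ u in a..b, (min (ω |u - t|) (ω |u + t - a - b|)) • x‖ =
          (2 / (b - a)) *
            ((∫ u in (0:ℝ)..(t - a), ω u) + ∫ u in (0:ℝ)..((a + b - 2 * t) / 2), ω u) := by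
  have hba : (0:ℝ) < b - a := by linarith
  have hba' : b - a ≠ 0 := ne_of_gt hba
  have hac : a ≤ (a + b) / 2 := by linarith
  have hcb : (a + b) / 2 ≤ b := by linarith
  have htc : t ≤ (a + b) / 2 := le_of_lt ht
  have hcs : (a + b) / 2 ≤ a + b - t := by linarith
  have hsb : a + b - t ≤ b := by linarith
  have htmem : t ∈ Icc a b := ⟨hat, by linarith⟩
  have hsmem : a + b - t ∈ Icc a b := ⟨by linarith, hsb⟩
  -- endpoint rewrites
  have e1 : (a + b) / 2 - t = (a + b - 2 * t) / 2 := by ring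
  have e2 : a + b - t - (a + b) / 2 = (a + b - 2 * t) / 2 := by ring
  have e3 : b - (a + b - t) = t - a := by ring
  have IA : ∫ u in a..((a+b)/2), ω |u - t|
      = (∫ u in (0:ℝ)..(t - a), ω u) + ∫ u in (0:ℝ)..((a + b - 2 * t) / 2), ω u := by
    rw [mod_shift hω hat htc, e1]
  have IB : ∫ u in ((a+b)/2)..b, ω |u - (a + b - t)|
      = (∫ u in (0:ℝ)..((a + b - 2 * t) / 2), ω u) + ∫ u in (0:ℝ)..(t - a), ω u := by
    rw [mod_shift hω hcs hsb, e2, e3]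
  constructor
  · intro f hf
    have hfc : ContinuousOn f (Icc a b) := holder_contOn hω hf
    have hfi1 : IntervalIntegrable f volume a ((a+b)/2) := by
      apply ContinuousOn.intervalIntegrable
      apply hfc.mono
      rw [uIcc_of_le hac]
      exact Icc_subset_Icc le_rfl hcb
    have hfi2 : IntervalIntegrable f volume ((a+b)/2) b := by
      apply ContinuousOn.intervalIntegrable
      apply hfc.mono
      rw [uIcc_of_le hcb]
      exact Icc_subset_Icc hac le_rfl
    have key : (1 / 2 : ℝ) • (f t + f (a + b - t)) - (b - a)⁻¹ • ∫ u in a..b, f u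
        = (b - a)⁻¹ • ((∫ u in a..((a+b)/2), (f t - f u))
            + ∫ u in ((a+b)/2)..b, (f (a + b - t) - f u)) := by
      rw [intervalIntegral.integral_sub intervalIntegrable_const hfi1,
          intervalIntegral.integral_sub intervalIntegrable_const hfi2,
          intervalIntegral.integral_const, intervalIntegral.integral_const,
          ← intervalIntegral.integral_add_adjacent_intervals hfi1 hfi2]
      match_scalars <;> field_simp <;> ring
    rw [key, norm_smul, norm_inv, Real.norm_eq_abs, abs_of_pos hba]
    have n1 : ‖∫ u in a..((a+b)/2), (f t - f u)‖ ≤ ∫ u in a..((a+b)/2), ω |u - t| := by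
      refine le_trans (intervalIntegral.norm_integral_le_integral_norm hac) ?_
      apply intervalIntegral.integral_mono_on hac ?_ ((mod_cont hω t).intervalIntegrable _ _)
      · intro u hu
        have hu' : u ∈ Icc a b := ⟨hu.1, le_trans hu.2 hcb⟩
        have := hf u hu' t htmem
        rwa [abs_sub_comm] at this
      · apply ContinuousOn.intervalIntegrable
        apply ContinuousOn.norm
        apply ContinuousOn.sub continuousOn_const
        apply hfc.mono
        rw [uIcc_of_le hac]
        exact Icc_subset_Icc le_rfl hcb
    have n2 : ‖∫ u in ((a+b)/2)..b, (f (a + b - t) - f u)‖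
        ≤ ∫ u in ((a+b)/2)..b, ω |u - (a + b - t)| := by
      refine le_trans (intervalIntegral.norm_integral_le_integral_norm hcb) ?_
      apply intervalIntegral.integral_mono_on hcb ?_
        ((mod_cont hω (a + b - t)).intervalIntegrable _ _)
      · intro u hu
        have hu' : u ∈ Icc a b := ⟨le_trans hac hu.1, hu.2⟩
        have := hf u hu' (a + b - t) hsmem
        rwa [abs_sub_comm] at this
      · apply ContinuousOn.intervalIntegrable
        apply ContinuousOn.norm
        apply ContinuousOn.sub continuousOn_const
        apply hfc.mono
        rw [uIcc_of_le hcb]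
        exact Icc_subset_Icc hac le_rfl
    calc (b - a)⁻¹ * ‖(∫ u in a..((a+b)/2), (f t - f u))
            + ∫ u in ((a+b)/2)..b, (f (a + b - t) - f u)‖
        ≤ (b - a)⁻¹ * (‖∫ u in a..((a+b)/2), (f t - f u)‖
            + ‖∫ u in ((a+b)/2)..b, (f (a + b - t) - f u)‖) := by
          apply mul_le_mul_of_nonneg_left (norm_add_le _ _) (by positivity)
      _ ≤ (b - a)⁻¹ * ((∫ u in a..((a+b)/2), ω |u - t|)
            + ∫ u in ((a+b)/2)..b, ω |u - (a + b - t)|) := by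
          apply mul_le_mul_of_nonneg_left (add_le_add n1 n2) (by positivity)
      _ = (2 / (b - a)) *
            ((∫ u in (0:ℝ)..(t - a), ω u) + ∫ u in (0:ℝ)..((a + b - 2 * t) / 2), ω u) := by
          rw [IA, IB]; field_simp; ring
  · intro x hx
    have hzero1 : min (ω |t - t|) (ω |t + t - a - b|) = 0 := by
      rw [sub_self, abs_zero, hω.1]
      exact min_eq_left (mod_nonneg hω (abs_nonneg _))
    have hzero2 : min (ω |a + b - t - t|) (ω |(a + b - t) + t - a - b|) = 0 := by
      rw [show (a + b - t) + t - a - b = (0:ℝ) by ring, abs_zero, hω.1]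
      exact min_eq_right (mod_nonneg hω (abs_nonneg _))
    rw [hzero1, hzero2, zero_smul, add_zero, smul_zero, zero_sub, norm_neg]
    simp only [show ∀ u : ℝ, u + t - a - b = u - (a + b - t) from fun u => by ring]
    rw [intervalIntegral.integral_smul_const, smul_smul, norm_smul, hx, mul_one,
        Real.norm_eq_abs]
    have hgc : Continuous fun u => min (ω |u - t|) (ω |u - (a + b - t)|) :=
      (mod_cont hω t).min (mod_cont hω (a + b - t))
    have hsplit : ∫ u in a..b, min (ω |u - t|) (ω |u - (a + b - t)|)
        = (∫ u in a..((a+b)/2), min (ω |u - t|) (ω |u - (a + b - t)|))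
          + ∫ u in ((a+b)/2)..b, min (ω |u - t|) (ω |u - (a + b - t)|) :=
      (intervalIntegral.integral_add_adjacent_intervals
        (hgc.intervalIntegrable _ _) (hgc.intervalIntegrable _ _)).symm
    have hI1 : ∫ u in a..((a+b)/2), min (ω |u - t|) (ω |u - (a + b - t)|)
        = ∫ u in a..((a+b)/2), ω |u - t| := by
      apply intervalIntegral.integral_congr
      intro u hu
      rw [uIcc_of_le hac] at hu
      show min (ω |u - t|) (ω |u - (a + b - t)|) = ω |u - t|
      apply min_eq_left
      apply hω.2.2.1 (mem_Ici.mpr (abs_nonneg _)) (mem_Ici.mpr (abs_nonneg _))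
      rw [abs_of_nonpos (show u - (a + b - t) ≤ 0 by linarith [hu.2]), abs_le]
      constructor <;> [skip; skip] <;> cases' hu with h1 h2 <;> linarith
    have hI2 : ∫ u in ((a+b)/2)..b, min (ω |u - t|) (ω |u - (a + b - t)|)
        = ∫ u in ((a+b)/2)..b, ω |u - (a + b - t)| := by
      apply intervalIntegral.integral_congr
      intro u hu
      rw [uIcc_of_le hcb] at hu
      show min (ω |u - t|) (ω |u - (a + b - t)|) = ω |u - (a + b - t)|
      apply min_eq_right
      apply hω.2.2.1 (mem_Ici.mpr (abs_nonneg _)) (mem_Ici.mpr (abs_nonneg _))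
      rw [abs_of_nonneg (show 0 ≤ u - t by linarith [hu.1]), abs_le]
      constructor <;> cases' hu with h1 h2 <;> linarith
    rw [hsplit, hI1, hI2, IA, IB]
    have P0 : 0 ≤ ∫ u in (0:ℝ)..(t - a), ω u :=
      intervalIntegral.integral_nonneg (by linarith) (fun u hu => mod_nonneg hω hu.1)
    have Q0 : 0 ≤ ∫ u in (0:ℝ)..((a + b - 2 * t) / 2), ω u :=
      intervalIntegral.integral_nonneg (by linarith) (fun u hu => mod_nonneg hω hu.1)
    rw [abs_of_nonneg (by positivity)]
    field_simp
    ring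
end

section
/- Existence of a real-valued extremal function with zero interval means (lower-bound lemma for recovery of the function): Let ω be a modulus of continuity, a < b, n ∈ ℕ with n ≥ 1, h > 0, and let t₁, …, t_n satisfy a ≤ t₁ − h, t_i + h < t_{i+1} − h for i = 1, …, n−1, and t_n + h ≤ b. Then there exists a function f ∈ H^ω([a,b],ℝ) such that ∫_{t_i−h}^{t_i+h} f(t) dt = 0 for every i = 1, …, n and max_{t∈[a,b]} |f(t)| ≥ (1/(2h))·∫_{(b−a)/(2n)−h}^{(b−a)/(2n)+h} ω(u) du. -/
open MeasureTheory Set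

set_option maxHeartbeats 1000000 in
/-- Existence of a real-valued extremal function with zero mean values over the intervals
`[tᵢ − h, tᵢ + h]`, `i = 1, …, n`, and large uniform norm. -/
theorem extremal_zero_means
    (ω : ℝ → ℝ) (hω : IsModulus ω)
    (a b : ℝ) (hab : a < b) (n : ℕ) (hn : 0 < n) (h : ℝ) (hh : 0 < h)
    (t : ℕ → ℝ) (hta : a ≤ t 1 - h)
    (htsep : ∀ i, 1 ≤ i → i < n → t i + h < t (i + 1) - h)
    (htb : t n + h ≤ b) :
    ∃ f : ℝ → ℝ, HHolder ω a b f ∧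
      (∀ i, 1 ≤ i → i ≤ n → ∫ u in (t i - h)..(t i + h), f u = 0) ∧
      ∃ u ∈ Set.Icc a b,
        (1 / (2 * h)) *
            ∫ s in ((b - a) / (2 * (n : ℝ)) - h)..((b - a) / (2 * (n : ℝ)) + h), ω s ≤
          |f u| := by
  obtain ⟨hω0, hωc, hωm, hωsub⟩ := hω
  set β : ℝ := (b - a) / (2 * (n : ℝ)) with hβdef
  have hn' : (0:ℝ) < n := by exact_mod_cast hn
  -- separation of knots
  have hsep : ∀ i j : ℕ, 1 ≤ i → i ≤ j → j ≤ n → 2*h*((j:ℝ) - (i:ℝ)) ≤ t j - t i := by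
    intro i j hi hij
    induction j, hij using Nat.le_induction with
    | base => intro _; simp
    | succ j hj ih =>
      intro hjn
      have h1 : t j + h < t (j+1) - h := htsep j (le_trans hi hj) (by omega)
      have h2 := ih (by omega)
      have h3 : 2*h*((((j:ℕ)+1:ℕ):ℝ) - (i:ℝ)) = 2*h*((j:ℝ) - i) + 2*h := by
        push_cast; ring
      rw [h3]
      linarith
  have hβh : h ≤ β := by
    have h1 := hsep 1 n le_rfl hn le_rfl
    rw [hβdef, le_div_iff₀ (by positivity)]
    have h2 : 2*h*((n:ℝ) - ((1:ℕ):ℝ)) + 2*h = h * (2 * (n:ℝ)) := by push_cast; ring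
    linarith
  have hβ0 : (0:ℝ) ≤ β - h := by linarith
  have hωnn : ∀ x : ℝ, 0 ≤ x → 0 ≤ ω x := by
    intro x hx
    have := hωm (mem_Ici.2 (le_refl (0:ℝ))) (mem_Ici.2 hx) hx
    rw [hω0] at this; exact this
  have hωd : ∀ x y : ℝ, 0 ≤ y → y ≤ x → ω x - ω y ≤ ω (x - y) := by
    intro x y hy hyx
    have := hωsub y (x - y) hy (by linarith)
    rw [show y + (x - y) = x by ring] at this
    linarith
  have hkey : ∀ x y d : ℝ, 0 ≤ y → y ≤ x → x - y ≤ d → |ω x - ω y| ≤ ω d := by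
    intro x y d hy hyx hxd
    have h1 : ω y ≤ ω x := hωm (mem_Ici.2 hy) (mem_Ici.2 (le_trans hy hyx)) hyx
    have h2 : ω x - ω y ≤ ω (x - y) := hωd x y hy hyx
    have h3 : ω (x - y) ≤ ω d := hωm (mem_Ici.2 (by linarith)) (mem_Ici.2 (by linarith)) hxd
    rw [abs_of_nonneg (by linarith)]; linarith
  have hb2 : b - a = 2 * (n:ℝ) * β := by
    rw [hβdef]; field_simp
  -- the pigeonhole choice of (k, p)
  have hchoice : ∃ k : ℕ, ∃ p : ℝ, k ≤ n ∧ a ≤ p ∧ p ≤ b ∧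
      (1 ≤ k → β ≤ p - t k) ∧ (k < n → β ≤ t (k+1) - p) := by
    by_cases h1 : a + β ≤ t 1
    · exact ⟨0, a, Nat.zero_le n, le_refl a, le_of_lt hab,
        fun hk => absurd hk (by omega), fun _ => by linarith⟩
    by_cases h2 : t n + β ≤ b
    · exact ⟨n, b, le_refl n, le_of_lt hab, le_refl b,
        fun _ => by linarith, fun hk => absurd hk (by omega)⟩
    by_cases h3 : ∃ i, 1 ≤ i ∧ i < n ∧ 2*β ≤ t (i+1) - t i
    · obtain ⟨i, hi1, hi2, hi3⟩ := h3
      refine ⟨i, (t i + t (i+1))/2, hi2.le, ?_, ?_, fun _ => by linarith, fun _ => by linarith⟩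
      · have hs := hsep 1 i le_rfl hi1 (by omega)
        have h4 : (0:ℝ) ≤ 2*h*((i:ℝ) - ((1:ℕ):ℝ)) := by
          have : ((1:ℕ):ℝ) ≤ (i:ℝ) := by exact_mod_cast hi1
          have hhh : (0:ℝ) ≤ (i:ℝ) - ((1:ℕ):ℝ) := by linarith
          positivity
        linarith
      · have hs := hsep (i+1) n (by omega) hi2 le_rfl
        have h4 : (0:ℝ) ≤ 2*h*((n:ℝ) - (((i:ℕ)+1:ℕ):ℝ)) := by
          have : (((i:ℕ)+1:ℕ):ℝ) ≤ (n:ℝ) := by exact_mod_cast hi2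
          have hhh : (0:ℝ) ≤ (n:ℝ) - (((i:ℕ)+1:ℕ):ℝ) := by linarith
          positivity
        linarith
    · exfalso
      push_neg at h1 h2 h3
      have key : ∀ j : ℕ, 1 ≤ j → j ≤ n → t j - t 1 ≤ 2*β*((j:ℝ) - 1) := by
        intro j hj
        induction j, hj using Nat.le_induction with
        | base => intro _; simp
        | succ j hj ih =>
          intro hjn
          have h4 := h3 j hj (by omega)
          have h5 := ih (by omega)
          have h6 : 2*β*((((j:ℕ)+1:ℕ):ℝ) - 1) = 2*β*((j:ℝ) - 1) + 2*β := by
            push_cast; ring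
          rw [h6]
          linarith
      have hkn := key n hn le_rfl
      have hn1 : (1:ℝ) ≤ (n:ℝ) := by exact_mod_cast hn
      have h7 : 2*β*((n:ℝ) - 1) + 2*β = 2*(n:ℝ)*β := by ring
      linarith [h1, h2, hkn, hb2]
  obtain ⟨k, p, hkn, hpa, hpb, hpk, hpk1⟩ := hchoice
  -- signs
  obtain ⟨ε, hεcases, hεsucc, hεk1, hεk⟩ :
      ∃ ε : ℕ → ℝ, (∀ m, ε m = 1 ∨ ε m = -1) ∧ (∀ m, ε (m+1) = -ε m) ∧
        ε (k+1) = 1 ∧ ε k = -1 := by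
    refine ⟨fun i => (-1:ℝ)^(i + k + 1), fun m => ?_, fun m => ?_, ?_, ?_⟩
    · rcases Nat.even_or_odd (m + k + 1) with he | ho
      · left; exact he.neg_one_pow
      · right; exact ho.neg_one_pow
    · show (-1:ℝ)^(m+1+k+1) = -(-1:ℝ)^(m+k+1)
      rw [show m+1+k+1 = (m+k+1)+1 by omega, pow_succ]; ring
    · show (-1:ℝ)^(k+1+k+1) = 1
      exact Even.neg_one_pow ⟨k+1, by omega⟩
    · show (-1:ℝ)^(k+k+1) = -1
      exact Odd.neg_one_pow ⟨k, by omega⟩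
  -- the cone family
  obtain ⟨g, hg0, hgj⟩ :
      ∃ g : ℕ → ℝ → ℝ, (∀ u, g 0 u = |u - p|) ∧
        (∀ j, 1 ≤ j → ∀ u, g j u = (β - h) + |u - (t j - ε j * h)|) := by
    refine ⟨fun j u => if j = 0 then |u - p| else (β - h) + |u - (t j - ε j * h)|,
      fun u => by simp, fun j hj u => by simp [show j ≠ 0 by omega]⟩
  have hgnn : ∀ j u, 0 ≤ g j u := by
    intro j u
    rcases Nat.eq_zero_or_pos j with rfl | hj
    · rw [hg0]; positivity
    · rw [hgj j hj]; positivity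
  have hglip : ∀ j u v, g j u ≤ g j v + |u - v| := by
    intro j u v
    have habs : ∀ w : ℝ, |u - w| ≤ |v - w| + |u - v| := by
      intro w
      calc |u - w| = |(v - w) + (u - v)| := by ring_nf
        _ ≤ |v - w| + |u - v| := abs_add_le _ _
    rcases Nat.eq_zero_or_pos j with rfl | hj
    · rw [hg0, hg0]; exact habs p
    · rw [hgj j hj, hgj j hj]
      have := habs (t j - ε j * h)
      linarith
  have hne : (Finset.range (n+1)).Nonempty := ⟨0, Finset.mem_range.2 (by omega)⟩
  obtain ⟨ρ, hρle, hρge⟩ :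
      ∃ ρ : ℝ → ℝ, (∀ u, ∀ j ∈ Finset.range (n+1), ρ u ≤ g j u) ∧
        (∀ u z, (∀ j ∈ Finset.range (n+1), z ≤ g j u) → z ≤ ρ u) :=
    ⟨fun u => (Finset.range (n+1)).inf' hne (fun j => g j u),
      fun u j hj => Finset.inf'_le _ hj, fun u z hz => Finset.le_inf' hne _ hz⟩
  -- lower bound for each cone on a window
  have hlow : ∀ i, 1 ≤ i → i ≤ n → ∀ u, t i - h ≤ u → u ≤ t i + h →
      ∀ j ∈ Finset.range (n+1), β + ε i * (u - t i) ≤ g j u := by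
    intro i hi1 hin u hu1 hu2 j hj
    rw [Finset.mem_range] at hj
    by_cases hj0 : j = 0
    · subst hj0
      rw [hg0]
      by_cases hik : i ≤ k
      · have hk1 : 1 ≤ k := le_trans hi1 hik
        have hd : β + 2*h*((k:ℝ) - (i:ℝ)) ≤ p - t i := by
          have hs := hsep i k hi1 hik hkn
          have := hpk hk1
          linarith
        have habs : p - u ≤ |u - p| := by rw [abs_sub_comm]; exact le_abs_self _
        by_cases hik2 : i = k
        · have he : ε i = -1 := by rw [hik2]; exact hεk
          have he0 : (k:ℝ) - (i:ℝ) = 0 := by rw [hik2]; ring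
          rw [he0, mul_zero] at hd
          rw [he]
          linarith
        · have hik3 : i + 1 ≤ k := by omega
          have hcast : (1:ℝ) ≤ (k:ℝ) - (i:ℝ) := by
            have : (i:ℝ) + 1 ≤ (k:ℝ) := by exact_mod_cast hik3
            linarith
          have h2h : 2*h*1 ≤ 2*h*((k:ℝ) - (i:ℝ)) :=
            mul_le_mul_of_nonneg_left hcast (by linarith)
          rcases hεcases i with e | e <;> rw [e] <;> linarith
      · have hik' : k + 1 ≤ i := by omega
        have hkn' : k < n := by omega
        have hd : β + 2*h*((i:ℝ) - ((k:ℝ)+1)) ≤ t i - p := by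
          have hs := hsep (k+1) i (by omega) hik' hin
          have h5 := hpk1 hkn'
          have h6 : (((k:ℕ)+1:ℕ):ℝ) = (k:ℝ)+1 := by push_cast; ring
          rw [h6] at hs
          linarith
        have habs : u - p ≤ |u - p| := le_abs_self _
        by_cases hik2 : i = k+1
        · have he : ε i = 1 := by rw [hik2]; exact hεk1
          have h6 : (i:ℝ) - ((k:ℝ)+1) = 0 := by rw [hik2]; push_cast; ring
          rw [h6, mul_zero] at hd
          rw [he]
          linarith
        · have hik3 : k + 2 ≤ i := by omega
          have hcast : (1:ℝ) ≤ (i:ℝ) - ((k:ℝ)+1) := by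
            have : (k:ℝ) + 2 ≤ (i:ℝ) := by exact_mod_cast hik3
            linarith
          have h2h : 2*h*1 ≤ 2*h*((i:ℝ) - ((k:ℝ)+1)) :=
            mul_le_mul_of_nonneg_left hcast (by linarith)
          rcases hεcases i with e | e <;> rw [e] <;> linarith
    · have hj1 : 1 ≤ j := by omega
      have hjn : j ≤ n := by omega
      rw [hgj j hj1]
      rcases lt_trichotomy j i with hlt | heq | hgt
      · -- j < i
        have habs : u - (t j - ε j * h) ≤ |u - (t j - ε j * h)| := le_abs_self _
        by_cases hji : i = j + 1
        · have hs' : 2*h ≤ t i - t j := by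
            have := htsep j hj1 (by omega)
            rw [hji]; linarith
          have he : ε i = -ε j := by rw [hji]; exact hεsucc j
          rcases hεcases j with e | e <;> rw [e] at he habs ⊢ <;> rw [he] <;> linarith
        · have hji3 : j + 2 ≤ i := by omega
          have hcast : (2:ℝ) ≤ (i:ℝ) - (j:ℝ) := by
            have : (j:ℝ) + 2 ≤ (i:ℝ) := by exact_mod_cast hji3
            linarith
          have hs := hsep j i hj1 (by omega) hin
          have h4h : 4*h ≤ t i - t j := by
            have h22 : 2*h*2 ≤ 2*h*((i:ℝ) - (j:ℝ)) :=
              mul_le_mul_of_nonneg_left hcast (by linarith)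
            linarith
          rcases hεcases i with ei | ei <;> rcases hεcases j with ej | ej <;>
            rw [ej] at habs <;> rw [ei, ej] <;> linarith
      · -- j = i
        subst heq
        rcases hεcases j with e | e <;> rw [e]
        · rw [show u - (t j - 1 * h) = u - t j + h by ring,
            abs_of_nonneg (by linarith)]
          linarith
        · rw [show u - (t j - (-1) * h) = u - t j - h by ring,
            abs_of_nonpos (by linarith)]
          linarith
      · -- i < j
        have habs : (t j - ε j * h) - u ≤ |u - (t j - ε j * h)| := by
          rw [abs_sub_comm]; exact le_abs_self _
        by_cases hji : j = i + 1
        · have hs' : 2*h ≤ t j - t i := by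
            have := htsep i hi1 (by omega)
            rw [hji]; linarith
          have he : ε j = -ε i := by rw [hji]; exact hεsucc i
          rcases hεcases i with e | e <;> rw [e] at he ⊢ <;> rw [he] at habs ⊢ <;> linarith
        · have hji3 : i + 2 ≤ j := by omega
          have hcast : (2:ℝ) ≤ (j:ℝ) - (i:ℝ) := by
            have : (i:ℝ) + 2 ≤ (j:ℝ) := by exact_mod_cast hji3
            linarith
          have hs := hsep i j hi1 (by omega) hjn
          have h4h : 4*h ≤ t j - t i := by
            have h22 : 2*h*2 ≤ 2*h*((j:ℝ) - (i:ℝ)) :=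
              mul_le_mul_of_nonneg_left hcast (by linarith)
            linarith
          rcases hεcases i with ei | ei <;> rcases hεcases j with ej | ej <;>
            rw [ej] at habs <;> rw [ei, ej] <;> linarith
  -- the value of ρ on a window
  have hwin : ∀ i, 1 ≤ i → i ≤ n → ∀ u, t i - h ≤ u → u ≤ t i + h →
      ρ u = β + ε i * (u - t i) := by
    intro i hi1 hin u hu1 hu2
    apply le_antisymm
    · have h1 : ρ u ≤ g i u := hρle u i (Finset.mem_range.2 (by omega))
      have h2 : g i u = β + ε i * (u - t i) := by
        rw [hgj i hi1]
        rcases hεcases i with e | e <;> rw [e]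
        · rw [show u - (t i - 1 * h) = u - t i + h by ring,
            abs_of_nonneg (by linarith)]
          ring
        · rw [show u - (t i - (-1) * h) = u - t i - h by ring,
            abs_of_nonpos (by linarith)]
          ring
      linarith
    · exact hρge u _ (hlow i hi1 hin u hu1 hu2)
  have hρnn : ∀ u : ℝ, 0 ≤ ρ u := by
    intro u
    exact hρge u 0 (fun j _ => hgnn j u)
  have hρp : ρ p = 0 := by
    apply le_antisymm
    · have h1 : ρ p ≤ g 0 p := hρle p 0 (Finset.mem_range.2 (by omega))
      rw [hg0] at h1
      simpa using h1
    · exact hρnn p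
  have hlip : ∀ u v : ℝ, ρ u ≤ ρ v + |u - v| := by
    intro u v
    rw [← sub_le_iff_le_add]
    apply hρge
    intro j hj
    have h1 : ρ u ≤ g j u := hρle u j hj
    have h2 := hglip j u v
    linarith
  -- the extremal function
  set M : ℝ := (1 / (2 * h)) * ∫ s in (β - h)..(β + h), ω s with hMdef
  have huIcc : uIcc (β - h) (β + h) = Icc (β - h) (β + h) := uIcc_of_le (by linarith)
  have hint : IntervalIntegrable ω volume (β - h) (β + h) := by
    apply ContinuousOn.intervalIntegrable
    apply hωc.mono
    rw [huIcc]
    intro x hx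
    exact le_trans hβ0 hx.1
  have hI0 : 0 ≤ ∫ s in (β - h)..(β + h), ω s := by
    apply intervalIntegral.integral_nonneg (by linarith)
    intro x hx
    exact hωnn x (le_trans hβ0 hx.1)
  have hM0 : 0 ≤ M := by
    rw [hMdef]
    apply mul_nonneg (by positivity) hI0
  refine ⟨fun u => M - ω (ρ u), ?_, ?_, p, ⟨hpa, hpb⟩, ?_⟩
  · -- HHolder
    intro x hx y hy
    have e1 : (M - ω (ρ y)) - (M - ω (ρ x)) = ω (ρ x) - ω (ρ y) := by ring
    rw [Real.norm_eq_abs, e1]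
    rcases le_total (ρ x) (ρ y) with hle | hle
    · rw [show ω (ρ x) - ω (ρ y) = -(ω (ρ y) - ω (ρ x)) by ring, abs_neg]
      apply hkey (ρ y) (ρ x) |y - x| (hρnn x) hle
      have := hlip y x
      linarith
    · apply hkey (ρ x) (ρ y) |y - x| (hρnn y) hle
      have := hlip x y
      rw [abs_sub_comm] at this
      linarith
  · -- zero means
    intro i hi1 hin
    have heq : EqOn (fun u => M - ω (ρ u)) (fun u => M - ω (β + ε i * (u - t i)))
        (uIcc (t i - h) (t i + h)) := by
      intro u hu
      rw [uIcc_of_le (by linarith)] at hu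
      simp only
      rw [hwin i hi1 hin u hu.1 hu.2]
    rw [intervalIntegral.integral_congr heq]
    have hfin : ∫ s in (β - h)..(β + h), (M - ω s) = 0 := by
      rw [intervalIntegral.integral_sub intervalIntegrable_const hint,
        intervalIntegral.integral_const, smul_eq_mul]
      rw [hMdef]
      field_simp
      ring
    rcases hεcases i with e | e <;> rw [e]
    · have h1 : (fun u => M - ω (β + 1 * (u - t i)))
          = fun u => (fun s => M - ω s) (u + (β - t i)) := by
        funext u
        simp only
        congr 2
        ring
      rw [h1, intervalIntegral.integral_comp_add_right (fun s => M - ω s) (β - t i),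
        show t i - h + (β - t i) = β - h by ring,
        show t i + h + (β - t i) = β + h by ring]
      exact hfin
    · have h1 : (fun u => M - ω (β + (-1) * (u - t i)))
          = fun u => (fun s => M - ω s) ((β + t i) - u) := by
        funext u
        simp only
        congr 2
        ring
      rw [h1, intervalIntegral.integral_comp_sub_left (fun s => M - ω s) (β + t i),
        show β + t i - (t i + h) = β - h by ring,
        show β + t i - (t i - h) = β + h by ring]
      exact hfin
  · -- the norm lower bound at u = p
    simp only
    rw [hρp, hω0, sub_zero, abs_of_nonneg hM0]
end
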